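/- arXiv:1704.03438 — 7 statements merged into one kernel-verified Lean document; each statement's English description precedes it below -/
import Mathlib

section
/- Let X be a compact space and let G be a uniformly bounded subset of C(X). If the closure of G in ℝ^X has countable tightness, then the closure of G in ℝ^X is contained in B₁(X). -/
open Filter Topology Set

/-- A topological space `Y` has countable tightness if for every subset `A` of `Y` and every
point `y` in the closure of `A` there is a countable subset `B` of `A` with `y ∈ closure B`. -/
def CountableTightness (Y : Type*) [TopologicalSpace Y] : Prop :=
  ∀ (A : Set Y) (y : Y), y ∈ closure A → ∃ B ⊆ A, B.Countable ∧ y ∈ closure B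

/-- `f : X → M` is of Baire class 1 if it is the pointwise limit of a sequence of
continuous functions. -/
def BaireClassOne {X M : Type*} [TopologicalSpace X] [TopologicalSpace M] (f : X → M) : Prop :=
  ∃ g : ℕ → X → M, (∀ n, Continuous (g n)) ∧ ∀ x, Tendsto (fun n => g n x) atTop (𝓝 (f x))


section BFTAux

variable {Y : Type*} [TopologicalSpace Y]

def IsFsig (s : Set Y) : Prop :=
  ∃ F : ℕ → Set Y, (∀ n, IsClosed (F n)) ∧ s = ⋃ n, F n

theorem IsClosed.isFsig {s : Set Y} (h : IsClosed s) : IsFsig s :=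
  ⟨fun _ => s, fun _ => h, (iUnion_const s).symm⟩

theorem IsFsig.iUnion {s : ℕ → Set Y} (h : ∀ n, IsFsig (s n)) : IsFsig (⋃ n, s n) := by
  choose F hFc hFu using h
  refine ⟨fun k => F k.unpair.1 k.unpair.2, fun k => hFc _ _, ?_⟩
  ext y
  simp only [mem_iUnion]
  constructor
  · rintro ⟨n, hn⟩
    rw [hFu n] at hn
    simp only [mem_iUnion] at hn
    obtain ⟨m, hm⟩ := hn
    exact ⟨Nat.pair n m, by simpa [Nat.unpair_pair] using hm⟩
  · rintro ⟨k, hk⟩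
    exact ⟨k.unpair.1, by rw [hFu]; exact mem_iUnion.2 ⟨k.unpair.2, hk⟩⟩

theorem IsFsig.union {s t : Set Y} (hs : IsFsig s) (ht : IsFsig t) : IsFsig (s ∪ t) := by
  obtain ⟨F, hFc, rfl⟩ := hs
  obtain ⟨E, hEc, rfl⟩ := ht
  refine ⟨fun k => F k ∪ E k, fun k => (hFc k).union (hEc k), ?_⟩
  ext y; simp only [mem_union, mem_iUnion, mem_union]
  constructor
  · rintro (⟨n, hn⟩ | ⟨n, hn⟩) <;> exact ⟨n, by tauto⟩
  · rintro ⟨n, hn | hn⟩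
    exacts [Or.inl ⟨n, hn⟩, Or.inr ⟨n, hn⟩]

theorem IsFsig.inter {s t : Set Y} (hs : IsFsig s) (ht : IsFsig t) : IsFsig (s ∩ t) := by
  obtain ⟨F, hFc, rfl⟩ := hs
  obtain ⟨E, hEc, rfl⟩ := ht
  refine ⟨fun k => F k.unpair.1 ∩ E k.unpair.2,
    fun k => (hFc _).inter (hEc _), ?_⟩
  ext y
  simp only [mem_inter_iff, mem_iUnion]
  constructor
  · rintro ⟨⟨n, hn⟩, ⟨m, hm⟩⟩
    exact ⟨Nat.pair n m, by simpa [Nat.unpair_pair] using ⟨hn, hm⟩⟩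
  · rintro ⟨k, h1, h2⟩
    exact ⟨⟨_, h1⟩, ⟨_, h2⟩⟩

theorem IsOpen.isFsig [TopologicalSpace.MetrizableSpace Y] {U : Set Y} (hU : IsOpen U) :
    IsFsig U := by
  letI : MetricSpace Y := TopologicalSpace.metrizableSpaceMetric Y
  rcases eq_empty_or_nonempty Uᶜ with he | hne
  · have : U = univ := by rw [← compl_compl U, he, compl_empty]
    rw [this]; exact isClosed_univ.isFsig
  refine ⟨fun n => {y | 1 / (n + 1 : ℝ) ≤ Metric.infDist y Uᶜ}, fun n => ?_, ?_⟩
  · exact isClosed_le continuous_const (Metric.continuous_infDist_pt _)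
  · ext y
    simp only [mem_iUnion, mem_setOf_eq]
    constructor
    · intro hy
      have hpos : 0 < Metric.infDist y Uᶜ := by
        rw [← hU.isClosed_compl.notMem_iff_infDist_pos hne]
        simpa using hy
      obtain ⟨n, hn⟩ := exists_nat_one_div_lt hpos
      exact ⟨n, hn.le⟩
    · rintro ⟨n, hn⟩
      by_contra hy
      have : Metric.infDist y Uᶜ = 0 := Metric.infDist_zero_of_mem (by simpa using hy)
      rw [this] at hn
      have : (0:ℝ) < 1 / (n+1:ℝ) := by positivity
      linarith

theorem Continuous.baireClassOne {f : Y → ℝ} (hf : Continuous f) : BaireClassOne f :=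
  ⟨fun _ => f, fun _ => hf, fun _ => tendsto_const_nhds⟩

theorem BaireClassOne.add {f g : Y → ℝ} (hf : BaireClassOne f) (hg : BaireClassOne g) :
    BaireClassOne (fun y => f y + g y) := by
  obtain ⟨u, hu, hul⟩ := hf; obtain ⟨v, hv, hvl⟩ := hg
  exact ⟨fun n y => u n y + v n y, fun n => (hu n).add (hv n), fun x => (hul x).add (hvl x)⟩

theorem BaireClassOne.sub {f g : Y → ℝ} (hf : BaireClassOne f) (hg : BaireClassOne g) :
    BaireClassOne (fun y => f y - g y) := by
  obtain ⟨u, hu, hul⟩ := hf; obtain ⟨v, hv, hvl⟩ := hg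
  exact ⟨fun n y => u n y - v n y, fun n => (hu n).sub (hv n), fun x => (hul x).sub (hvl x)⟩

theorem BaireClassOne.const_mul (c : ℝ) {f : Y → ℝ} (hf : BaireClassOne f) :
    BaireClassOne (fun y => c * f y) := by
  obtain ⟨u, hu, hul⟩ := hf
  exact ⟨fun n y => c * u n y, fun n => continuous_const.mul (hu n),
    fun x => (hul x).const_mul c⟩

theorem baireClassOne_sum {ι : Type*} (s : Finset ι) (F : ι → Y → ℝ)
    (h : ∀ i ∈ s, BaireClassOne (F i)) : BaireClassOne (fun y => ∑ i ∈ s, F i y) := by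
  classical
  induction s using Finset.induction_on with
  | empty => simp only [Finset.sum_empty]; exact continuous_const.baireClassOne
  | @insert a s hni ih =>
      simp only [Finset.sum_insert hni]
      exact (h a (Finset.mem_insert_self a s)).add
        (ih fun i hi => h i (Finset.mem_insert_of_mem hi))

theorem baireClassOne_indicator [NormalSpace Y] {A : Set Y}
    (h1 : IsFsig A) (h2 : IsFsig Aᶜ) :
    BaireClassOne (A.indicator fun _ => (1:ℝ)) := by
  obtain ⟨F, hFc, hFu⟩ := h1
  obtain ⟨E, hEc, hEu⟩ := h2
  set F' : ℕ → Set Y := fun n => ⋃ i ∈ Finset.range (n+1), F i with hF'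
  set E' : ℕ → Set Y := fun n => ⋃ i ∈ Finset.range (n+1), E i with hE'
  have hF'c : ∀ n, IsClosed (F' n) := fun n =>
    isClosed_biUnion_finset fun i _ => hFc i
  have hE'c : ∀ n, IsClosed (E' n) := fun n =>
    isClosed_biUnion_finset fun i _ => hEc i
  have hF'A : ∀ n, F' n ⊆ A := by
    intro n y hy
    simp only [hF', mem_iUnion] at hy
    obtain ⟨i, _, hi⟩ := hy
    rw [hFu]; exact mem_iUnion.2 ⟨i, hi⟩
  have hE'A : ∀ n, E' n ⊆ Aᶜ := by
    intro n y hy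
    simp only [hE', mem_iUnion] at hy
    obtain ⟨i, _, hi⟩ := hy
    rw [hEu]; exact mem_iUnion.2 ⟨i, hi⟩
  have hdisj : ∀ n, Disjoint (E' n) (F' n) := fun n =>
    Set.disjoint_left.2 fun y hyE hyF => (hE'A n hyE) (hF'A n hyF)
  have hury : ∀ n, ∃ g : C(Y, ℝ), EqOn g 0 (E' n) ∧ EqOn g 1 (F' n) ∧ ∀ y, g y ∈ Icc (0:ℝ) 1 :=
    fun n => exists_continuous_zero_one_of_isClosed (hE'c n) (hF'c n) (hdisj n)
  choose g hg0 hg1 _ using hury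
  refine ⟨fun n => g n, fun n => (g n).continuous, fun y => ?_⟩
  by_cases hy : y ∈ A
  · have : ∃ i, y ∈ F i := by rw [hFu] at hy; exact mem_iUnion.1 hy
    obtain ⟨i, hi⟩ := this
    have hev : ∀ n, i ≤ n → g n y = A.indicator (fun _ => (1:ℝ)) y := by
      intro n hn
      have : y ∈ F' n := by
        simp only [hF', mem_iUnion]
        exact ⟨i, Finset.mem_range.2 (Nat.lt_succ_of_le hn), hi⟩
      rw [hg1 n this, indicator_of_mem hy, Pi.one_apply]
    exact tendsto_atTop_of_eventually_const hev
  · have hy' : y ∈ Aᶜ := hy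
    have : ∃ i, y ∈ E i := by rw [hEu] at hy'; exact mem_iUnion.1 hy'
    obtain ⟨i, hi⟩ := this
    have hev : ∀ n, i ≤ n → g n y = A.indicator (fun _ => (1:ℝ)) y := by
      intro n hn
      have : y ∈ E' n := by
        simp only [hE', mem_iUnion]
        exact ⟨i, Finset.mem_range.2 (Nat.lt_succ_of_le hn), hi⟩
      rw [hg0 n this, indicator_of_notMem hy, Pi.zero_apply]
    exact tendsto_atTop_of_eventually_const hev

noncomputable def rclamp (b t : ℝ) : ℝ := max (-b) (min b t)

theorem rclamp_abs_le {b t : ℝ} (hb : 0 ≤ b) : |rclamp b t| ≤ b := by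
  rw [abs_le]
  constructor
  · exact le_max_left _ _
  · exact max_le (by linarith) (le_trans (min_le_left _ _) le_rfl)

theorem rclamp_eq {b t : ℝ} (h : |t| ≤ b) : rclamp b t = t := by
  rw [abs_le] at h
  rw [rclamp, min_eq_right h.2, max_eq_right h.1]

theorem rclamp_continuous (b : ℝ) : Continuous (rclamp b) :=
  continuous_const.max (continuous_const.min continuous_id)

theorem baireClassOne_of_approx {f : Y → ℝ}
    (h : ∀ ε : ℝ, 0 < ε → ∃ g : Y → ℝ, BaireClassOne g ∧ ∀ x, |f x - g x| ≤ ε) :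
    BaireClassOne f := by
  have h2 : ∀ j : ℕ, ∃ g : Y → ℝ, BaireClassOne g ∧ ∀ x, |f x - g x| ≤ (1/2:ℝ)^j :=
    fun j => h _ (by positivity)
  choose t ht htb using h2
  -- differences
  set d : ℕ → Y → ℝ := fun j => if j = 0 then t 0 else fun y => t j y - t (j-1) y with hd
  have hdB : ∀ j, BaireClassOne (d j) := by
    intro j
    rcases Nat.eq_zero_or_pos j with rfl | hj
    · simpa [hd] using ht 0
    · have : d j = fun y => t j y - t (j-1) y := by
        simp [hd, Nat.pos_iff_ne_zero.1 hj]
      rw [this]; exact (ht j).sub (ht (j-1))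
  have hdbd : ∀ j : ℕ, 1 ≤ j → ∀ x, |d j x| ≤ 3 * (1/2:ℝ)^j := by
    intro j hj x
    have hj' : j ≠ 0 := by omega
    have hdx : d j x = t j x - t (j-1) x := by simp [hd, hj']
    have : d j x = (t j x - f x) + (f x - t (j-1) x) := by rw [hdx]; ring
    rw [this]
    have h1 : |t j x - f x| ≤ (1/2:ℝ)^j := by rw [abs_sub_comm]; exact htb j x
    have h2 : |f x - t (j-1) x| ≤ (1/2:ℝ)^(j-1) := htb (j-1) x
    have h3 : ((1:ℝ)/2)^(j-1) = 2 * (1/2:ℝ)^j := by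
      have : j = (j-1) + 1 := by omega
      rw [this]; simp [pow_succ]; ring
    calc |(t j x - f x) + (f x - t (j-1) x)| ≤ |t j x - f x| + |f x - t (j-1) x| :=
          abs_add_le _ _
      _ ≤ (1/2:ℝ)^j + 2 * (1/2:ℝ)^j := by rw [← h3]; exact add_le_add h1 h2
      _ = 3 * (1/2:ℝ)^j := by ring
  have hsum : ∀ k x, ∑ j ∈ Finset.range (k+1), d j x = t k x := by
    intro k x
    induction k with
    | zero => simp [hd]
    | succ k ih =>
        rw [Finset.sum_range_succ, ih]
        simp [hd]
  -- approximants
  have hraw : ∀ j, ∃ c : ℕ → Y → ℝ, (∀ k, Continuous (c k)) ∧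
      (∀ x, Tendsto (fun k => c k x) atTop (𝓝 (d j x))) ∧
      (1 ≤ j → ∀ k x, |c k x| ≤ 3 * (1/2:ℝ)^j) := by
    intro j
    obtain ⟨c, hc, hcl⟩ := hdB j
    rcases Nat.eq_zero_or_pos j with rfl | hj
    · exact ⟨c, hc, hcl, by omega⟩
    · refine ⟨fun k y => rclamp (3 * (1/2:ℝ)^j) (c k y),
        fun k => (rclamp_continuous _).comp (hc k), fun x => ?_, fun _ k x => ?_⟩
      · have := ((rclamp_continuous (3 * (1/2:ℝ)^j)).tendsto (d j x)).comp (hcl x)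
        rwa [Function.comp_def, rclamp_eq (hdbd j hj x)] at this
      · exact rclamp_abs_le (by positivity)
  choose c hcc hcl hcb using hraw
  refine ⟨fun k y => ∑ j ∈ Finset.range (k+1), c j k y,
    fun k => continuous_finset_sum _ fun j _ => hcc j k, fun x => ?_⟩
  rw [Metric.tendsto_atTop]
  intro ε hε
  -- choose J
  obtain ⟨J0, hJ0⟩ := exists_pow_lt_of_lt_one (show (0:ℝ) < ε/26 by linarith)
    (show (1/2:ℝ) < 1 by norm_num)
  set J := J0 + 1 with hJdef
  have hJ : (1/2:ℝ)^J < ε/26 :=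
    lt_of_le_of_lt (pow_le_pow_of_le_one (by norm_num) (by norm_num) (by omega)) hJ0
  -- head tendsto
  have hhead : Tendsto (fun k => ∑ j ∈ Finset.range J, |c j k x - d j x|) atTop (𝓝 0) := by
    have : ∀ j ∈ Finset.range J, Tendsto (fun k => |c j k x - d j x|) atTop (𝓝 0) := by
      intro j _
      have h1 : Tendsto (fun k => c j k x - d j x) atTop (𝓝 (d j x - d j x)) :=
        (hcl j x).sub tendsto_const_nhds
      rw [sub_self] at h1
      simpa using h1.abs
    have := tendsto_finset_sum (Finset.range J) this
    simpa using this
  have hhead' : ∀ᶠ k in atTop, ∑ j ∈ Finset.range J, |c j k x - d j x| < ε/4 :=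
    hhead.eventually (gt_mem_nhds (by linarith))
  obtain ⟨K0, hK0⟩ := eventually_atTop.1 hhead'
  refine ⟨max K0 J, fun k hk => ?_⟩
  have hkK : K0 ≤ k := le_trans (le_max_left _ _) hk
  have hkJ : J ≤ k := le_trans (le_max_right _ _) hk
  rw [Real.dist_eq]
  have key : |(∑ j ∈ Finset.range (k+1), c j k x) - f x| ≤
      (∑ j ∈ Finset.range J, |c j k x - d j x|) + 6 * 2 * (1/2:ℝ)^J + (1/2:ℝ)^k := by
    have e1 : |(∑ j ∈ Finset.range (k+1), c j k x) - f x| ≤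
        (∑ j ∈ Finset.range (k+1), |c j k x - d j x|) + |t k x - f x| := by
      have : (∑ j ∈ Finset.range (k+1), c j k x) - f x =
          (∑ j ∈ Finset.range (k+1), (c j k x - d j x)) + (t k x - f x) := by
        rw [Finset.sum_sub_distrib, hsum]; ring
      rw [this]
      exact le_trans (abs_add_le _ _)
        (add_le_add (Finset.abs_sum_le_sum_abs _ _) le_rfl)
    have e2 : |t k x - f x| ≤ (1/2:ℝ)^k := by rw [abs_sub_comm]; exact htb k x
    have e3 : ∑ j ∈ Finset.range (k+1), |c j k x - d j x| =
        (∑ j ∈ Finset.range J, |c j k x - d j x|) +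
          ∑ j ∈ Finset.Ico J (k+1), |c j k x - d j x| := by
      rw [Finset.range_eq_Ico, ← Finset.sum_Ico_consecutive _ (Nat.zero_le J) (by omega),
        ← Finset.range_eq_Ico]
    have e4 : ∑ j ∈ Finset.Ico J (k+1), |c j k x - d j x| ≤ 6 * 2 * (1/2:ℝ)^J := by
      have hb : ∀ j ∈ Finset.Ico J (k+1), |c j k x - d j x| ≤ 6 * (1/2:ℝ)^j := by
        intro j hj
        have hj1 : 1 ≤ j := le_trans (by omega) (Finset.mem_Ico.1 hj).1
        calc |c j k x - d j x| ≤ |c j k x| + |d j x| := abs_sub _ _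
          _ ≤ 3 * (1/2:ℝ)^j + 3 * (1/2:ℝ)^j := add_le_add (hcb j hj1 k x) (hdbd j hj1 x)
          _ = 6 * (1/2:ℝ)^j := by ring
      calc ∑ j ∈ Finset.Ico J (k+1), |c j k x - d j x|
          ≤ ∑ j ∈ Finset.Ico J (k+1), 6 * (1/2:ℝ)^j := Finset.sum_le_sum hb
        _ = 6 * ∑ j ∈ Finset.Ico J (k+1), (1/2:ℝ)^j := by rw [Finset.mul_sum]
        _ ≤ 6 * (2 * (1/2:ℝ)^J) := by
            have : ∑ j ∈ Finset.Ico J (k+1), (1/2:ℝ)^j =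
                (1/2:ℝ)^J * ∑ i ∈ Finset.range (k+1-J), (1/2:ℝ)^i := by
              rw [Finset.sum_Ico_eq_sum_range]
              rw [Finset.mul_sum]
              exact Finset.sum_congr rfl fun i _ => by rw [pow_add]
            rw [this]
            have := sum_geometric_two_le (k+1-J)
            have hp : (0:ℝ) ≤ (1/2:ℝ)^J := by positivity
            nlinarith
        _ = 6 * 2 * (1/2:ℝ)^J := by ring
    calc |(∑ j ∈ Finset.range (k+1), c j k x) - f x|
        ≤ (∑ j ∈ Finset.range (k+1), |c j k x - d j x|) + |t k x - f x| := e1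
      _ = (∑ j ∈ Finset.range J, |c j k x - d j x|) +
          (∑ j ∈ Finset.Ico J (k+1), |c j k x - d j x|) + |t k x - f x| := by rw [e3]
      _ ≤ (∑ j ∈ Finset.range J, |c j k x - d j x|) + 6 * 2 * (1/2:ℝ)^J + (1/2:ℝ)^k := by
          exact add_le_add (add_le_add le_rfl e4) e2
  have hk2 : (1/2:ℝ)^k ≤ (1/2:ℝ)^J :=
    pow_le_pow_of_le_one (by norm_num) (by norm_num) hkJ
  have := hK0 k hkK
  calc |(∑ j ∈ Finset.range (k+1), c j k x) - f x| ≤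
      (∑ j ∈ Finset.range J, |c j k x - d j x|) + 6 * 2 * (1/2:ℝ)^J + (1/2:ℝ)^k := key
    _ < ε/4 + 12 * (ε/26) + ε/26 := by
        have h12 : 6 * 2 * (1/2:ℝ)^J < 12 * (ε/26) := by nlinarith
        have hklt : (1/2:ℝ)^k < ε / 26 := lt_of_le_of_lt hk2 hJ
        linarith
    _ < ε := by linarith

theorem exists_b1_approx [NormalSpace Y] [TopologicalSpace.MetrizableSpace Y]
    (f : Y → ℝ) (C : ℝ) (hC : ∀ y, |f y| ≤ C)
    (hlt : ∀ a : ℝ, IsFsig {y | f y < a}) (hgt : ∀ a : ℝ, IsFsig {y | a < f y})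
    (ε : ℝ) (hε : 0 < ε) :
    ∃ g : Y → ℝ, BaireClassOne g ∧ ∀ x, |f x - g x| ≤ ε := by
  classical
  set m : ℕ := ⌈2*C/ε⌉₊ with hm
  set a : ℕ → ℝ := fun i => -C + i*ε with ha
  set W : ℕ → Set Y := fun i => {y | a i - ε < f y} ∩ {y | f y < a i + ε} with hW
  have hWf : ∀ i, IsFsig (W i) := fun i => (hgt _).inter (hlt _)
  have hcover : ∀ y, ∃ i ≤ m, y ∈ W i := by
    intro y
    have hy1 : -C ≤ f y := neg_le_of_abs_le (hC y)
    have hy2 : f y ≤ C := le_of_abs_le (hC y)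
    have hnn : (0:ℝ) ≤ (f y + C)/ε := div_nonneg (by linarith) hε.le
    set u : ℝ := (f y + C)/ε with hu
    refine ⟨⌊u⌋₊, ?_, ?_, ?_⟩
    · have h1 : u ≤ 2*C/ε := by
        rw [hu]
        exact (div_le_div_iff_of_pos_right hε).mpr (by linarith)
      exact le_trans (Nat.floor_mono h1) (Nat.floor_le_ceil _)
    · show a ⌊u⌋₊ - ε < f y
      have h2 : (⌊u⌋₊ : ℝ) ≤ u := Nat.floor_le hnn
      have h3 : (⌊u⌋₊ : ℝ) * ε ≤ u * ε := mul_le_mul_of_nonneg_right h2 hε.le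
      have h4 : u * ε = f y + C := div_mul_cancel₀ _ hε.ne'
      simp only [ha]
      nlinarith
    · show f y < a ⌊u⌋₊ + ε
      have h2 : u < ⌊u⌋₊ + 1 := Nat.lt_floor_add_one u
      have h3 : u * ε < ((⌊u⌋₊ : ℝ) + 1) * ε := mul_lt_mul_of_pos_right h2 hε
      have h4 : u * ε = f y + C := div_mul_cancel₀ _ hε.ne'
      simp only [ha]
      nlinarith
  choose Q hQc hQu using fun i => hWf i
  set T : ℕ → Set Y := fun k => Q (k % (m+1)) (k / (m+1)) with hT
  have hTcl : ∀ k, IsClosed (T k) := fun k => hQc _ _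
  have hTW : ∀ k, T k ⊆ W (k % (m+1)) := by
    intro k y hy
    rw [hQu (k % (m+1))]
    exact mem_iUnion.2 ⟨k / (m+1), hy⟩
  have hTcover : ∀ y, ∃ k, y ∈ T k := by
    intro y
    obtain ⟨i, him, hyi⟩ := hcover y
    have : y ∈ ⋃ n, Q i n := by rw [← hQu i]; exact hyi
    obtain ⟨n, hn⟩ := mem_iUnion.1 this
    refine ⟨i + n * (m+1), ?_⟩
    have hmod : (i + n * (m+1)) % (m+1) = i := by
      rw [Nat.add_mul_mod_self_right]
      exact Nat.mod_eq_of_lt (by omega)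
    have hdiv : (i + n * (m+1)) / (m+1) = n := by
      rw [Nat.add_mul_div_right _ _ (Nat.succ_pos m), Nat.div_eq_of_lt (by omega)]
      omega
    rw [hT]
    simp only [hmod, hdiv]
    exact hn
  set A' : ℕ → Set Y := fun k => T k \ ⋃ (l : ℕ), ⋃ (_ : l < k), T l with hA'
  have hA'sub : ∀ k, A' k ⊆ T k := fun k => diff_subset
  have hA'fsig : ∀ k, IsFsig (A' k) := by
    intro k
    have : A' k = T k ∩ (⋃ (l : ℕ), ⋃ (_ : l < k), T l)ᶜ := rfl
    rw [this]
    refine ((hTcl k).isFsig).inter (IsOpen.isFsig ?_)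
    apply isOpen_compl_iff.2
    have : (⋃ (l : ℕ), ⋃ (_ : l < k), T l) = ⋃ l ∈ Finset.range k, T l := by
      ext y; simp [Finset.mem_range]
    rw [this]
    exact isClosed_biUnion_finset fun l _ => hTcl l
  have hA'cover : ∀ y, ∃ k, y ∈ A' k := by
    intro y
    obtain ⟨k, hk⟩ := hTcover y
    have hex : ∃ k, y ∈ T k := ⟨k, hk⟩
    refine ⟨Nat.find hex, Nat.find_spec hex, ?_⟩
    simp only [mem_iUnion, not_exists]
    intro l hl
    exact Nat.find_min hex hl
  have hA'disj : ∀ k l, k < l → Disjoint (A' k) (A' l) := by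
    intro k l hkl
    rw [Set.disjoint_left]
    intro y hyk hyl
    exact hyl.2 (mem_iUnion.2 ⟨k, mem_iUnion.2 ⟨hkl, hA'sub k hyk⟩⟩)
  set A : ℕ → Set Y := fun i => ⋃ (k : ℕ), ⋃ (_ : k % (m+1) = i), A' k with hA
  have hAfsig : ∀ i, IsFsig (A i) := by
    intro i
    have : A i = ⋃ (k : ℕ), (if k % (m+1) = i then A' k else ∅) := by
      ext y
      simp only [hA, mem_iUnion]
      constructor
      · rintro ⟨k, hk, hy⟩; exact ⟨k, by rw [if_pos hk]; exact hy⟩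
      · rintro ⟨k, hy⟩
        by_cases hk : k % (m+1) = i
        · rw [if_pos hk] at hy; exact ⟨k, hk, hy⟩
        · rw [if_neg hk] at hy; exact absurd hy (notMem_empty y)
    rw [this]
    refine IsFsig.iUnion fun k => ?_
    by_cases hk : k % (m+1) = i
    · rw [if_pos hk]; exact hA'fsig k
    · rw [if_neg hk]; exact isClosed_empty.isFsig
  have hAdisj : ∀ i j, i ≠ j → Disjoint (A i) (A j) := by
    intro i j hij
    rw [Set.disjoint_left]
    intro y hyi hyj
    simp only [hA, mem_iUnion] at hyi hyj
    obtain ⟨k, hki, hyk⟩ := hyi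
    obtain ⟨l, hlj, hyl⟩ := hyj
    have hkl : k ≠ l := by rintro rfl; exact hij (hki ▸ hlj ▸ rfl)
    rcases Nat.lt_or_ge k l with h | h
    · exact (hA'disj k l h).le_bot ⟨hyk, hyl⟩ |>.elim
    · have : l < k := by omega
      exact (hA'disj l k this).le_bot ⟨hyl, hyk⟩ |>.elim
  have hAcover : ∀ y, ∃ i ≤ m, y ∈ A i := by
    intro y
    obtain ⟨k, hk⟩ := hA'cover y
    refine ⟨k % (m+1), Nat.lt_succ_iff.mp (Nat.mod_lt _ (Nat.succ_pos m)), ?_⟩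
    simp only [hA, mem_iUnion]
    exact ⟨k, rfl, hk⟩
  have hAW : ∀ i, A i ⊆ W i := by
    intro i y hy
    simp only [hA, mem_iUnion] at hy
    obtain ⟨k, hki, hyk⟩ := hy
    have := hTW k (hA'sub k hyk)
    rwa [hki] at this
  have hAcompl : ∀ i, IsFsig (A i)ᶜ := by
    intro i
    have : (A i)ᶜ = ⋃ (j : ℕ), (if j ≤ m ∧ j ≠ i then A j else ∅) := by
      ext y
      simp only [mem_compl_iff, mem_iUnion]
      constructor
      · intro hy
        obtain ⟨j, hjm, hyj⟩ := hAcover y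
        have hji : j ≠ i := by rintro rfl; exact hy hyj
        exact ⟨j, by rw [if_pos ⟨hjm, hji⟩]; exact hyj⟩
      · rintro ⟨j, hy⟩ hyi
        by_cases hj : j ≤ m ∧ j ≠ i
        · rw [if_pos hj] at hy
          exact (hAdisj j i hj.2).le_bot ⟨hy, hyi⟩
        · rw [if_neg hj] at hy; exact notMem_empty y hy
    rw [this]
    refine IsFsig.iUnion fun j => ?_
    by_cases hj : j ≤ m ∧ j ≠ i
    · rw [if_pos hj]; exact hAfsig j
    · rw [if_neg hj]; exact isClosed_empty.isFsig
  refine ⟨fun y => ∑ i ∈ Finset.range (m+1), a i * (A i).indicator (fun _ => (1:ℝ)) y,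
    ?_, ?_⟩
  · exact baireClassOne_sum _ _ fun i _ =>
      (baireClassOne_indicator (hAfsig i) (hAcompl i)).const_mul (a i)
  · intro y
    obtain ⟨i0, hi0m, hyi0⟩ := hAcover y
    have hgy : ∑ i ∈ Finset.range (m+1), a i * (A i).indicator (fun _ => (1:ℝ)) y = a i0 := by
      rw [Finset.sum_eq_single i0]
      · rw [indicator_of_mem hyi0, mul_one]
      · intro j _ hji
        rw [indicator_of_notMem, mul_zero]
        intro hyj
        exact (hAdisj j i0 hji).le_bot ⟨hyj, hyi0⟩
      · intro h
        exact absurd (Finset.mem_range.2 (by omega)) h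
    show |f y - ∑ i ∈ Finset.range (m+1), a i * (A i).indicator (fun _ => (1:ℝ)) y| ≤ ε
    rw [hgy]
    have := hAW i0 hyi0
    obtain ⟨h1, h2⟩ := this
    simp only [mem_setOf_eq] at h1 h2
    rw [abs_le]
    constructor <;> linarith

theorem exists_fsig_separation [SecondCountableTopology Y]
    [TopologicalSpace.MetrizableSpace Y] (f : Y → ℝ) (p q : ℝ)
    (H : ∀ L : Set Y, IsClosed L → L.Nonempty → ∃ V, IsOpen V ∧ (V ∩ L).Nonempty ∧
      (V ∩ L ∩ {y | f y ≤ p} = ∅ ∨ V ∩ L ∩ {y | q ≤ f y} = ∅)) :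
    ∃ A : Set Y, IsFsig A ∧ {y | q ≤ f y} ⊆ A ∧ A ⊆ {y | p < f y} := by
  classical
  set P : Set (Set Y) :=
    {O | IsOpen O ∧ ∃ A, IsFsig A ∧ A ⊆ O ∩ {y | p < f y} ∧ O ∩ {y | q ≤ f y} ⊆ A} with hP
  have hPempty : (∅ : Set Y) ∈ P :=
    ⟨isOpen_empty, ∅, isClosed_empty.isFsig, empty_subset _, by simp⟩
  have hchain : ∀ c ⊆ P, IsChain (· ⊆ ·) c → c.Nonempty → ∃ ub ∈ P, ∀ s ∈ c, s ⊆ ub := by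
    intro c hcP _ _
    obtain ⟨T, hTc, hTsub, hTU⟩ := TopologicalSpace.isOpen_sUnion_countable c (fun s hs => (hcP hs).1)
    refine ⟨⋃₀ c, ⟨isOpen_sUnion fun s hs => (hcP hs).1, ?_⟩, fun s hs => subset_sUnion_of_mem hs⟩
    rcases eq_empty_or_nonempty T with rfl | hTne
    · refine ⟨∅, isClosed_empty.isFsig, empty_subset _, ?_⟩
      rw [← hTU]
      simp
    obtain ⟨e, he⟩ := hTc.exists_eq_range hTne
    set w : Set Y → Set Y := fun O => if h : O ∈ P then h.2.choose else ∅ with hw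
    have hwspec : ∀ O ∈ P, IsFsig (w O) ∧ w O ⊆ O ∩ {y | p < f y} ∧ O ∩ {y | q ≤ f y} ⊆ w O := by
      intro O hO
      rw [hw]
      simp only [dif_pos hO]
      exact hO.2.choose_spec
    refine ⟨⋃ n, w (e n), IsFsig.iUnion fun n => ?_, ?_, ?_⟩
    · have : e n ∈ T := by rw [he]; exact mem_range_self n
      exact (hwspec _ (hcP (hTsub this))).1
    · rintro y hy
      obtain ⟨n, hn⟩ := mem_iUnion.1 hy
      have heT : e n ∈ T := by rw [he]; exact mem_range_self n
      have := (hwspec _ (hcP (hTsub heT))).2.1 hn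
      exact ⟨subset_sUnion_of_mem (hTsub heT) this.1, this.2⟩
    · rintro y ⟨hy1, hy2⟩
      rw [← hTU] at hy1
      obtain ⟨t, htT, hyt⟩ := hy1
      have := (hwspec _ (hcP (hTsub htT))).2.2 ⟨hyt, hy2⟩
      have heq : ∃ n, e n = t := by
        have : t ∈ range e := by rw [← he]; exact htT
        exact this
      obtain ⟨n, rfl⟩ := heq
      exact mem_iUnion.2 ⟨n, this⟩
  obtain ⟨M, -, hMmax⟩ := zorn_subset_nonempty P hchain ∅ hPempty
  have hMP : M ∈ P := hMmax.1
  obtain ⟨hMopen, A, hAf, hA1, hA2⟩ := hMP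
  have hMuniv : M = univ := by
    by_contra hne
    have hLne : Mᶜ.Nonempty := nonempty_compl.2 hne
    have hLcl : IsClosed Mᶜ := hMopen.isClosed_compl
    obtain ⟨V, hVopen, hVL, hVor⟩ := H Mᶜ hLcl hLne
    have hMV : M ∪ V ∈ P := by
      refine ⟨hMopen.union hVopen, ?_⟩
      rcases hVor with hcase | hcase
      · refine ⟨A ∪ (V ∩ Mᶜ), hAf.union ((hVopen.isFsig).inter hLcl.isFsig), ?_, ?_⟩
        · rintro y (hy | hy)
          · exact ⟨Or.inl (hA1 hy).1, (hA1 hy).2⟩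
          · refine ⟨Or.inr hy.1, ?_⟩
            by_contra hple
            have : y ∈ V ∩ Mᶜ ∩ {y | f y ≤ p} := ⟨hy, by simpa using not_lt.1 hple⟩
            rw [hcase] at this
            exact this
        · rintro y ⟨hy1 | hy1, hy2⟩
          · exact Or.inl (hA2 ⟨hy1, hy2⟩)
          · by_cases hyM : y ∈ M
            · exact Or.inl (hA2 ⟨hyM, hy2⟩)
            · exact Or.inr ⟨hy1, hyM⟩
      · refine ⟨A, hAf, fun y hy => ⟨Or.inl (hA1 hy).1, (hA1 hy).2⟩, ?_⟩
        rintro y ⟨hy1 | hy1, hy2⟩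
        · exact hA2 ⟨hy1, hy2⟩
        · by_cases hyM : y ∈ M
          · exact hA2 ⟨hyM, hy2⟩
          · exfalso
            have : y ∈ V ∩ Mᶜ ∩ {y | q ≤ f y} := ⟨⟨hy1, hyM⟩, hy2⟩
            rw [hcase] at this
            exact this
    have hsub : M ⊆ M ∪ V := subset_union_left
    have : M ∪ V ⊆ M := hMmax.2 hMV hsub
    obtain ⟨y, hyV, hyL⟩ := hVL
    exact hyL (this (Or.inr hyV))
  refine ⟨A, hAf, ?_, fun y hy => (hA1 hy).2⟩
  intro y hy
  exact hA2 ⟨by rw [hMuniv]; trivial, hy⟩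

theorem tree_construction [CompactSpace Y] (fn : ℕ → Y → ℝ) (hfn : ∀ n, Continuous (fn n))
    (f : Y → ℝ)
    (happ : ∀ (t : ℕ) (S : Finset Y) (δ : ℝ), 0 < δ → ∃ m, t ≤ m ∧ ∀ y ∈ S, |fn m y - f y| < δ)
    (p p' q' q : ℝ) (hpp' : p < p') (hq'q : q' < q)
    (L : Set Y) (hLc : IsClosed L) (hLne : L.Nonempty)
    (hdense : ∀ V : Set Y, IsOpen V → (V ∩ L).Nonempty →
      (V ∩ L ∩ {y | f y ≤ p}).Nonempty ∧ (V ∩ L ∩ {y | q ≤ f y}).Nonempty) :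
    ∃ N : ℕ → ℕ, StrictMono N ∧ ∀ M : Set ℕ, ∃ z : Y,
      (∀ i ∈ M, fn (N i) z ≤ p') ∧ (∀ i ∉ M, q' ≤ fn (N i) z) := by
  classical
  set Inv : ℕ → ((ℕ → ℕ) × ((ℕ → Bool) → Set Y)) → Prop := fun k st =>
    (∀ i j, i < j → j < k → st.1 i < st.1 j) ∧
    (∀ σ, (st.2 σ).Nonempty) ∧
    (∀ σ, ∃ O, IsOpen O ∧ st.2 σ = O ∩ L) ∧
    (∀ σ σ', (∀ i, i < k → σ i = σ' i) → st.2 σ = st.2 σ') ∧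
    (∀ σ z, z ∈ st.2 σ → ∀ i, i < k →
      (σ i = true → fn (st.1 i) z < p') ∧ (σ i = false → q' < fn (st.1 i) z)) with hInv
  have hstep : ∀ k st, Inv k st → ∃ st', Inv (k+1) st' ∧ (∀ i, i < k → st'.1 i = st.1 i) ∧
      (∀ σ, st'.2 σ ⊆ st.2 σ) := by
    intro k st h
    obtain ⟨h1, h2, h3, h4, h5⟩ := h
    have hpt : ∀ σ : ℕ → Bool, ∃ y0 y1 : Y,
        y0 ∈ st.2 σ ∧ f y0 ≤ p ∧ y1 ∈ st.2 σ ∧ q ≤ f y1 := by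
      intro σ
      obtain ⟨O, hO, hOL⟩ := h3 σ
      have hne : (O ∩ L).Nonempty := by rw [← hOL]; exact h2 σ
      obtain ⟨⟨y0, hy0⟩, ⟨y1, hy1⟩⟩ := hdense O hO hne
      exact ⟨y0, y1, by rw [hOL]; exact hy0.1, hy0.2, by rw [hOL]; exact hy1.1, hy1.2⟩
    choose y0 y1 hy0m hy0p hy1m hy1q using hpt
    set ext : (Fin k → Bool) → (ℕ → Bool) := fun c i => if h : i < k then c ⟨i, h⟩ else false
      with hext
    set S : Finset Y := Finset.image (fun c : Fin k → Bool => y0 (ext c)) Finset.univ ∪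
      Finset.image (fun c : Fin k → Bool => y1 (ext c)) Finset.univ with hS
    set δ : ℝ := min (p' - p) (q - q') with hδ
    have hδpos : 0 < δ := lt_min (by linarith) (by linarith)
    set t0 : ℕ := (Finset.range k).sup st.1 + 1 with ht0
    obtain ⟨m, hmt, hmapp⟩ := happ t0 S δ hδpos
    have hmgt : ∀ i, i < k → st.1 i < m := by
      intro i hi
      have : st.1 i ≤ (Finset.range k).sup st.1 := Finset.le_sup (Finset.mem_range.2 hi)
      omega
    set news : (ℕ → Bool) → Set Y := fun σ =>
      {z | (σ k = true → fn m z < p') ∧ (σ k = false → q' < fn m z)} with hnews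
    refine ⟨(fun i => if i = k then m else st.1 i, fun σ => st.2 σ ∩ news σ),
      ⟨?_, ?_, ?_, ?_, ?_⟩, ?_, ?_⟩
    · -- monotone
      intro i j hij hjk
      simp only
      rcases Nat.lt_or_ge j k with hj | hj
      · rw [if_neg (by omega), if_neg (by omega)]
        exact h1 i j hij hj
      · have hjeq : j = k := by omega
        rw [if_neg (by omega), if_pos hjeq]
        exact hmgt i (by omega)
    · -- nonempty
      intro σ
      set c : Fin k → Bool := fun i => σ i.val with hc
      have hagree : st.2 (ext c) = st.2 σ := h4 _ _ (fun i hi => by simp [hext, hi, hc])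
      cases hσk : σ k with
      | true =>
          refine ⟨y0 (ext c), by rw [← hagree]; exact hy0m (ext c), ?_, ?_⟩
          · intro _
            have hyS : y0 (ext c) ∈ S := by
              rw [hS]
              exact Finset.mem_union_left _ (Finset.mem_image_of_mem _ (Finset.mem_univ c))
            have := hmapp _ hyS
            have h1' : fn m (y0 (ext c)) - f (y0 (ext c)) < δ := lt_of_abs_lt this
            have h2' : f (y0 (ext c)) ≤ p := hy0p (ext c)
            have : δ ≤ p' - p := min_le_left _ _
            linarith
          · intro hfalse; rw [hσk] at hfalse; exact absurd hfalse (by simp)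
      | false =>
          refine ⟨y1 (ext c), by rw [← hagree]; exact hy1m (ext c), ?_, ?_⟩
          · intro htrue; rw [hσk] at htrue; exact absurd htrue (by simp)
          · intro _
            have hyS : y1 (ext c) ∈ S := by
              rw [hS]
              exact Finset.mem_union_right _ (Finset.mem_image_of_mem _ (Finset.mem_univ c))
            have := hmapp _ hyS
            have h1' : -(δ) < fn m (y1 (ext c)) - f (y1 (ext c)) := neg_lt_of_abs_lt this
            have h2' : q ≤ f (y1 (ext c)) := hy1q (ext c)
            have : δ ≤ q - q' := min_le_right _ _
            linarith
    · -- open trace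
      intro σ
      obtain ⟨O, hO, hOL⟩ := h3 σ
      have hnewsopen : IsOpen (news σ) := by
        cases hσk : σ k with
        | true =>
            have : news σ = {z | fn m z < p'} := by
              ext z; simp [hnews, hσk]
            rw [this]
            exact isOpen_lt (hfn m) continuous_const
        | false =>
            have : news σ = {z | q' < fn m z} := by
              ext z; simp [hnews, hσk]
            rw [this]
            exact isOpen_lt continuous_const (hfn m)
      refine ⟨O ∩ news σ, hO.inter hnewsopen, ?_⟩
      show st.2 σ ∩ news σ = O ∩ news σ ∩ L
      rw [hOL]
      ext z
      simp only [mem_inter_iff]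
      tauto
    · -- coherence
      intro σ σ' hag
      show st.2 σ ∩ news σ = st.2 σ' ∩ news σ'
      have e1 : st.2 σ = st.2 σ' := h4 σ σ' (fun i hi => hag i (by omega))
      have e2 : news σ = news σ' := by
        have hk : σ k = σ' k := hag k (by omega)
        simp only [hnews, hk]
      rw [e1, e2]
    · -- values
      intro σ z hz i hik
      simp only
      rcases Nat.lt_or_ge i k with hi | hi
      · rw [if_neg (by omega)]
        exact h5 σ z hz.1 i hi
      · have hieq : i = k := by omega
        subst hieq
        rw [if_pos rfl]
        exact hz.2
    · intro i hi
      simp only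
      rw [if_neg (by omega)]
    · intro σ
      exact inter_subset_left
  -- iterate
  set step : ℕ → ((ℕ → ℕ) × ((ℕ → Bool) → Set Y)) → ((ℕ → ℕ) × ((ℕ → Bool) → Set Y)) :=
    fun k st => if h : Inv k st then (hstep k st h).choose else st with hstepdef
  set st0 : (ℕ → ℕ) × ((ℕ → Bool) → Set Y) := (fun _ => 0, fun _ => L) with hst0
  set seq : ℕ → ((ℕ → ℕ) × ((ℕ → Bool) → Set Y)) :=
    fun k => Nat.rec st0 (fun k ih => step k ih) k with hseq
  have hseq0 : seq 0 = st0 := rfl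
  have hseqS : ∀ k, seq (k+1) = step k (seq k) := fun k => rfl
  have hInv0 : Inv 0 st0 := by
    refine ⟨fun i j _ hj => absurd hj (by omega), fun σ => hLne, fun σ => ⟨univ, isOpen_univ,
      (univ_inter L).symm⟩, fun σ σ' _ => rfl, fun σ z _ i hi => absurd hi (by omega)⟩
  have hInvAll : ∀ k, Inv k (seq k) := by
    intro k
    induction k with
    | zero => exact hInv0
    | succ k ih =>
        rw [hseqS, hstepdef]
        simp only [dif_pos ih]
        exact (hstep k (seq k) ih).choose_spec.1
  have hExt : ∀ k i, i < k → (seq (k+1)).1 i = (seq k).1 i := by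
    intro k i hi
    rw [hseqS, hstepdef]
    simp only [dif_pos (hInvAll k)]
    exact (hstep k (seq k) (hInvAll k)).choose_spec.2.1 i hi
  have hSub : ∀ k σ, (seq (k+1)).2 σ ⊆ (seq k).2 σ := by
    intro k σ
    rw [hseqS, hstepdef]
    simp only [dif_pos (hInvAll k)]
    exact (hstep k (seq k) (hInvAll k)).choose_spec.2.2 σ
  set N : ℕ → ℕ := fun i => (seq (i+1)).1 i with hN
  have hNeval : ∀ k i, i < k → (seq k).1 i = N i := by
    intro k
    induction k with
    | zero => intro i hi; omega
    | succ k ih =>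
        intro i hi
        rcases Nat.lt_or_ge i k with h | h
        · rw [hExt k i h]; exact ih i h
        · have : i = k := by omega
          subst this
          rfl
  have hNmono : StrictMono N := by
    apply strictMono_nat_of_lt_succ
    intro i
    have := (hInvAll (i+2)).1 i (i+1) (by omega) (by omega)
    rwa [hNeval (i+2) i (by omega), hNeval (i+2) (i+1) (by omega)] at this
  refine ⟨N, hNmono, ?_⟩
  intro M
  set σ : ℕ → Bool := fun i => decide (i ∈ M) with hσ
  set V : ℕ → Set Y := fun k => closure ((seq k).2 σ) with hV
  have hVne : ∀ k, (V k).Nonempty := fun k => ((hInvAll k).2.1 σ).closure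
  have hVdec : ∀ k, V (k+1) ⊆ V k := fun k => closure_mono (hSub k σ)
  have hVcl : ∀ k, IsClosed (V k) := fun k => isClosed_closure
  have hVcomp : IsCompact (V 0) := (hVcl 0).isCompact
  obtain ⟨z, hz⟩ := IsCompact.nonempty_iInter_of_sequence_nonempty_isCompact_isClosed
    V hVdec hVne hVcomp hVcl
  refine ⟨z, ?_, ?_⟩
  · intro i hiM
    have hσi : σ i = true := by simp [hσ, hiM]
    have hsubcl : (seq (i+1)).2 σ ⊆ {y | fn (N i) y ≤ p'} := by
      intro w hw
      have := ((hInvAll (i+1)).2.2.2.2 σ w hw i (by omega)).1 hσi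
      rw [hNeval (i+1) i (by omega)] at this
      exact le_of_lt this
    have hzV : z ∈ V (i+1) := mem_iInter.1 hz (i+1)
    have : V (i+1) ⊆ {y | fn (N i) y ≤ p'} :=
      closure_minimal hsubcl (isClosed_le (hfn (N i)) continuous_const)
    exact this hzV
  · intro i hiM
    have hσi : σ i = false := by simp [hσ, hiM]
    have hsubcl : (seq (i+1)).2 σ ⊆ {y | q' ≤ fn (N i) y} := by
      intro w hw
      have := ((hInvAll (i+1)).2.2.2.2 σ w hw i (by omega)).2 hσi
      rw [hNeval (i+1) i (by omega)] at this
      exact le_of_lt this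
    have hzV : z ∈ V (i+1) := mem_iInter.1 hz (i+1)
    have : V (i+1) ⊆ {y | q' ≤ fn (N i) y} :=
      closure_minimal hsubcl (isClosed_le continuous_const (hfn (N i)))
    exact this hzV


end BFTAux

theorem exists_independent_family :
    ∃ E : ℝ → Set ℕ, ∀ F₁ F₂ : Finset ℝ, Disjoint F₁ F₂ →
      ((⋂ r ∈ F₁, E r) ∩ ⋂ s ∈ F₂, (E s)ᶜ).Nonempty := by
  classical
  haveI : Denumerable (Finset (ℚ × ℚ)) := Denumerable.ofEncodableOfInfinite _
  set e : Finset (ℚ × ℚ) ≃ ℕ := Denumerable.eqv (Finset (ℚ × ℚ)) with he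
  refine ⟨fun r => {n | ∃ uv ∈ e.symm n, ((uv.1 : ℝ) < r ∧ r < (uv.2 : ℝ))}, ?_⟩
  intro F₁ F₂ hdisj
  have hch : ∀ r ∈ F₁, ∃ u v : ℚ, (u:ℝ) < r ∧ r < (v:ℝ) ∧
      ∀ s ∈ F₂, ¬((u:ℝ) < s ∧ s < (v:ℝ)) := by
    intro r hr
    set δ : ℝ := if h : F₂.Nonempty then (F₂.image fun s => |s - r|).min'
      (Finset.Nonempty.image h _) else 1 with hδ
    have hδle : ∀ s ∈ F₂, δ ≤ |s - r| := by
      intro s hs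
      rw [hδ, dif_pos ⟨s, hs⟩]
      exact Finset.min'_le _ _ (Finset.mem_image_of_mem _ hs)
    have hδpos : 0 < δ := by
      rw [hδ]
      split_ifs with h
      · obtain ⟨s, hs, hsv⟩ := Finset.mem_image.1
          ((F₂.image fun s => |s - r|).min'_mem (Finset.Nonempty.image h _))
        rw [← hsv]
        have : s ≠ r := fun hsr => (Finset.disjoint_right.1 hdisj hs) (hsr ▸ hr)
        have : s - r ≠ 0 := sub_ne_zero.2 this
        exact abs_pos.2 this
      · norm_num
    obtain ⟨u, hu1, hu2⟩ := exists_rat_btwn (show r - δ < r by linarith)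
    obtain ⟨v, hv1, hv2⟩ := exists_rat_btwn (show r < r + δ by linarith)
    refine ⟨u, v, hu2, hv1, ?_⟩
    rintro s hs ⟨hsu, hsv⟩
    have h1 := hδle s hs
    have h2 : |s - r| < δ := abs_lt.2 ⟨by linarith, by linarith⟩
    linarith
  choose u v hu hv hx using hch
  set S : Finset (ℚ × ℚ) := F₁.attach.image (fun r => (u r.1 r.2, v r.1 r.2)) with hS
  refine ⟨e S, ?_, ?_⟩
  · rw [mem_iInter₂]
    intro r hr
    refine ⟨(u r hr, v r hr), ?_, hu r hr, hv r hr⟩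
    rw [Equiv.symm_apply_apply]
    exact Finset.mem_image_of_mem _ (Finset.mem_attach _ ⟨r, hr⟩)
  · rw [mem_iInter₂]
    intro s hs
    intro hmem
    obtain ⟨uv, huv, h1, h2⟩ := hmem
    rw [Equiv.symm_apply_apply] at huv
    obtain ⟨r, -, hruv⟩ := Finset.mem_image.1 huv
    apply hx r.1 r.2 s hs
    rw [← hruv] at h1 h2
    exact ⟨h1, h2⟩

theorem exists_ultrafilter_of_fip (𝒮 : Set (Set ℕ))
    (h : ∀ t : Finset (Set ℕ), ↑t ⊆ 𝒮 → (⋂₀ (t : Set (Set ℕ))).Nonempty) :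
    ∃ U : Ultrafilter ℕ, ∀ s ∈ 𝒮, s ∈ U := by
  have hne : (Filter.generate 𝒮).NeBot := by
    rw [Filter.generate_neBot_iff]
    intro t hts htf
    have := h htf.toFinset (by rwa [Set.Finite.coe_toFinset])
    rwa [Set.Finite.coe_toFinset] at this
  refine ⟨Ultrafilter.of (Filter.generate 𝒮), fun s hs => ?_⟩
  exact (Ultrafilter.of_le (Filter.generate 𝒮)) (Filter.mem_generate_of_mem hs)

theorem tightness_contradiction {X : Type*} [TopologicalSpace X]
    (G : Set (X → ℝ)) (C : ℝ) (hGbd : ∀ g ∈ G, ∀ x, |g x| ≤ C)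
    (htg : ∀ A ⊆ closure G, ∀ y ∈ closure G, y ∈ closure A →
      ∃ B ⊆ A, B.Countable ∧ y ∈ closure B)
    (h : ℕ → X → ℝ) (hh : ∀ i, h i ∈ G) (p q : ℝ) (hpq : p < q)
    (zx : Set ℕ → X)
    (hz : ∀ M : Set ℕ, (∀ i ∈ M, h i (zx M) ≤ p) ∧ (∀ i ∉ M, q ≤ h i (zx M))) : False := by
  classical
  -- closure G is compact
  set K0 : Set (X → ℝ) := Set.pi univ (fun _ => Icc (-C) C) with hK0
  have hK0comp : IsCompact K0 := isCompact_univ_pi fun _ => isCompact_Icc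
  have hK0cl : IsClosed K0 := isClosed_set_pi fun _ _ => isClosed_Icc
  have hGsub : G ⊆ K0 := by
    intro g hg x _
    exact abs_le.1 (hGbd g hg x)
  have hclGcomp : IsCompact (closure G) :=
    hK0comp.of_isClosed_subset isClosed_closure (closure_minimal hGsub hK0cl)
  -- ultrafilter limits
  have hUlim : ∀ U : Ultrafilter ℕ, ∃ g, g ∈ closure G ∧ Tendsto h (↑U) (𝓝 g) := by
    intro U
    have hle : ↑(U.map h) ≤ 𝓟 (closure G) := by
      rw [le_principal_iff]
      have : ∀ i, h i ∈ closure G := fun i => subset_closure (hh i)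
      exact Ultrafilter.mem_map.2 (Filter.univ_mem' (f := (U : Filter ℕ)) (s := h ⁻¹' closure G) this)
    obtain ⟨g, hg, hle2⟩ := hclGcomp.ultrafilter_le_nhds (U.map h) hle
    exact ⟨g, hg, by rw [Ultrafilter.coe_map] at hle2; exact hle2⟩
  have hmemZ : ∀ (U : Ultrafilter ℕ) g, Tendsto h (↑U) (𝓝 g) → g ∈ closure (range h) := by
    intro U g hT
    rw [mem_closure_iff_nhds]
    intro N hN
    have : h ⁻¹' N ∈ U := hT hN
    obtain ⟨i, hi⟩ := Ultrafilter.nonempty_of_mem this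
    exact ⟨h i, hi, mem_range_self i⟩
  have hlimle : ∀ (U : Ultrafilter ℕ) g, Tendsto h (↑U) (𝓝 g) → ∀ M : Set ℕ, M ∈ U →
      g (zx M) ≤ p := by
    intro U g hT M hM
    have hTx : Tendsto (fun i => h i (zx M)) (↑U) (𝓝 (g (zx M))) :=
      ((continuous_apply (zx M)).tendsto g).comp hT
    exact le_of_tendsto hTx (Filter.mem_of_superset hM fun i hi => (hz M).1 i hi)
  have hlimge : ∀ (U : Ultrafilter ℕ) g, Tendsto h (↑U) (𝓝 g) → ∀ M : Set ℕ, Mᶜ ∈ U →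
      q ≤ g (zx M) := by
    intro U g hT M hM
    have hTx : Tendsto (fun i => h i (zx M)) (↑U) (𝓝 (g (zx M))) :=
      ((continuous_apply (zx M)).tendsto g).comp hT
    exact ge_of_tendsto hTx (Filter.mem_of_superset hM fun i hi => (hz M).2 i hi)
  -- independent family and the map Φ
  obtain ⟨E, hE⟩ := exists_independent_family
  set ψ : ℝ → ℝ := fun t => min 1 (max 0 ((t - p)/(q - p))) with hψ
  have hψc : Continuous ψ :=
    continuous_const.min (continuous_const.max ((continuous_id.sub continuous_const).div_const _))
  have hψ0 : ∀ t, t ≤ p → ψ t = 0 := by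
    intro t ht
    have h1 : (t - p)/(q - p) ≤ 0 := div_nonpos_iff.2 (Or.inr ⟨by linarith, by linarith⟩)
    rw [hψ]
    simp only
    rw [max_eq_left h1, min_eq_right (by norm_num)]
  have hψ1 : ∀ t, q ≤ t → ψ t = 1 := by
    intro t ht
    have h1 : (1:ℝ) ≤ (t - p)/(q - p) := (le_div_iff₀ (by linarith)).2 (by linarith)
    rw [hψ]
    simp only
    rw [min_eq_left (le_trans h1 (le_max_right _ _))]
  set Φ : (X → ℝ) → (ℝ → ℝ) := fun g r => ψ (g (zx (E r))) with hΦ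
  have hΦc : Continuous Φ := continuous_pi fun r => hψc.comp (continuous_apply _)
  set Z : Set (X → ℝ) := closure (range h) with hZ
  have hZsubG : Z ⊆ closure G :=
    closure_minimal (range_subset_iff.2 fun i => subset_closure (hh i)) isClosed_closure
  have hZcomp : IsCompact Z := hclGcomp.of_isClosed_subset isClosed_closure hZsubG
  -- the ultrafilter containing all E r
  have hfipall : ∀ t : Finset (Set ℕ), ↑t ⊆ {s | ∃ r : ℝ, s = E r} →
      (⋂₀ (t : Set (Set ℕ))).Nonempty := by
    intro t ht
    set ρ : Set ℕ → ℝ := fun s => if hs : ∃ r : ℝ, s = E r then hs.choose else 0 with hρ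
    have hρspec : ∀ s ∈ t, E (ρ s) = s := by
      intro s hs
      have hex : ∃ r : ℝ, s = E r := ht hs
      rw [hρ]
      simp only
      rw [dif_pos hex]
      exact hex.choose_spec.symm
    obtain ⟨n, hn⟩ := hE (t.image ρ) ∅ (Finset.disjoint_empty_right _)
    refine ⟨n, ?_⟩
    intro s hs
    have : n ∈ ⋂ r ∈ t.image ρ, E r := hn.1
    rw [mem_iInter₂] at this
    have := this (ρ s) (Finset.mem_image_of_mem _ hs)
    rwa [hρspec s hs] at this
  obtain ⟨Ustar, hUstar⟩ := exists_ultrafilter_of_fip _ hfipall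
  obtain ⟨gstar, hgstarG, hgstarT⟩ := hUlim Ustar
  have hgstarZ : gstar ∈ Z := hmemZ Ustar gstar hgstarT
  set vstar : ℝ → ℝ := Φ gstar with hvstar
  have hvstar0 : ∀ r, vstar r = 0 := by
    intro r
    exact hψ0 _ (hlimle Ustar gstar hgstarT (E r) (hUstar _ ⟨r, rfl⟩))
  set A' : Set (ℝ → ℝ) := {v | v ∈ Φ '' Z ∧ {r | v r ≠ 1}.Finite} with hA'
  -- vstar ∈ closure A'
  have hvstarcl : vstar ∈ closure A' := by
    rw [mem_closure_iff_nhds]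
    intro N hN
    rw [nhds_pi, Filter.mem_pi] at hN
    obtain ⟨I, hIfin, V, hV, hsub⟩ := hN
    -- build ultrafilter for the finite set I
    set F : Finset ℝ := hIfin.toFinset with hF
    set 𝒮F : Set (Set ℕ) := {s | ∃ r ∈ I, s = E r} ∪ {s | ∃ r, r ∉ I ∧ s = (E r)ᶜ} with h𝒮F
    have hfipF : ∀ t : Finset (Set ℕ), ↑t ⊆ 𝒮F → (⋂₀ (t : Set (Set ℕ))).Nonempty := by
      intro t ht
      set ρ₁ : Set ℕ → ℝ := fun s => if hs : ∃ r ∈ I, s = E r then hs.choose else 0 with hρ₁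
      set ρ₂ : Set ℕ → ℝ := fun s => if hs : ∃ r, r ∉ I ∧ s = (E r)ᶜ then hs.choose else 0
        with hρ₂
      set t₁ : Finset (Set ℕ) := t.filter (fun s => ∃ r ∈ I, s = E r) with ht₁
      set F₁ : Finset ℝ := t₁.image ρ₁ with hF₁
      set F₂ : Finset ℝ := (t \ t₁).image ρ₂ with hF₂
      have hρ₁spec : ∀ s ∈ t₁, ρ₁ s ∈ I ∧ E (ρ₁ s) = s := by
        intro s hs
        have hsex : ∃ r ∈ I, s = E r := (Finset.mem_filter.1 hs).2
        rw [hρ₁]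
        simp only
        rw [dif_pos hsex]
        exact ⟨hsex.choose_spec.1, hsex.choose_spec.2.symm⟩
      have hρ₂spec : ∀ s ∈ t \ t₁, ρ₂ s ∉ I ∧ (E (ρ₂ s))ᶜ = s := by
        intro s hs
        rw [Finset.mem_sdiff] at hs
        have hsnot : ¬ (∃ r ∈ I, s = E r) := by
          intro hcon
          exact hs.2 (Finset.mem_filter.2 ⟨hs.1, hcon⟩)
        have hsex : ∃ r, r ∉ I ∧ s = (E r)ᶜ := by
          have := ht hs.1
          rcases this with h1 | h2
          · exact absurd h1 hsnot
          · exact h2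
        rw [hρ₂]
        simp only
        rw [dif_pos hsex]
        exact ⟨hsex.choose_spec.1, hsex.choose_spec.2.symm⟩
      have hdisjF : Disjoint F₁ F₂ := by
        rw [Finset.disjoint_left]
        intro r hr1 hr2
        obtain ⟨s1, hs1, hs1v⟩ := Finset.mem_image.1 hr1
        obtain ⟨s2, hs2, hs2v⟩ := Finset.mem_image.1 hr2
        exact (hs2v ▸ (hρ₂spec s2 hs2).1) (hs1v ▸ (hρ₁spec s1 hs1).1)
      obtain ⟨n, hn1, hn2⟩ := hE F₁ F₂ hdisjF
      rw [mem_iInter₂] at hn1 hn2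
      refine ⟨n, ?_⟩
      intro s hs
      by_cases hst1 : s ∈ t₁
      · have := hn1 (ρ₁ s) (Finset.mem_image_of_mem _ hst1)
        rwa [(hρ₁spec s hst1).2] at this
      · have hst2 : s ∈ t \ t₁ := Finset.mem_sdiff.2 ⟨hs, hst1⟩
        have := hn2 (ρ₂ s) (Finset.mem_image_of_mem _ hst2)
        rwa [(hρ₂spec s hst2).2] at this
    obtain ⟨UF, hUF⟩ := exists_ultrafilter_of_fip _ hfipF
    obtain ⟨w, hwG, hwT⟩ := hUlim UF
    have hwZ : w ∈ Z := hmemZ UF w hwT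
    have hΦw0 : ∀ r ∈ I, Φ w r = 0 := fun r hr =>
      hψ0 _ (hlimle UF w hwT (E r) (hUF _ (Or.inl ⟨r, hr, rfl⟩)))
    have hΦw1 : ∀ r, r ∉ I → Φ w r = 1 := fun r hr =>
      hψ1 _ (hlimge UF w hwT (E r) (hUF _ (Or.inr ⟨r, hr, rfl⟩)))
    refine ⟨Φ w, hsub ?_, ⟨mem_image_of_mem Φ hwZ, ?_⟩⟩
    · intro r hr
      rw [hΦw0 r hr, ← hvstar0 r]
      exact mem_of_mem_nhds (hV r)
    · apply hIfin.subset
      intro r hr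
      by_contra hrI
      exact hr (hΦw1 r hrI)
  -- pull back along Φ
  set Aup : Set (X → ℝ) := Z ∩ Φ ⁻¹' A' with hAup
  have hΦAup : Φ '' Aup = A' := by
    apply Subset.antisymm
    · rintro v ⟨w, hw, rfl⟩
      exact hw.2
    · rintro v hv
      obtain ⟨w, hwZ, hwv⟩ := hv.1
      exact ⟨w, ⟨hwZ, by rw [mem_preimage, hwv]; exact hv⟩, hwv⟩
  have hclAupZ : closure Aup ⊆ Z := closure_minimal inter_subset_left hZcomp.isClosed
  have hclAupcomp : IsCompact (closure Aup) :=
    hZcomp.of_isClosed_subset isClosed_closure hclAupZ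
  have himcl : IsClosed (Φ '' closure Aup) := (hclAupcomp.image hΦc).isClosed
  have hvstarim : vstar ∈ Φ '' closure Aup := by
    have h1 : A' ⊆ Φ '' closure Aup := by
      rw [← hΦAup]
      exact image_mono subset_closure
    exact closure_minimal h1 himcl hvstarcl
  obtain ⟨yhat, hyhatcl, hyhatv⟩ := hvstarim
  -- apply countable tightness
  have hyhatG : yhat ∈ closure G := hZsubG (hclAupZ hyhatcl)
  obtain ⟨B, hBsub, hBcount, hyhatB⟩ :=
    htg Aup (fun w hw => hZsubG hw.1) yhat hyhatG hyhatcl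
  have hvstarB : vstar ∈ closure (Φ '' B) := by
    rw [← hyhatv]
    exact (image_closure_subset_closure_image hΦc) (mem_image_of_mem Φ hyhatB)
  have hΦB : Φ '' B ⊆ A' := by
    rw [← hΦAup]
    exact image_mono hBsub
  set S : Set ℝ := ⋃ v ∈ Φ '' B, {r | v r ≠ 1} with hSdef
  have hScount : S.Countable := by
    apply Set.Countable.biUnion (hBcount.image Φ)
    intro v hv
    exact ((hΦB hv).2).countable
  have hSne : ∃ r : ℝ, r ∉ S := by
    by_contra hcon
    push_neg at hcon
    have : (univ : Set ℝ).Countable := hScount.mono (fun r _ => hcon r)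
    exact Cardinal.not_countable_real this
  obtain ⟨rstar, hrstar⟩ := hSne
  have hall1 : ∀ v ∈ Φ '' B, v rstar = 1 := by
    intro v hv
    by_contra hne
    exact hrstar (mem_biUnion hv hne)
  have hopen : IsOpen {v : ℝ → ℝ | v rstar < 1/2} :=
    isOpen_lt (continuous_apply rstar) continuous_const
  have hvstarmem : vstar ∈ {v : ℝ → ℝ | v rstar < 1/2} := by
    simp only [mem_setOf_eq, hvstar0]
    norm_num
  obtain ⟨v, hv1, hv2⟩ := mem_closure_iff_nhds.1 hvstarB _ (hopen.mem_nhds hvstarmem)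
  simp only [mem_setOf_eq] at hv1
  rw [hall1 v hv2] at hv1
  norm_num at hv1

theorem core_baire_one {Y : Type*} [TopologicalSpace Y] [CompactSpace Y] [T2Space Y]
    [SecondCountableTopology Y] [TopologicalSpace.MetrizableSpace Y]
    (fn : ℕ → Y → ℝ) (hfn : ∀ n, Continuous (fn n)) (f : Y → ℝ) (C : ℝ)
    (hC : ∀ y, |f y| ≤ C)
    (happ : ∀ (t : ℕ) (S : Finset Y) (δ : ℝ), 0 < δ → ∃ m, t ≤ m ∧ ∀ y ∈ S, |fn m y - f y| < δ)
    (hno : ∀ p q : ℝ, p < q → ∀ N : ℕ → ℕ, StrictMono N →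
      (∀ M : Set ℕ, ∃ z : Y, (∀ i ∈ M, fn (N i) z ≤ p) ∧ (∀ i ∉ M, q ≤ fn (N i) z)) → False) :
    BaireClassOne f := by
  have H : ∀ p q : ℝ, p < q → ∀ L : Set Y, IsClosed L → L.Nonempty →
      ∃ V, IsOpen V ∧ (V ∩ L).Nonempty ∧
        (V ∩ L ∩ {y | f y ≤ p} = ∅ ∨ V ∩ L ∩ {y | q ≤ f y} = ∅) := by
    intro p q hpq L hLc hLne
    by_contra hcon
    push_neg at hcon
    have hdense : ∀ V : Set Y, IsOpen V → (V ∩ L).Nonempty →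
        (V ∩ L ∩ {y | f y ≤ p}).Nonempty ∧ (V ∩ L ∩ {y | q ≤ f y}).Nonempty := by
      intro V hV hne
      exact hcon V hV hne
    obtain ⟨N, hN, hNfam⟩ := tree_construction fn hfn f happ p (p + (q-p)/3) (q - (q-p)/3) q
      (by linarith) (by linarith) L hLc hLne hdense
    exact hno (p + (q-p)/3) (q - (q-p)/3) (by linarith) N hN hNfam
  have hgt : ∀ a : ℝ, IsFsig {y | a < f y} := by
    intro a
    have hsep : ∀ n : ℕ, ∃ A : Set Y, IsFsig A ∧ {y | a + 1/(n+1) ≤ f y} ⊆ A ∧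
        A ⊆ {y | a < f y} := by
      intro n
      have hpq : a < a + 1/(n+1:ℝ) := by
        have : (0:ℝ) < 1/(n+1:ℝ) := by positivity
        linarith
      exact exists_fsig_separation f a (a + 1/(n+1)) (H a _ hpq)
    choose A hAf hA1 hA2 using hsep
    have heq : {y | a < f y} = ⋃ n, A n := by
      ext y
      simp only [mem_setOf_eq, mem_iUnion]
      constructor
      · intro hy
        obtain ⟨n, hn⟩ := exists_nat_one_div_lt (sub_pos.2 hy)
        exact ⟨n, hA1 n (by simp only [mem_setOf_eq]; linarith)⟩
      · rintro ⟨n, hn⟩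
        exact hA2 n hn
    rw [heq]
    exact IsFsig.iUnion hAf
  have hlt : ∀ a : ℝ, IsFsig {y | f y < a} := by
    have H' : ∀ p q : ℝ, p < q → ∀ L : Set Y, IsClosed L → L.Nonempty →
        ∃ V, IsOpen V ∧ (V ∩ L).Nonempty ∧
          (V ∩ L ∩ {y | -f y ≤ p} = ∅ ∨ V ∩ L ∩ {y | q ≤ -f y} = ∅) := by
      intro p q hpq L hLc hLne
      obtain ⟨V, h1, h2, h3⟩ := H (-q) (-p) (by linarith) L hLc hLne
      refine ⟨V, h1, h2, ?_⟩
      rcases h3 with hc | hc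
      · right
        convert hc using 2
        ext y
        simp only [mem_setOf_eq]
        constructor <;> intro <;> linarith
      · left
        convert hc using 2
        ext y
        simp only [mem_setOf_eq]
        constructor <;> intro <;> linarith
    intro a
    have hsep : ∀ n : ℕ, ∃ A : Set Y, IsFsig A ∧ {y | -a + 1/(n+1) ≤ -f y} ⊆ A ∧
        A ⊆ {y | -a < -f y} := by
      intro n
      have hpq : -a < -a + 1/(n+1:ℝ) := by
        have : (0:ℝ) < 1/(n+1:ℝ) := by positivity
        linarith
      exact exists_fsig_separation (fun y => -f y) (-a) (-a + 1/(n+1)) (H' (-a) _ hpq)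
    choose A hAf hA1 hA2 using hsep
    have heq : {y | f y < a} = ⋃ n, A n := by
      ext y
      simp only [mem_setOf_eq, mem_iUnion]
      constructor
      · intro hy
        obtain ⟨n, hn⟩ := exists_nat_one_div_lt (sub_pos.2 hy)
        exact ⟨n, hA1 n (by simp only [mem_setOf_eq]; linarith)⟩
      · rintro ⟨n, hn⟩
        have := hA2 n hn
        simp only [mem_setOf_eq] at this
        linarith
    rw [heq]
    exact IsFsig.iUnion hAf
  exact baireClassOne_of_approx (fun ε hε => exists_b1_approx f C hC hlt hgt ε hε)


/-- Let `X` be a compact space and `G` a uniformly bounded subset of `C(X)`.  If the closure of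
`G` in `ℝ^X` has countable tightness, then the closure of `G` in `ℝ^X` is contained in
`B₁(X)`. -/
theorem compact_tightness_closure_subset_baireOne
    {X : Type*} [TopologicalSpace X] [CompactSpace X]
    (G : Set (X → ℝ)) (hGcont : ∀ g ∈ G, Continuous g)
    (hGbd : ∃ C : ℝ, ∀ g ∈ G, ∀ x : X, |g x| ≤ C)
    (htg : CountableTightness ↥(closure G)) :
    ∀ f ∈ closure G, BaireClassOne f := by
  classical
  obtain ⟨C, hC⟩ := hGbd
  intro f hf
  -- transfer countable tightness to the ambient space
  have htg' : ∀ A ⊆ closure G, ∀ y ∈ closure G, y ∈ closure A →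
      ∃ B ⊆ A, B.Countable ∧ y ∈ closure B := by
    intro A hA y hy hycl
    set A' : Set ↥(closure G) := (↑) ⁻¹' A with hA'
    have hyA' : (⟨y, hy⟩ : ↥(closure G)) ∈ closure A' := by
      rw [closure_subtype]
      have himg : ((↑) : ↥(closure G) → (X → ℝ)) '' A' = A := by
        rw [hA', Subtype.image_preimage_coe]
        exact inter_eq_self_of_subset_right hA
      rw [himg]
      exact hycl
    obtain ⟨B', hB'sub, hB'c, hyB'⟩ := htg A' _ hyA'
    refine ⟨(↑) '' B', ?_, hB'c.image _, ?_⟩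
    · rintro b ⟨b', hb', rfl⟩
      exact hB'sub hb'
    · exact (closure_subtype).1 hyB'
  -- countable set with f in its closure
  obtain ⟨B₀, hB₀G, hB₀c, hfB₀⟩ := htg' G subset_closure f hf hf
  have hB₀ne : B₀.Nonempty := by
    rcases B₀.eq_empty_or_nonempty with rfl | h
    · rw [closure_empty] at hfB₀
      exact absurd hfB₀ (notMem_empty f)
    · exact h
  obtain ⟨fn, hfnrange⟩ := hB₀c.exists_eq_range hB₀ne
  have hfnG : ∀ n, fn n ∈ G := fun n => hB₀G (by rw [hfnrange]; exact mem_range_self n)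
  have hfncont : ∀ n, Continuous (fn n) := fun n => hGcont _ (hfnG n)
  have hfB : f ∈ closure (range fn) := by rwa [hfnrange] at hfB₀
  by_cases hfeq : ∃ n, f = fn n
  · obtain ⟨n, rfl⟩ := hfeq
    exact (hGcont _ (hfnG n)).baireClassOne
  push_neg at hfeq
  -- tail closures
  have htail : ∀ t : ℕ, f ∈ closure {g | ∃ m, t ≤ m ∧ g = fn m} := by
    intro t
    have hsplit : range fn ⊆ (fn '' (Iio t)) ∪ {g | ∃ m, t ≤ m ∧ g = fn m} := by
      rintro g ⟨m, rfl⟩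
      rcases Nat.lt_or_ge m t with hm | hm
      · exact Or.inl ⟨m, hm, rfl⟩
      · exact Or.inr ⟨m, hm, rfl⟩
    have h1 : f ∈ closure ((fn '' (Iio t)) ∪ {g | ∃ m, t ≤ m ∧ g = fn m}) :=
      closure_mono hsplit hfB
    rw [closure_union] at h1
    rcases h1 with h1 | h1
    · exfalso
      have hfin : (fn '' (Iio t)).Finite := (finite_Iio t).image fn
      rw [hfin.isClosed.closure_eq] at h1
      obtain ⟨m, -, hm⟩ := h1
      exact hfeq m hm.symm
    · exact h1
  -- pointwise bound on f
  have hfC : ∀ x, |f x| ≤ C := by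
    intro x
    by_contra hgt
    push_neg at hgt
    set ε : ℝ := |f x| - C with hε
    have hεpos : 0 < ε := by simp only [hε]; linarith
    have hNopen : IsOpen {g : X → ℝ | |g x - f x| < ε} := by
      have : {g : X → ℝ | |g x - f x| < ε} = (fun g : X → ℝ => g x) ⁻¹' Metric.ball (f x) ε := by
        ext g; simp [Metric.mem_ball, Real.dist_eq]
      rw [this]
      exact (continuous_apply x).isOpen_preimage _ Metric.isOpen_ball
    have hNf : f ∈ {g : X → ℝ | |g x - f x| < ε} := by simp [hεpos]
    obtain ⟨g, hg1, hg2⟩ := mem_closure_iff_nhds.1 hf _ (hNopen.mem_nhds hNf)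
    have := hC g hg2 x
    simp only [mem_setOf_eq] at hg1
    have h2 : |f x| ≤ |g x| + |g x - f x| := by
      have := abs_sub_abs_le_abs_sub (f x) (g x)
      rw [abs_sub_comm (f x) (g x)] at this
      linarith
    linarith
  -- the compact metrizable quotient
  set K : Set (ℕ → ℝ) := range (fun x => fun n => fn n x) with hK
  have hπcont : Continuous (fun x : X => (fun n => fn n x)) := continuous_pi fun n => hfncont n
  have hKcomp : IsCompact K := isCompact_range hπcont
  haveI : CompactSpace ↥K := isCompact_iff_compactSpace.1 hKcomp
  set fnK : ℕ → ↥K → ℝ := fun m y => (y : ℕ → ℝ) m with hfnK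
  have hfnKcont : ∀ m, Continuous (fnK m) := fun m =>
    (continuous_apply m).comp continuous_subtype_val
  set xc : ↥K → X := fun y => y.2.choose with hxc
  have hxcspec : ∀ y : ↥K, (fun n => fn n (xc y)) = (y : ℕ → ℝ) := fun y => y.2.choose_spec
  have hfib : ∀ x x' : X, (∀ n, fn n x = fn n x') → f x = f x' := by
    intro x x' hxx
    by_contra hne
    set ε : ℝ := |f x - f x'|/2 with hε
    have hεpos : 0 < ε := by
      have : f x - f x' ≠ 0 := sub_ne_zero.2 hne
      have := abs_pos.2 this
      simp only [hε]; linarith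
    have hNopen : IsOpen {g : X → ℝ | |g x - f x| < ε ∧ |g x' - f x'| < ε} := by
      have : {g : X → ℝ | |g x - f x| < ε ∧ |g x' - f x'| < ε} =
          ((fun g : X → ℝ => g x) ⁻¹' Metric.ball (f x) ε) ∩
          ((fun g : X → ℝ => g x') ⁻¹' Metric.ball (f x') ε) := by
        ext g; simp [Metric.mem_ball, Real.dist_eq]
      rw [this]
      exact ((continuous_apply x).isOpen_preimage _ Metric.isOpen_ball).inter
        ((continuous_apply x').isOpen_preimage _ Metric.isOpen_ball)
    have hNf : f ∈ {g : X → ℝ | |g x - f x| < ε ∧ |g x' - f x'| < ε} := by simp [hεpos]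
    obtain ⟨g, hg1, hg2⟩ := mem_closure_iff_nhds.1 hfB _ (hNopen.mem_nhds hNf)
    obtain ⟨m, rfl⟩ := hg2
    simp only [mem_setOf_eq] at hg1
    have heq : fn m x = fn m x' := hxx m
    have : |f x - f x'| ≤ |fn m x - f x| + |fn m x' - f x'| := by
      have h1 : f x - f x' = -(fn m x - f x) + (fn m x' - f x') := by rw [heq]; ring
      rw [h1]
      exact le_trans (abs_add_le _ _) (by rw [abs_neg])
    simp only [hε] at hεpos ⊢
    linarith [hg1.1, hg1.2, this]
  set fK : ↥K → ℝ := fun y => f (xc y) with hfK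
  have hfKeval : ∀ x : X, fK ⟨(fun n => fn n x), mem_range_self x⟩ = f x := by
    intro x
    apply hfib
    intro n
    exact congrFun (hxcspec ⟨(fun n => fn n x), mem_range_self x⟩) n
  have hfKbd : ∀ y, |fK y| ≤ C := fun y => hfC (xc y)
  have happ : ∀ (t : ℕ) (S : Finset ↥K) (δ : ℝ), 0 < δ →
      ∃ m, t ≤ m ∧ ∀ y ∈ S, |fnK m y - fK y| < δ := by
    intro t S δ hδ
    set N : Set (X → ℝ) := {g | ∀ y ∈ S, |g (xc y) - f (xc y)| < δ} with hN
    have hNopen : IsOpen N := by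
      have : N = ⋂ y ∈ S, (fun g : X → ℝ => g (xc y)) ⁻¹' Metric.ball (f (xc y)) δ := by
        ext g
        simp [hN, Metric.mem_ball, Real.dist_eq]
      rw [this]
      exact isOpen_biInter_finset fun y _ =>
        (continuous_apply (xc y)).isOpen_preimage _ Metric.isOpen_ball
    have hNf : f ∈ N := by
      intro y _
      simpa using hδ
    obtain ⟨g, hg1, hg2⟩ := mem_closure_iff_nhds.1 (htail t) _ (hNopen.mem_nhds hNf)
    obtain ⟨m, hmt, rfl⟩ := hg2
    refine ⟨m, hmt, ?_⟩
    intro y hy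
    have := hg1 y hy
    rwa [show fn m (xc y) = fnK m y from congrFun (hxcspec y) m] at this
  have hno : ∀ p q : ℝ, p < q → ∀ N : ℕ → ℕ, StrictMono N →
      (∀ M : Set ℕ, ∃ z : ↥K, (∀ i ∈ M, fnK (N i) z ≤ p) ∧ (∀ i ∉ M, q ≤ fnK (N i) z)) →
      False := by
    intro p q hpq N hN hfam
    choose z hz1 hz2 using hfam
    apply tightness_contradiction G C hC htg' (fun i => fn (N i)) (fun i => hfnG (N i)) p q hpq
      (fun M => xc (z M))
    intro M
    constructor
    · intro i hi
      have h1 := hz1 M i hi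
      rwa [show fn (N i) (xc (z M)) = fnK (N i) (z M) from congrFun (hxcspec (z M)) (N i)]
    · intro i hi
      have h1 := hz2 M i hi
      rwa [show fn (N i) (xc (z M)) = fnK (N i) (z M) from congrFun (hxcspec (z M)) (N i)]
  have hfKB1 : BaireClassOne fK := core_baire_one fnK hfnKcont fK C hfKbd happ hno
  obtain ⟨g, hgc, hgl⟩ := hfKB1
  refine ⟨fun k x => g k ⟨(fun n => fn n x), mem_range_self x⟩, ?_, ?_⟩
  · intro k
    exact (hgc k).comp (hπcont.subtype_mk _)
  · intro x
    have := hgl ⟨(fun n => fn n x), mem_range_self x⟩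
    rwa [hfKeval x] at this
end

section
/- Let X = [0,ω₁] be the space of all ordinals less than or equal to the first uncountable ordinal ω₁, with the order topology, and let G = { χ_{[α,ω₁]} : α < ω₁ and α is not a limit ordinal }, where χ_A denotes the characteristic function of A ⊆ X. Then the characteristic function χ_{{ω₁}} of the singleton {ω₁} belongs to the closure of G in ℝ^X, but χ_{{ω₁}} does not belong to the closure in ℝ^X of any countable subset of G; in particular, the closure of G in ℝ^X does not have countable tightness. -/
open Filter Topology Set

/-- The first uncountable ordinal `ω₁`. -/
noncomputable def omega1 : Ordinal := (Cardinal.aleph 1).ord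

/-- The space `X = [0, ω₁]` of ordinals less than or equal to `ω₁`. -/
def OrdClosedInterval : Type _ := {o : Ordinal // o ≤ omega1}

/-- `G = { χ_{[α,ω₁]} : α < ω₁, α not a limit ordinal }` as a set of real-valued functions
on `X = [0, ω₁]`. -/
noncomputable def exampleG : Set (OrdClosedInterval → ℝ) :=
  {f | ∃ α : Ordinal, α < omega1 ∧ ¬ Order.IsSuccLimit α ∧
    f = fun x : OrdClosedInterval => if α ≤ x.1 then (1 : ℝ) else 0}

/-- The characteristic function `χ_{{ω₁}}` of the singleton `{ω₁}`. -/
noncomputable def chiOmega1 : OrdClosedInterval → ℝ :=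
  fun x => if x.1 = omega1 then (1 : ℝ) else 0

lemma omega1_isLimit : Order.IsSuccLimit omega1 :=
  Cardinal.isSuccLimit_ord (Cardinal.aleph0_le_aleph 1)

lemma part1 : chiOmega1 ∈ closure exampleG := by
  have hne : Nonempty {α : Ordinal // α < omega1} := ⟨⟨0, omega1_isLimit.pos⟩⟩
  set f : {α : Ordinal // α < omega1} → (OrdClosedInterval → ℝ) :=
    fun a x => if a.1 + 1 ≤ x.1 then (1 : ℝ) else 0 with hf
  have hmem : ∀ a, f a ∈ exampleG := by
    intro a
    refine ⟨a.1 + 1, ?_, ?_, rfl⟩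
    · rw [Ordinal.add_one_eq_succ]
      exact omega1_isLimit.succ_lt a.2
    · rw [Ordinal.add_one_eq_succ]
      exact Order.not_isSuccLimit_succ _
  have htend : Tendsto f atTop (𝓝 chiOmega1) := by
    rw [tendsto_pi_nhds]
    intro x
    rcases eq_or_lt_of_le x.2 with h | h
    · have : (fun a : {α : Ordinal // α < omega1} => f a x) = fun _ => (1 : ℝ) := by
        funext a
        simp only [hf]
        rw [if_pos]
        rw [Ordinal.add_one_eq_succ, Order.succ_le_iff, h]
        exact a.2
      rw [this]
      have : chiOmega1 x = 1 := by rw [chiOmega1, if_pos h]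
      rw [this]
      exact tendsto_const_nhds
    · have hev : ∀ᶠ a in (atTop : Filter {α : Ordinal // α < omega1}),
          f a x = 0 := by
        filter_upwards [eventually_ge_atTop ⟨x.1, h⟩] with a ha
        simp only [hf]
        rw [if_neg]
        rw [Ordinal.add_one_eq_succ, Order.succ_le_iff, not_lt]
        exact ha
      have : chiOmega1 x = 0 := by rw [chiOmega1, if_neg h.ne]
      rw [this]
      exact Tendsto.congr' (by filter_upwards [hev] with a ha using ha.symm)
        tendsto_const_nhds
  exact mem_closure_of_tendsto htend (Eventually.of_forall hmem)

lemma part2 : ∀ B ⊆ exampleG, B.Countable → chiOmega1 ∉ closure B := by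
  intro B hBG hBc hcl
  rcases B.eq_empty_or_nonempty with rfl | hBne
  · rw [closure_empty] at hcl; exact hcl
  obtain ⟨e, rfl⟩ := Countable.exists_eq_range hBc hBne
  have hα : ∀ n : ℕ, ∃ α : Ordinal, α < omega1 ∧ ¬ Order.IsSuccLimit α ∧
      e n = fun x : OrdClosedInterval => if α ≤ x.1 then (1 : ℝ) else 0 :=
    fun n => hBG (mem_range_self n)
  choose α hα1 hα2 hα3 using hα
  set β := ⨆ n, α n with hβ
  have hβlt : β < omega1 := by
    have h := Ordinal.iSup_lt_omega_one (f := α) (fun n => by rw [← Cardinal.ord_aleph]; exact hα1 n)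
    rw [← Cardinal.ord_aleph] at h
    exact h
  set x : OrdClosedInterval := ⟨β, hβlt.le⟩ with hx
  have hclosed : IsClosed {g : OrdClosedInterval → ℝ | g x = 1} :=
    IsClosed.preimage (continuous_apply x) isClosed_singleton
  have hsub : closure (range e) ⊆ {g : OrdClosedInterval → ℝ | g x = 1} := by
    apply closure_minimal _ hclosed
    rintro g ⟨n, rfl⟩
    show e n x = 1
    rw [hα3 n]
    exact if_pos (Ordinal.le_iSup α n)
  have h1 : chiOmega1 x = 1 := hsub hcl
  rw [chiOmega1] at h1
  simp only [hx] at h1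
  rw [if_neg hβlt.ne] at h1
  exact zero_ne_one h1

/-- `χ_{{ω₁}}` belongs to the closure of `G` in `ℝ^X`, but it does not belong to the closure of
any countable subset of `G`; in particular the closure of `G` in `ℝ^X` does not have countable
tightness. -/
theorem exampleG_closure_not_countably_tight :
    chiOmega1 ∈ closure exampleG ∧
    (∀ B ⊆ exampleG, B.Countable → chiOmega1 ∉ closure B) ∧
    ¬ CountableTightness ↥(closure exampleG) := by
  refine ⟨part1, part2, ?_⟩
  intro hct
  set y : ↥(closure exampleG) := ⟨chiOmega1, part1⟩ with hy
  set A : Set ↥(closure exampleG) := Subtype.val ⁻¹' exampleG with hA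
  have himg : Subtype.val '' A = exampleG := by
    rw [hA, Subtype.image_preimage_coe]
    exact inter_eq_self_of_subset_right subset_closure
  have hyA : y ∈ closure A := by
    rw [closure_subtype, himg]
    exact part1
  obtain ⟨B, hBA, hBc, hyB⟩ := hct A y hyA
  rw [closure_subtype] at hyB
  exact part2 (Subtype.val '' B) ((image_mono hBA).trans himg.subset)
    (hBc.image _) hyB
end

section
/- Let X be a topological space, (M,d) a metric space with d bounded by 1, and let f : X → M be a function. Then f is continuous if and only if the associated function f̌ : X × 𝒦 → ℝ, defined by f̌(x,α) = α(f(x)), is continuous. -/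
open Filter Topology Set

/-- For a metric space `M` (with metric bounded by `1`), `𝒦` is the set of all functions
`α : M → [-1,1]` satisfying `|α m₁ - α m₂| ≤ d(m₁, m₂)`, regarded as a subspace of `ℝ^M` with
the pointwise convergence topology. -/
abbrev Kspace (M : Type*) [MetricSpace M] : Type _ :=
  {α : M → ℝ // (∀ m, α m ∈ Set.Icc (-1 : ℝ) 1) ∧
    ∀ m₁ m₂ : M, |α m₁ - α m₂| ≤ dist m₁ m₂}

/-- For `f : X → M`, the associated function `f̌ : X × 𝒦 → ℝ`, `f̌(x, α) = α (f x)`. -/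
def check {X : Type*} {M : Type*} [MetricSpace M] (f : X → M) : X × Kspace M → ℝ :=
  fun p => p.2.1 (f p.1)

/-- Let `X` be a topological space and `(M, d)` a metric space with `d` bounded by `1`.  A
function `f : X → M` is continuous iff `f̌ : X × 𝒦 → ℝ` is continuous. -/
theorem continuous_iff_continuous_check
    {X M : Type*} [TopologicalSpace X] [MetricSpace M]
    (hd : ∀ m₁ m₂ : M, dist m₁ m₂ ≤ 1) (f : X → M) :
    Continuous f ↔ Continuous (check f) := by
  constructor
  · intro hf
    rw [continuous_iff_continuousAt]
    rintro ⟨x₀, α₀⟩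
    rw [ContinuousAt, Metric.tendsto_nhds]
    intro ε hε
    have hf' : ContinuousAt (fun p : X × Kspace M => f p.1) (x₀, α₀) :=
      (hf.comp continuous_fst).continuousAt
    have h1 : ∀ᶠ p : X × Kspace M in 𝓝 (x₀, α₀), dist (f p.1) (f x₀) < ε / 2 :=
      Metric.tendsto_nhds.mp hf' (ε / 2) (by positivity)
    have hev : ContinuousAt (fun p : X × Kspace M => p.2.1 (f x₀)) (x₀, α₀) :=
      (((continuous_apply (f x₀)).comp continuous_subtype_val).comp continuous_snd).continuousAt
    have h2 : ∀ᶠ p : X × Kspace M in 𝓝 (x₀, α₀),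
        dist (p.2.1 (f x₀)) (α₀.1 (f x₀)) < ε / 2 :=
      Metric.tendsto_nhds.mp hev (ε / 2) (by positivity)
    filter_upwards [h1, h2] with p hp1 hp2
    have key : |p.2.1 (f p.1) - p.2.1 (f x₀)| ≤ dist (f p.1) (f x₀) := p.2.2.2 _ _
    rw [Real.dist_eq] at hp2 ⊢
    calc |check f p - check f (x₀, α₀)|
        = |(p.2.1 (f p.1) - p.2.1 (f x₀)) + (p.2.1 (f x₀) - α₀.1 (f x₀))| := by
          simp only [check]; ring_nf
      _ ≤ |p.2.1 (f p.1) - p.2.1 (f x₀)| + |p.2.1 (f x₀) - α₀.1 (f x₀)| := abs_add_le _ _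
      _ < ε / 2 + ε / 2 := by
          exact add_lt_add (key.trans_lt hp1) hp2
      _ = ε := by ring
  · intro h
    rw [continuous_iff_continuousAt]
    intro x₀
    set α₀ : Kspace M := ⟨fun m => dist m (f x₀),
      ⟨fun m => ⟨by linarith [dist_nonneg (x := m) (y := f x₀)], hd _ _⟩,
        fun m₁ m₂ => abs_dist_sub_le m₁ m₂ (f x₀)⟩⟩ with hα₀
    have hc : Continuous (fun x : X => dist (f x) (f x₀)) := by
      have : Continuous (fun x : X => check f (x, α₀)) :=
        h.comp (continuous_id.prodMk continuous_const)
      simpa [check, hα₀] using this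
    rw [ContinuousAt, tendsto_iff_dist_tendsto_zero]
    have h0 : dist (f x₀) (f x₀) = 0 := dist_self _
    have := hc.continuousAt (x := x₀)
    rw [ContinuousAt, h0] at this
    exact this
end

section
/- Let X be a topological space, (M,d) a metric space with d bounded by 1, let I be an index set with a filter l on I, let (g_i)_{i∈I} be a family of continuous functions from X to M, and let f : X → M. Then (g_i) converges to f pointwise along l (that is, for every x ∈ X, g_i(x) → f(x) along l) if and only if (ǧ_i) converges to f̌ pointwise along l (that is, for every (x,α) ∈ X × 𝒦, ǧ_i(x,α) → f̌(x,α) along l). -/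
open Filter Topology Set

/-- A family `(gᵢ)` of continuous functions `X → M` converges pointwise along a filter `l` to
`f : X → M` iff `(ǧᵢ)` converges pointwise along `l` to `f̌`. -/
theorem tendsto_pointwise_iff_tendsto_check
    {X M I : Type*} [TopologicalSpace X] [MetricSpace M]
    (hd : ∀ m₁ m₂ : M, dist m₁ m₂ ≤ 1) (l : Filter I)
    (g : I → X → M) (hg : ∀ i, Continuous (g i)) (f : X → M) :
    (∀ x : X, Tendsto (fun i => g i x) l (𝓝 (f x))) ↔
      (∀ p : X × Kspace M, Tendsto (fun i => check (g i) p) l (𝓝 (check f p))) := by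
  constructor
  · rintro h ⟨x, α, hα1, hα2⟩
    have hlip : LipschitzWith 1 α := by
      apply LipschitzWith.of_dist_le_mul
      intro m₁ m₂
      rw [NNReal.coe_one, one_mul, Real.dist_eq]
      exact hα2 m₁ m₂
    exact (hlip.continuous.tendsto _).comp (h x)
  · intro h x
    rw [tendsto_iff_dist_tendsto_zero]
    set α : Kspace M := ⟨fun m => dist m (f x),
      fun m => ⟨le_trans (by norm_num) dist_nonneg, hd _ _⟩,
      fun m₁ m₂ => abs_dist_sub_le m₁ m₂ (f x)⟩
    have := h (x, α)
    simpa [check, α] using this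
end

section
/- Let X be a topological space, (M,d) a metric space with d bounded by 1, and let G ⊆ C(X,M) be such that the closure of G in M^X is compact. Then the map g ↦ ǧ is a homeomorphism of the closure of G in M^X onto the closure of Ǧ = { ǧ : g ∈ G } in ℝ^{X×𝒦}. -/
open Filter Topology Set

lemma check_continuous {X M : Type*} [TopologicalSpace X] [MetricSpace M] :
    Continuous (check : (X → M) → (X × Kspace M → ℝ)) := by
  refine continuous_pi fun p => ?_
  have hα : Continuous p.2.1 := by
    refine (LipschitzWith.of_dist_le_mul (K := 1) fun a b => ?_).continuous
    rw [Real.dist_eq]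
    simpa using p.2.2.2 a b
  exact hα.comp (continuous_apply p.1)

lemma check_injective {X M : Type*} [TopologicalSpace X] [MetricSpace M]
    (hd : ∀ m₁ m₂ : M, dist m₁ m₂ ≤ 1) :
    Function.Injective (check : (X → M) → (X × Kspace M → ℝ)) := by
  intro f g h
  funext x
  set α : Kspace M := ⟨fun m => dist m (f x),
    ⟨fun m => ⟨le_trans (by norm_num) dist_nonneg, hd _ _⟩,
     fun m₁ m₂ => abs_dist_sub_le _ _ _⟩⟩
  have := congrFun h (x, α)
  simp only [check, α] at this
  have : dist (g x) (f x) = 0 := by rw [← this]; simp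
  exact (dist_eq_zero.mp this).symm

/-- Let `X` be a topological space, `(M, d)` a metric space with `d` bounded by `1`, and
`G ⊆ C(X, M)` such that the closure of `G` in `M^X` is compact.  Then `g ↦ ǧ` is a
homeomorphism of the closure of `G` in `M^X` onto the closure of `Ǧ` in `ℝ^{X × 𝒦}`. -/
theorem closure_homeomorph_closure_check
    {X M : Type*} [TopologicalSpace X] [MetricSpace M]
    (hd : ∀ m₁ m₂ : M, dist m₁ m₂ ≤ 1)
    (G : Set (X → M)) (hGcont : ∀ g ∈ G, Continuous g)
    (hGcomp : IsCompact (closure G)) :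
    ∃ e : ↥(closure G) ≃ₜ ↥(closure (check '' G : Set (X × Kspace M → ℝ))),
      ∀ g : ↥(closure G), (e g : X × Kspace M → ℝ) = check g.1 := by
  have hc := check_continuous (X := X) (M := M)
  have hinj := check_injective (X := X) (M := M) hd
  -- image of closure = closure of image
  have himg : check '' closure G = closure (check '' G) := by
    apply Subset.antisymm
    · exact image_closure_subset_closure_image hc
    · exact closure_minimal (image_mono subset_closure)
        ((hGcomp.image hc).isClosed)
  -- the map between subtypes
  have hmem : ∀ g : ↥(closure G), check g.1 ∈ closure (check '' G) := fun g =>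
    himg ▸ mem_image_of_mem _ g.2
  let F : ↥(closure G) → ↥(closure (check '' G : Set (X × Kspace M → ℝ))) :=
    fun g => ⟨check g.1, hmem g⟩
  have hFcont : Continuous F :=
    Continuous.subtype_mk (hc.comp continuous_subtype_val) _
  have hFbij : Function.Bijective F := by
    constructor
    · intro a b hab
      exact Subtype.ext (hinj (congrArg Subtype.val hab))
    · rintro ⟨y, hy⟩
      rw [← himg] at hy
      obtain ⟨g, hg, rfl⟩ := hy
      exact ⟨⟨g, hg⟩, rfl⟩
  haveI : CompactSpace ↥(closure G) := isCompact_iff_compactSpace.mp hGcomp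
  let E := Equiv.ofBijective F hFbij
  have hEc : Continuous E := hFcont
  exact ⟨hEc.homeoOfEquivCompactToT2, fun g => rfl⟩
end

section
/- Let X be a Polish space, (M,d) a metric space, and let (fₙ) be a sequence in C(X,M) such that the closure of {fₙ : n ∈ ω} in M^X is compact. Then either (fₙ) contains a pointwise Cauchy subsequence, or (fₙ) contains a subsequence whose closure in M^X is homeomorphic to βω. -/
open Filter Topology Set Metric

/-- Two sets that are uniformly separated have disjoint closures. -/
lemma closure_sep_disjoint {M : Type*} [MetricSpace M] {s t : Set M} {δ : ℝ} (hδ : 0 < δ)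
    (h : ∀ u ∈ s, ∀ v ∈ t, δ ≤ dist u v) {w : M} (hws : w ∈ closure s) (hwt : w ∈ closure t) :
    False := by
  obtain ⟨u, hu, hu'⟩ := Metric.mem_closure_iff.mp hws (δ/2) (by linarith)
  obtain ⟨v, hv, hv'⟩ := Metric.mem_closure_iff.mp hwt (δ/2) (by linarith)
  have := h u hu v hv
  have htri := dist_triangle u w v
  rw [dist_comm u w] at htri
  linarith

/-- **Criterion for βℕ**: if `g : ℕ → X → M` has compact pointwise closure and any two disjoint
index sets are uniformly separated at some point, the closure is homeomorphic to `βℕ`. -/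
lemma beta_criterion {X M : Type*} [MetricSpace M] (g : ℕ → X → M)
    (hcomp : IsCompact (closure (range g)))
    (SEP : ∀ A B : Set ℕ, Disjoint A B → ∃ x : X, ∃ δ : ℝ, 0 < δ ∧
      ∀ n ∈ A, ∀ m ∈ B, δ ≤ dist (g n x) (g m x)) :
    Nonempty (↥(closure (range g)) ≃ₜ StoneCech ℕ) := by
  haveI : CompactSpace (closure (range g)) := isCompact_iff_compactSpace.mp hcomp
  set g' : ℕ → closure (range g) := fun n => ⟨g n, subset_closure (mem_range_self n)⟩ with hg'def
  have hg' : Continuous g' := continuous_of_discreteTopology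
  set e := stoneCechExtend hg' with hedef
  have he : Continuous e := continuous_stoneCechExtend hg'
  have heu : ∀ n, e (stoneCechUnit n) = g' n := fun n => congrFun (stoneCechExtend_extends hg') n
  have hdense : DenseRange g' := by
    rw [denseRange_iff_closure_range, ← Set.univ_subset_iff,
      (Topology.IsEmbedding.subtypeVal
        (p := fun y => y ∈ closure (range g))).closure_eq_preimage_closure_image]
    intro y _
    simp only [Set.mem_preimage]
    have h : (Subtype.val '' (range g')) = range g := by
      ext z
      constructor
      · rintro ⟨w, ⟨n, rfl⟩, rfl⟩; exact ⟨n, rfl⟩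
      · rintro ⟨n, rfl⟩; exact ⟨_, ⟨n, rfl⟩, rfl⟩
    rw [h]
    exact y.2
  have hsurj : Function.Surjective e := by
    have h1 : range g' ⊆ range e := by
      rintro _ ⟨n, rfl⟩; exact ⟨stoneCechUnit n, heu n⟩
    have h2 : closure (range g') ⊆ range e :=
      ((isCompact_range he).isClosed.closure_subset_iff).mpr h1
    intro c
    exact h2 (by rw [hdense.closure_range]; trivial)
  have hinj : Function.Injective e := by
    intro x y hxy
    by_contra hne
    obtain ⟨φ, hφ0, hφ1, _⟩ := exists_continuous_zero_one_of_isClosed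
      (isClosed_singleton (x := x)) (isClosed_singleton (x := y))
      (Set.disjoint_singleton.mpr hne)
    set A : Set ℕ := {n | φ (stoneCechUnit n) ≤ 1/2} with hAdef
    have hcov : ∀ z : StoneCech ℕ,
        z ∈ closure (stoneCechUnit '' A) ∪ closure (stoneCechUnit '' Aᶜ) := by
      intro z
      have : z ∈ closure (stoneCechUnit '' A ∪ stoneCechUnit '' Aᶜ) := by
        rw [← image_union, union_compl_self, image_univ,
          denseRange_stoneCechUnit.closure_range]
        trivial
      rwa [closure_union] at this
    have hx : x ∈ closure (stoneCechUnit '' A) := by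
      by_contra hx'
      have hmem : x ∈ closure (stoneCechUnit '' Aᶜ) := (hcov x).resolve_left hx'
      have h2 : φ x ∈ closure (⇑φ '' (stoneCechUnit '' Aᶜ)) :=
        image_closure_subset_closure_image φ.continuous ⟨x, hmem, rfl⟩
      have h3 : closure (⇑φ '' (stoneCechUnit '' Aᶜ)) ⊆ Ici (1/2 : ℝ) := by
        refine closure_minimal ?_ isClosed_Ici
        rintro _ ⟨_, ⟨n, hn, rfl⟩, rfl⟩
        simp only [mem_Ici]; exact le_of_lt (lt_of_not_ge (by simpa [hAdef] using hn))
      have h4 : (1:ℝ)/2 ≤ φ x := h3 h2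
      rw [hφ0 rfl] at h4
      norm_num at h4
    have hy : y ∈ closure (stoneCechUnit '' Aᶜ) := by
      by_contra hy'
      have hmem : y ∈ closure (stoneCechUnit '' A) := (hcov y).resolve_right hy'
      have h2 : φ y ∈ closure (⇑φ '' (stoneCechUnit '' A)) :=
        image_closure_subset_closure_image φ.continuous ⟨y, hmem, rfl⟩
      have h3 : closure (⇑φ '' (stoneCechUnit '' A)) ⊆ Iic (1/2 : ℝ) := by
        refine closure_minimal ?_ isClosed_Iic
        rintro _ ⟨_, ⟨n, hn, rfl⟩, rfl⟩
        simp only [mem_Iic]; exact hn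
      have h4 : φ y ≤ 1/2 := h3 h2
      rw [hφ1 rfl] at h4
      norm_num at h4
    obtain ⟨x₀, δ, hδ, hsep⟩ := SEP A Aᶜ disjoint_compl_right
    set ev : ↥(closure (range g)) → M := fun h => (h : X → M) x₀ with hevdef
    have hev : Continuous ev := (continuous_apply x₀).comp continuous_subtype_val
    have key : ∀ (z : StoneCech ℕ) (S : Set ℕ), z ∈ closure (stoneCechUnit '' S) →
        ev (e z) ∈ closure ((fun n => g n x₀) '' S) := by
      intro z S hz
      have h1 : e z ∈ closure (e '' (stoneCechUnit '' S)) :=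
        image_closure_subset_closure_image he ⟨z, hz, rfl⟩
      have h2 : ev (e z) ∈ closure (ev '' (e '' (stoneCechUnit '' S))) :=
        image_closure_subset_closure_image hev ⟨e z, h1, rfl⟩
      refine closure_mono ?_ h2
      rintro _ ⟨_, ⟨_, ⟨n, hn, rfl⟩, rfl⟩, rfl⟩
      exact ⟨n, hn, by rw [heu n]⟩
    have hxv : ev (e x) ∈ closure ((fun n => g n x₀) '' A) := key x A hx
    have hyv : ev (e y) ∈ closure ((fun n => g n x₀) '' Aᶜ) := key y Aᶜ hy
    rw [hxy] at hxv
    exact closure_sep_disjoint hδ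
      (by rintro _ ⟨n, hn, rfl⟩ _ ⟨m, hm, rfl⟩; exact hsep n hn m hm) hxv hyv
  exact ⟨(Continuous.homeoOfEquivCompactToT2
    (f := Equiv.ofBijective e ⟨hinj, hsurj⟩) he).symm⟩

section Run

attribute [local instance] Classical.propDecidable

variable {X Mv : Type*} [MetricSpace Mv]

/-- `x` is `(ε,c₀,c₁)`-bad along `L`: the two closed balls of radius `ε/4` around the
`(3ε/4)`-separated centers `c₀ c₁` are both visited infinitely often by `(f n x)_{n ∈ L}`. -/
def RBad (f : ℕ → X → Mv) (ε : ℝ) (c₀ c₁ : Mv) (x : X) (L : Set ℕ) : Prop :=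
  3/4 * ε ≤ dist c₀ c₁ ∧ {n ∈ L | f n x ∈ Metric.closedBall c₀ (ε/4)}.Infinite ∧
    {n ∈ L | f n x ∈ Metric.closedBall c₁ (ε/4)}.Infinite

lemma RBad.mono {f : ℕ → X → Mv} {ε : ℝ} {c₀ c₁ : Mv} {x : X} {L L' : Set ℕ}
    (h : RBad f ε c₀ c₁ x L) (hLL : L ⊆ L') : RBad f ε c₀ c₁ x L' :=
  ⟨h.1, h.2.1.mono (fun _ hn => ⟨hLL hn.1, hn.2⟩), h.2.2.mono (fun _ hn => ⟨hLL hn.1, hn.2⟩)⟩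

lemma RBad.almost {f : ℕ → X → Mv} {ε : ℝ} {c₀ c₁ : Mv} {x : X} {L L' : Set ℕ}
    (h : RBad f ε c₀ c₁ x L) (hfin : (L \ L').Finite) : RBad f ε c₀ c₁ x L' := by
  refine ⟨h.1, ((h.2.1.diff hfin).mono ?_), ((h.2.2.diff hfin).mono ?_)⟩ <;>
  · rintro n ⟨⟨hnL, hball⟩, hnd⟩
    refine ⟨?_, hball⟩
    by_contra hn'
    exact hnd ⟨hnL, hn'⟩

/-- Badness for a coded reason `r = (p, q, k)`: scale `1/(k+1)`, centers `tv p`, `tv q`. -/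
def rbadOf (f : ℕ → X → Mv) (tv : ℕ → Mv) (r : ℕ × ℕ × ℕ) (x : X) (L : Set ℕ) : Prop :=
  RBad f (1/(r.2.2+1)) (tv r.1) (tv r.2.1) x L

lemma rbadOf.mono {f : ℕ → X → Mv} {tv : ℕ → Mv} {r : ℕ × ℕ × ℕ} {x : X} {L L' : Set ℕ}
    (h : rbadOf f tv r x L) (hLL : L ⊆ L') : rbadOf f tv r x L' := RBad.mono h hLL

lemma rbadOf.almost {f : ℕ → X → Mv} {tv : ℕ → Mv} {r : ℕ × ℕ × ℕ} {x : X} {L L' : Set ℕ}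
    (h : rbadOf f tv r x L) (hfin : (L \ L').Finite) : rbadOf f tv r x L' := RBad.almost h hfin

/-- Scheduler enumerating all pairs (basis index, reason). -/
def sched : ℕ → ℕ × ℕ × ℕ × ℕ := Denumerable.ofNat _

lemma sched_surj : ∀ v : ℕ × ℕ × ℕ × ℕ, ∃ t, sched t = v :=
  fun v => ⟨Encodable.encode v, Denumerable.ofNat_encode v⟩

/-- The exhaustion process: at each step, if the scheduled basis element can be made
uniformly non-bad (for the scheduled reason) along an infinite subset of the current index
set, remove it and refine the index set. -/
noncomputable def run (f : ℕ → X → Mv) (B : ℕ → Set X) (tv : ℕ → Mv) :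
    ℕ → ((ℕ × ℕ × ℕ) → Set X) × Set ℕ
  | 0 => (fun _ => Set.univ, Set.univ)
  | (t+1) =>
      let s := run f B tv t
      if h : ∃ L : Set ℕ, L ⊆ s.2 ∧ L.Infinite ∧
          ∀ x ∈ B (sched t).1 ∩ s.1 (sched t).2, ¬ rbadOf f tv (sched t).2 x L
      then (Function.update s.1 (sched t).2 (s.1 (sched t).2 \ B (sched t).1), h.choose)
      else s

variable (f : ℕ → X → Mv) (B : ℕ → Set X) (tv : ℕ → Mv)

lemma run_M_infinite : ∀ t, (run f B tv t).2.Infinite := by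
  intro t
  induction t with
  | zero => exact Set.infinite_univ
  | succ t ih =>
      rw [run]
      split
      · next h => exact h.choose_spec.2.1
      · exact ih

lemma run_M_succ_subset (t : ℕ) : (run f B tv (t+1)).2 ⊆ (run f B tv t).2 := by
  rw [run]
  split
  · next h => exact h.choose_spec.1
  · exact subset_rfl

lemma run_M_antitone : ∀ {t t' : ℕ}, t ≤ t' → (run f B tv t').2 ⊆ (run f B tv t).2 := by
  have h := antitone_nat_of_succ_le (f := fun t => ((run f B tv t).2 : Set ℕ))
    (fun n => run_M_succ_subset f B tv n)
  intro t t' htt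
  exact h htt

lemma run_F_succ_subset (t : ℕ) (r : ℕ × ℕ × ℕ) :
    (run f B tv (t+1)).1 r ⊆ (run f B tv t).1 r := by
  rw [run]
  split
  · next h =>
      by_cases hr : (sched t).2 = r
      · subst hr; dsimp only; rw [Function.update_self]; exact diff_subset
      · dsimp only; rw [Function.update_of_ne (fun hc => hr hc.symm)]
  · exact subset_rfl

lemma run_removal {t : ℕ} {r : ℕ × ℕ × ℕ} {x : X}
    (hx : x ∈ (run f B tv t).1 r) (hx' : x ∉ (run f B tv (t+1)).1 r) :
    x ∈ B (sched t).1 ∧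
      ∀ y ∈ B (sched t).1 ∩ (run f B tv t).1 r, ¬ rbadOf f tv r y ((run f B tv (t+1)).2) := by
  rw [run] at hx'
  rw [run]
  split at hx'
  · next h =>
      by_cases hr : (sched t).2 = r
      · subst hr
        dsimp only at hx'
        rw [Function.update_self] at hx'
        have hxB : x ∈ B (sched t).1 := by
          by_contra hc
          exact hx' ⟨hx, hc⟩
        refine ⟨hxB, ?_⟩
        rw [dif_pos h]
        exact h.choose_spec.2.2
      · dsimp only at hx'
        rw [Function.update_of_ne (fun hc => hr hc.symm)] at hx'
        exact absurd hx hx'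
  · exact absurd hx hx'

/-- Diagonal sequence through the nested index sets. -/
noncomputable def diag : ℕ → ℕ
  | 0 => (run_M_infinite f B tv 0).nonempty.choose
  | (t+1) => ((run_M_infinite f B tv (t+1)).exists_gt (diag t)).choose

lemma diag_mem (t : ℕ) : diag f B tv t ∈ (run f B tv t).2 := by
  cases t with
  | zero => exact (run_M_infinite f B tv 0).nonempty.choose_spec
  | succ t => exact ((run_M_infinite f B tv (t+1)).exists_gt (diag f B tv t)).choose_spec.1

lemma diag_strictMono : StrictMono (diag f B tv) :=
  strictMono_nat_of_lt_succ fun t =>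
    ((run_M_infinite f B tv (t+1)).exists_gt (diag f B tv t)).choose_spec.2

lemma diag_tail (t : ℕ) : (range (diag f B tv) \ (run f B tv t).2).Finite := by
  refine ((Set.finite_Iio t).image (diag f B tv)).subset ?_
  rintro n ⟨⟨s, rfl⟩, hn⟩
  refine ⟨s, ?_, rfl⟩
  by_contra hs
  simp only [mem_Iio, not_lt] at hs
  exact hn (run_M_antitone f B tv hs (diag_mem f B tv s))

/-- The residual set for reason `r`. -/
def Pset (r : ℕ × ℕ × ℕ) : Set X := ⋂ t, (run f B tv t).1 r

lemma Pset_subset (r : ℕ × ℕ × ℕ) (t : ℕ) : Pset f B tv r ⊆ (run f B tv t).1 r :=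
  iInter_subset _ t

/-- If `x` eventually leaves `F · r`, then `x` is non-bad along any subset of the diagonal. -/
lemma not_bad_of_removed {r : ℕ × ℕ × ℕ} {x : X} (hx : x ∉ Pset f B tv r)
    {L : Set ℕ} (hL : L ⊆ range (diag f B tv)) : ¬ rbadOf f tv r x L := by
  intro hbad
  have hex : ∃ t, x ∉ (run f B tv t).1 r := by
    by_contra hc
    push_neg at hc
    exact hx (mem_iInter.mpr hc)
  set N := Nat.find hex with hNdef
  have hN : x ∉ (run f B tv N).1 r := Nat.find_spec hex
  have hN0 : N ≠ 0 := by
    intro hc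
    rw [hc] at hN
    exact hN (by rw [run]; trivial)
  obtain ⟨t, hNt⟩ : ∃ t, N = t + 1 := ⟨N - 1, (Nat.succ_pred_eq_of_ne_zero hN0).symm⟩
  rw [hNt] at hN
  have hxt : x ∈ (run f B tv t).1 r := by
    by_contra hc
    have := Nat.find_min hex (by omega : t < N)
    exact this hc
  obtain ⟨hxB, hall⟩ := run_removal f B tv hxt hN
  refine hall x ⟨hxB, hxt⟩ (hbad.almost ?_)
  exact (diag_tail f B tv (t+1)).subset (fun n hn => ⟨hL hn.1, hn.2⟩)

/-- Claim A: if all residual sets are empty, no point is bad along the diagonal. -/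
lemma claimA (hall : ∀ r, Pset f B tv r = ∅) (x : X) (r : ℕ × ℕ × ℕ) :
    ¬ rbadOf f tv r x (range (diag f B tv)) := by
  refine not_bad_of_removed f B tv ?_ subset_rfl
  rw [hall r]
  exact notMem_empty x

/-- Claim B: a nonempty residual set is hereditarily bad along subsets of the diagonal. -/
lemma claimB {r : ℕ × ℕ × ℕ} {i : ℕ} (hne : (B i ∩ Pset f B tv r).Nonempty)
    {L : Set ℕ} (hL : L ⊆ range (diag f B tv)) (hLi : L.Infinite) :
    ∃ x ∈ B i ∩ Pset f B tv r, rbadOf f tv r x L := by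
  obtain ⟨t, ht⟩ := sched_surj (i, r)
  have hti : (sched t).1 = i := by rw [ht]
  have htr : (sched t).2 = r := by rw [ht]
  have hfail : ¬ ∃ L' : Set ℕ, L' ⊆ (run f B tv t).2 ∧ L'.Infinite ∧
      ∀ x ∈ B (sched t).1 ∩ (run f B tv t).1 (sched t).2,
        ¬ rbadOf f tv (sched t).2 x L' := by
    intro h
    obtain ⟨z, hzB, hzP⟩ := hne
    have hz1 : z ∈ (run f B tv (t+1)).1 r := Pset_subset f B tv r (t+1) hzP
    rw [run, dif_pos h] at hz1
    dsimp only at hz1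
    rw [← htr, Function.update_self] at hz1
    exact hz1.2 (hti ▸ hzB)
  push_neg at hfail
  rw [hti, htr] at hfail
  have hfin : (L \ (run f B tv t).2).Finite :=
    (diag_tail f B tv t).subset (fun n hn => ⟨hL hn.1, hn.2⟩)
  have hinf : (L ∩ (run f B tv t).2).Infinite := by
    have heq : L \ (L \ (run f B tv t).2) = L ∩ (run f B tv t).2 := by
      ext n; simp only [mem_diff, mem_inter_iff, not_and, not_not]; tauto
    rw [← heq]
    exact hLi.diff hfin
  obtain ⟨x, ⟨hxB, hxF⟩, hbad⟩ := hfail (L ∩ (run f B tv t).2) inter_subset_right hinf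
  have hbadL : rbadOf f tv r x L := hbad.mono inter_subset_left
  refine ⟨x, ⟨hxB, ?_⟩, hbadL⟩
  by_contra hxP
  exact not_bad_of_removed f B tv hxP (inter_subset_left.trans hL) hbad

end Run

section CauchyCase

variable {X : Type*} [TopologicalSpace X] {Mv : Type*} [MetricSpace Mv]

lemma eval_image_compact {f : ℕ → X → Mv} (hcomp : IsCompact (closure (range f))) (x : X) :
    IsCompact ((fun h : X → Mv => h x) '' closure (range f)) :=
  hcomp.image (continuous_apply x)

lemma mem_S_of_dense {f : ℕ → X → Mv} (hf : ∀ n, Continuous (f n))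
    {u₀ : ℕ → X} (hu₀ : DenseRange u₀) (n : ℕ) (y : X) :
    f n y ∈ closure (range (fun e => f (Nat.unpair e).1 (u₀ (Nat.unpair e).2))) := by
  have hy : y ∈ closure (range u₀) := hu₀ y
  have h1 : f n y ∈ closure (f n '' range u₀) :=
    image_closure_subset_closure_image (hf n) ⟨y, hy, rfl⟩
  refine closure_mono ?_ h1
  rintro _ ⟨_, ⟨j, rfl⟩, rfl⟩
  exact ⟨Nat.pair n j, by simp [Nat.unpair_pair]⟩

/-- If `x` is not bad for any reason along `range a`, then `(f (a j) x)_j` is Cauchy. -/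
lemma cauchy_of_not_bad {f : ℕ → X → Mv} (hf : ∀ n, Continuous (f n))
    (hcomp : IsCompact (closure (range f)))
    {u₀ : ℕ → X} (hu₀ : DenseRange u₀)
    {a : ℕ → ℕ} (ha : StrictMono a) (x : X)
    (hnb : ∀ r : ℕ × ℕ × ℕ,
      ¬ rbadOf f (fun e => f (Nat.unpair e).1 (u₀ (Nat.unpair e).2)) r x (range a)) :
    CauchySeq (fun j => f (a j) x) := by
  set tv : ℕ → Mv := fun e => f (Nat.unpair e).1 (u₀ (Nat.unpair e).2) with htv
  by_contra hC
  rw [Metric.cauchySeq_iff] at hC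
  push_neg at hC
  obtain ⟨ε₀, hε₀, hK⟩ := hC
  obtain ⟨k, hk⟩ := exists_nat_one_div_lt hε₀
  set ε : ℝ := 1/((k:ℝ)+1) with hεdef
  have hε : 0 < ε := by positivity
  have hεε₀ : ε < ε₀ := hk
  choose m' hm' n' hn' hd using hK
  -- time points
  set N : ℕ → ℕ := fun j => Nat.rec 0 (fun _ prev => max (m' prev) (n' prev) + 1) j with hN
  have hNsucc : ∀ j, N (j+1) = max (m' (N j)) (n' (N j)) + 1 := fun j => rfl
  set ms : ℕ → ℕ := fun j => m' (N j) with hms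
  set ns : ℕ → ℕ := fun j => n' (N j) with hns
  have hms_mono : StrictMono ms := by
    apply strictMono_nat_of_lt_succ
    intro j
    show m' (N j) < m' (N (j+1))
    have key : m' (N j) < N (j+1) := by rw [hNsucc]; omega
    exact lt_of_lt_of_le key (hm' (N (j+1)))
  have hns_mono : StrictMono ns := by
    apply strictMono_nat_of_lt_succ
    intro j
    show n' (N j) < n' (N (j+1))
    have key : n' (N j) < N (j+1) := by rw [hNsucc]; omega
    exact lt_of_lt_of_le key (hn' (N (j+1)))
  set u : ℕ → Mv := fun j => f (a (ms j)) x with hu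
  set v : ℕ → Mv := fun j => f (a (ns j)) x with hv
  have hduv : ∀ j, ε₀ ≤ dist (u j) (v j) := fun j => hd (N j)
  set Kc : Set Mv := (fun h : X → Mv => h x) '' closure (range f) with hKc
  have hKcc : IsCompact Kc := eval_image_compact hcomp x
  have humem : ∀ j, u j ∈ Kc := fun j => ⟨f (a (ms j)), subset_closure (mem_range_self _), rfl⟩
  have hvmem : ∀ j, v j ∈ Kc := fun j => ⟨f (a (ns j)), subset_closure (mem_range_self _), rfl⟩
  obtain ⟨A₀, hA₀, ψ₁, hψ₁, hconv₁⟩ := hKcc.tendsto_subseq humem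
  obtain ⟨B₀, hB₀, ψ₂, hψ₂, hconv₂⟩ := hKcc.tendsto_subseq (fun j => hvmem (ψ₁ j))
  set ρ : ℕ → ℕ := ψ₁ ∘ ψ₂ with hρ
  have hρmono : StrictMono ρ := hψ₁.comp hψ₂
  have hconv₁' : Tendsto (fun j => u (ρ j)) atTop (𝓝 A₀) :=
    hconv₁.comp hψ₂.tendsto_atTop
  have hconv₂' : Tendsto (fun j => v (ρ j)) atTop (𝓝 B₀) := hconv₂
  have hdist : ε₀ ≤ dist A₀ B₀ :=
    ge_of_tendsto (hconv₁'.dist hconv₂') (Eventually.of_forall (fun j => hduv (ρ j)))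
  -- cluster values lie in S
  have hKS : Kc ⊆ closure (range tv) := by
    rintro _ ⟨h, hh, rfl⟩
    have h1 : h x ∈ closure ((fun g : X → Mv => g x) '' range f) :=
      image_closure_subset_closure_image (continuous_apply x) ⟨h, hh, rfl⟩
    refine closure_minimal ?_ isClosed_closure h1
    rintro _ ⟨_, ⟨n, rfl⟩, rfl⟩
    exact mem_S_of_dense hf hu₀ n x
  obtain ⟨cp, ⟨p, rfl⟩, hcp⟩ := Metric.mem_closure_iff.mp (hKS hA₀) (ε/8) (by positivity)
  obtain ⟨cq, ⟨q, rfl⟩, hcq⟩ := Metric.mem_closure_iff.mp (hKS hB₀) (ε/8) (by positivity)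
  apply hnb (p, q, k)
  have hεface : (1 : ℝ)/((p, q, k).2.2+1) = ε := by rw [hεdef]
  rw [rbadOf, hεface]
  refine ⟨?_, ?_, ?_⟩
  · -- admissibility
    have htri := dist_triangle4 A₀ (tv p) (tv q) B₀
    have h1 : dist A₀ (tv p) < ε/8 := hcp
    have h2 : dist B₀ (tv q) < ε/8 := hcq
    rw [dist_comm B₀ (tv q)] at h2
    simp only []
    linarith
  · -- first ball infinitely often
    obtain ⟨J, hJ⟩ := (Metric.tendsto_atTop.mp hconv₁') (ε/8) (by positivity)
    refine infinite_of_injective_forall_mem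
      (f := fun j : ℕ => a (ms (ρ (J + j)))) ?_ ?_
    · intro j₁ j₂ h12
      have := ha.injective h12
      have := hms_mono.injective this
      have := hρmono.injective this
      omega
    · intro j
      refine ⟨mem_range_self _, ?_⟩
      have h1 : dist (f (a (ms (ρ (J + j)))) x) A₀ < ε/8 := hJ (J + j) (by omega)
      have hres : dist (f (a (ms (ρ (J + j)))) x) (tv p) < ε/4 := by
        have htri := dist_triangle (f (a (ms (ρ (J + j)))) x) A₀ (tv p)
        linarith
      exact Metric.mem_closedBall.mpr (le_of_lt hres)
  · -- second ball infinitely often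
    obtain ⟨J, hJ⟩ := (Metric.tendsto_atTop.mp hconv₂') (ε/8) (by positivity)
    refine infinite_of_injective_forall_mem
      (f := fun j : ℕ => a (ns (ρ (J + j)))) ?_ ?_
    · intro j₁ j₂ h12
      have := ha.injective h12
      have := hns_mono.injective this
      have := hρmono.injective this
      omega
    · intro j
      refine ⟨mem_range_self _, ?_⟩
      have h1 : dist (f (a (ns (ρ (J + j)))) x) B₀ < ε/8 := hJ (J + j) (by omega)
      have hres : dist (f (a (ns (ρ (J + j)))) x) (tv q) < ε/4 := by
        have htri := dist_triangle (f (a (ns (ρ (J + j)))) x) B₀ (tv q)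
        linarith
      exact Metric.mem_closedBall.mpr (le_of_lt hres)

end CauchyCase

/-- All boolean lists of a given length. -/
def allLists : ℕ → List (List Bool)
  | 0 => [[]]
  | (n+1) => (allLists n).flatMap (fun σ => [σ ++ [false], σ ++ [true]])

lemma length_of_mem_allLists : ∀ (n : ℕ) (σ : List Bool), σ ∈ allLists n → σ.length = n := by
  intro n
  induction n with
  | zero =>
      intro σ hσ
      simp only [allLists, List.mem_singleton] at hσ
      subst hσ; rfl
  | succ n ih =>
      intro σ hσ
      rw [allLists, List.mem_flatMap] at hσ
      obtain ⟨τ, hτ, hmem⟩ := hσ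
      have := ih τ hτ
      simp only [List.mem_cons, List.not_mem_nil, or_false] at hmem
      rcases hmem with h | h <;> (subst h; simp [this])

lemma mem_allLists : ∀ (n : ℕ) (σ : List Bool), σ.length = n → σ ∈ allLists n := by
  intro n
  induction n with
  | zero =>
      intro σ hσ
      rw [List.length_eq_zero_iff] at hσ
      subst hσ
      simp [allLists]
  | succ n ih =>
      intro σ hσ
      have hne : σ ≠ [] := by
        intro hc; rw [hc] at hσ; simp at hσ
      have hdec : σ.dropLast ++ [σ.getLast hne] = σ := List.dropLast_append_getLast hne
      have hlen : σ.dropLast.length = n := by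
        have := List.length_dropLast (xs := σ)
        omega
      rw [allLists, List.mem_flatMap]
      refine ⟨σ.dropLast, ih _ hlen, ?_⟩
      rcases Bool.eq_false_or_eq_true (σ.getLast hne) with hb | hb <;>
        · rw [← hdec, hb]; simp

section Tree

attribute [local instance] Classical.propDecidable

variable {X : Type*} [MetricSpace X] {Mv : Type*} [MetricSpace Mv]

variable (f : ℕ → X → Mv) (P : Set X) (cp cq : Mv) (ε' : ℝ) (D₀ : Set ℕ)

/-- Hereditary badness hypothesis for the tree construction. -/
def HB : Prop :=
  ∀ c ∈ P, ∀ ρ : ℝ, 0 < ρ → ∀ L ⊆ D₀, L.Infinite →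
    ∃ x ∈ Metric.ball c ρ ∩ P, {n ∈ L | f n x ∈ Metric.closedBall cp (ε'/4)}.Infinite ∧
      {n ∈ L | f n x ∈ Metric.closedBall cq (ε'/4)}.Infinite

lemma treeFR (hHB : HB f P cp cq ε' D₀) (reqs : List (X × ℝ))
    (hreqs : ∀ pr ∈ reqs, 0 < pr.2 ∧ pr.1 ∈ P)
    {L : Set ℕ} (hL : L ⊆ D₀) (hLi : L.Infinite) :
    ∃ L', L' ⊆ L ∧ L'.Infinite ∧ ∀ pr ∈ reqs,
      ∃ w₀ ∈ Metric.ball pr.1 pr.2 ∩ P, ∃ w₁ ∈ Metric.ball pr.1 pr.2 ∩ P,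
        (∀ n ∈ L', f n w₀ ∈ Metric.closedBall cp (ε'/4)) ∧
        (∀ n ∈ L', f n w₁ ∈ Metric.closedBall cq (ε'/4)) := by
  induction reqs with
  | nil => exact ⟨L, subset_rfl, hLi, fun pr hpr => absurd hpr List.not_mem_nil⟩
  | cons pr₀ rest ih =>
      obtain ⟨L₁, hL₁L, hL₁i, hrest⟩ := ih (fun pr hpr => hreqs pr (List.mem_cons_of_mem _ hpr))
      have hpr₀ := hreqs pr₀ List.mem_cons_self
      obtain ⟨w₀, hw₀, hG₀, _⟩ :=
        hHB pr₀.1 hpr₀.2 pr₀.2 hpr₀.1 L₁ (hL₁L.trans hL) hL₁i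
      set G₀ : Set ℕ := {n ∈ L₁ | f n w₀ ∈ Metric.closedBall cp (ε'/4)} with hG₀def
      obtain ⟨w₁, hw₁, _, hG₁⟩ :=
        hHB pr₀.1 hpr₀.2 pr₀.2 hpr₀.1 G₀ ((sep_subset _ _).trans (hL₁L.trans hL)) hG₀
      set G₁ : Set ℕ := {n ∈ G₀ | f n w₁ ∈ Metric.closedBall cq (ε'/4)} with hG₁def
      refine ⟨G₁, ?_, hG₁, ?_⟩
      · exact ((sep_subset _ _).trans ((sep_subset _ _).trans hL₁L))
      · intro pr hpr
        rcases List.mem_cons.mp hpr with hpr | hpr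
        · subst hpr
          refine ⟨w₀, hw₀, w₁, hw₁, ?_, ?_⟩
          · intro n hn
            exact hn.1.2
          · intro n hn
            exact hn.2
        · obtain ⟨a₀, ha₀, a₁, ha₁, h₀, h₁⟩ := hrest pr hpr
          exact ⟨a₀, ha₀, a₁, ha₁,
            fun n hn => h₀ n hn.1.1, fun n hn => h₁ n hn.1.1⟩

/-- State of the tree construction. -/
structure TState (X : Type*) where
  k : ℕ
  L : Set ℕ
  nds : List Bool → X × ℝ

/-- Transition property between consecutive levels. -/
def TOk (n : ℕ) (s s' : TState X) : Prop :=
  s'.L ⊆ s.L ∧ s'.L.Infinite ∧ (∀ j ∈ s'.L, s'.k < j) ∧ s.k < s'.k ∧ s'.k ∈ s.L ∧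
  ∀ σ : List Bool, σ.length = n → ∀ b : Bool,
    0 < (s'.nds (σ ++ [b])).2 ∧ (s'.nds (σ ++ [b])).2 ≤ (1/2)^(n+1) ∧
    (s'.nds (σ ++ [b])).1 ∈ P ∧
    Metric.closedBall (s'.nds (σ ++ [b])).1 (s'.nds (σ ++ [b])).2 ⊆
      Metric.ball (s.nds σ).1 (s.nds σ).2 ∧
    ∀ x ∈ Metric.closedBall (s'.nds (σ ++ [b])).1 (s'.nds (σ ++ [b])).2,
      f s'.k x ∈ Metric.closedBall (if b then cq else cp) (ε'/3)

/-- Well-formedness at level `n`. -/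
def TWF (n : ℕ) (s : TState X) : Prop :=
  s.L ⊆ D₀ ∧ s.L.Infinite ∧ (∀ j ∈ s.L, s.k < j) ∧
  ∀ σ : List Bool, σ.length = n →
    0 < (s.nds σ).2 ∧ (s.nds σ).2 ≤ (1/2)^n ∧ (s.nds σ).1 ∈ P

variable {f P cp cq ε' D₀}

lemma tree_step (hε' : 0 < ε') (hcont : ∀ n, Continuous (f n))
    (hHB : HB f P cp cq ε' D₀) (n : ℕ) (s : TState X) (hs : TWF P D₀ n s) :
    ∃ s', TOk f P cp cq ε' n s s' ∧ TWF P D₀ (n+1) s' := by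
  obtain ⟨hsD, hsi, hsk, hnodes⟩ := hs
  obtain ⟨L', hL'sub, hL'i, hw⟩ := treeFR f P cp cq ε' D₀ hHB
    ((allLists n).map s.nds)
    (by
      intro pr hpr
      rw [List.mem_map] at hpr
      obtain ⟨σ, hσ, rfl⟩ := hpr
      have hlen : σ.length = n := length_of_mem_allLists n σ hσ
      exact ⟨(hnodes σ hlen).1, (hnodes σ hlen).2.2⟩)
    hsD hsi
  obtain ⟨k, hkL', hkgt⟩ := hL'i.exists_gt s.k
  -- children via choice
  have hchild : ∀ σ : List Bool, σ.length = n → ∀ b : Bool, ∃ cρ : X × ℝ,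
      0 < cρ.2 ∧ cρ.2 ≤ (1/2)^(n+1) ∧ cρ.1 ∈ P ∧
      Metric.closedBall cρ.1 cρ.2 ⊆ Metric.ball (s.nds σ).1 (s.nds σ).2 ∧
      ∀ x ∈ Metric.closedBall cρ.1 cρ.2,
        f k x ∈ Metric.closedBall (if b then cq else cp) (ε'/3) := by
    intro σ hσ b
    obtain ⟨w₀, hw₀, w₁, hw₁, hf₀, hf₁⟩ :=
      hw (s.nds σ) (List.mem_map.mpr ⟨σ, mem_allLists n σ hσ, rfl⟩)
    set w : X := if b then w₁ else w₀ with hwdef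
    have hwball : w ∈ Metric.ball (s.nds σ).1 (s.nds σ).2 ∧ w ∈ P := by
      cases b <;> simp only [hwdef, if_true, if_false, Bool.false_eq_true] <;>
        first
          | exact ⟨hw₀.1, hw₀.2⟩
          | exact ⟨hw₁.1, hw₁.2⟩
    have hwf : f k w ∈ Metric.closedBall (if b then cq else cp) (ε'/4) := by
      cases b <;> simp only [hwdef, if_true, if_false, Bool.false_eq_true]
      · exact hf₀ k hkL'
      · exact hf₁ k hkL'
    obtain ⟨δ₁, hδ₁, hδ⟩ := Metric.continuous_iff.mp (hcont k) w (ε'/12) (by linarith)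
    have hdw : dist w (s.nds σ).1 < (s.nds σ).2 := Metric.mem_ball.mp hwball.1
    set ρ' : ℝ := min (δ₁/2) (min ((1/2)^(n+1)) (((s.nds σ).2 - dist w (s.nds σ).1)/2))
      with hρ'def
    have hρ'pos : 0 < ρ' := by
      apply lt_min
      · linarith
      · apply lt_min
        · positivity
        · linarith
    refine ⟨(w, ρ'), hρ'pos, ?_, hwball.2, ?_, ?_⟩
    · exact (min_le_right _ _).trans (min_le_left _ _)
    · intro y hy
      rw [Metric.mem_closedBall] at hy
      rw [Metric.mem_ball]
      have h1 : ρ' ≤ ((s.nds σ).2 - dist w (s.nds σ).1)/2 :=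
        (min_le_right _ _).trans (min_le_right _ _)
      calc dist y (s.nds σ).1 ≤ dist y w + dist w (s.nds σ).1 := dist_triangle _ _ _
      _ < (s.nds σ).2 := by linarith
    · intro y hy
      rw [Metric.mem_closedBall] at hy ⊢
      have h1 : ρ' ≤ δ₁/2 := min_le_left _ _
      have h2 : dist (f k y) (f k w) < ε'/12 := hδ y (by linarith [Metric.mem_closedBall.mp hy])
      have h3 : dist (f k w) (if b then cq else cp) ≤ ε'/4 := hwf
      calc dist (f k y) (if b then cq else cp)
          ≤ dist (f k y) (f k w) + dist (f k w) (if b then cq else cp) := dist_triangle _ _ _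
      _ ≤ ε'/3 := by linarith
  choose F hF using hchild
  set nds' : List Bool → X × ℝ := fun σ' =>
    if h : σ'.length = n + 1 then
      F σ'.dropLast (by have := List.length_dropLast (xs := σ'); omega)
        (σ'.getLast (by intro hc; rw [hc] at h; simp at h))
    else s.nds σ' with hnds'
  have hnds'spec : ∀ (σ : List Bool) (hσ : σ.length = n) (b : Bool),
      nds' (σ ++ [b]) = F σ hσ b := by
    intro σ hσ b
    have hlen2 : (σ ++ [b]).length = n + 1 := by simp [hσ]
    rw [hnds']
    dsimp only
    rw [dif_pos hlen2]
    have e1 : (σ ++ [b]).dropLast = σ := List.dropLast_concat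
    simp only [e1, List.getLast_concat]
  refine ⟨⟨k, {j ∈ L' | k < j}, nds'⟩, ⟨?_, ?_, ?_, ?_, ?_, ?_⟩, ?_, ?_, ?_, ?_⟩
  · exact (sep_subset _ _).trans hL'sub
  · refine (hL'i.diff (Set.finite_Iic k)).mono ?_
    rintro j ⟨hj, hj'⟩
    exact ⟨hj, by simpa using hj'⟩
  · intro j hj
    exact hj.2
  · exact hkgt
  · exact hL'sub hkL'
  · intro σ hσ b
    dsimp only
    rw [hnds'spec σ hσ b]
    exact hF σ hσ b
  · exact ((sep_subset _ _).trans hL'sub).trans hsD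
  · refine (hL'i.diff (Set.finite_Iic k)).mono ?_
    rintro j ⟨hj, hj'⟩
    exact ⟨hj, by simpa using hj'⟩
  · intro j hj
    exact hj.2
  · intro σ' hσ'
    have hne : σ' ≠ [] := by intro hc; rw [hc] at hσ'; simp at hσ'
    have hdec : σ'.dropLast ++ [σ'.getLast hne] = σ' := List.dropLast_append_getLast hne
    have hlen : σ'.dropLast.length = n := by have := List.length_dropLast (xs := σ'); omega
    dsimp only
    rw [← hdec, hnds'spec _ hlen _]
    exact ⟨(hF _ _ _).1, (hF _ _ _).2.1, (hF _ _ _).2.2.1⟩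

end Tree

section Tree2

attribute [local instance] Classical.propDecidable

variable {X : Type*} [MetricSpace X] {Mv : Type*} [MetricSpace Mv]

/-- The full tree construction by recursion on levels. -/
noncomputable def TS (f : ℕ → X → Mv) (P : Set X) (cp cq : Mv) (ε' : ℝ) (D₀ : Set ℕ)
    (z : X) : ℕ → TState X
  | 0 => ⟨0, {j ∈ D₀ | 0 < j}, fun _ => (z, 1)⟩
  | (n+1) =>
      if h : ∃ s', TOk f P cp cq ε' n (TS f P cp cq ε' D₀ z n) s' ∧
          TWF P D₀ (n+1) s' then h.choose
      else TS f P cp cq ε' D₀ z n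

variable {f : ℕ → X → Mv} {P : Set X} {cp cq : Mv} {ε' : ℝ} {D₀ : Set ℕ} {z : X}

lemma TS_WF (hz : z ∈ P) (hD₀ : D₀.Infinite) (hε' : 0 < ε')
    (hcont : ∀ n, Continuous (f n)) (hHB : HB f P cp cq ε' D₀) :
    ∀ n, TWF P D₀ n (TS f P cp cq ε' D₀ z n) := by
  intro n
  induction n with
  | zero =>
      rw [TS]
      refine ⟨sep_subset _ _, ?_, fun j hj => hj.2, ?_⟩
      · refine (hD₀.diff (Set.finite_Iic 0)).mono ?_
        rintro j ⟨hj, hj'⟩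
        simp only [mem_Iic, not_le] at hj'
        exact ⟨hj, hj'⟩
      · intro σ hσ
        exact ⟨one_pos, by norm_num, hz⟩
  | succ n ih =>
      rw [TS]
      rw [dif_pos (tree_step hε' hcont hHB n _ ih)]
      exact (tree_step hε' hcont hHB n _ ih).choose_spec.2

lemma TS_Ok (hz : z ∈ P) (hD₀ : D₀.Infinite) (hε' : 0 < ε')
    (hcont : ∀ n, Continuous (f n)) (hHB : HB f P cp cq ε' D₀) (n : ℕ) :
    TOk f P cp cq ε' n (TS f P cp cq ε' D₀ z n) (TS f P cp cq ε' D₀ z (n+1)) := by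
  have ih := TS_WF hz hD₀ hε' hcont hHB n
  rw [TS, dif_pos (tree_step hε' hcont hHB n _ ih)]
  exact (tree_step hε' hcont hHB n _ ih).choose_spec.1

/-- The selected subsequence. -/
noncomputable def Kfun (f : ℕ → X → Mv) (P : Set X) (cp cq : Mv) (ε' : ℝ) (D₀ : Set ℕ)
    (z : X) (a : ℕ) : ℕ := (TS f P cp cq ε' D₀ z (a+1)).k

lemma Kfun_strictMono (hz : z ∈ P) (hD₀ : D₀.Infinite) (hε' : 0 < ε')
    (hcont : ∀ n, Continuous (f n)) (hHB : HB f P cp cq ε' D₀) :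
    StrictMono (Kfun f P cp cq ε' D₀ z) := by
  apply strictMono_nat_of_lt_succ
  intro a
  exact (TS_Ok hz hD₀ hε' hcont hHB (a+1)).2.2.2.1

lemma node_inv (hz : z ∈ P) (hD₀ : D₀.Infinite) (hε' : 0 < ε')
    (hcont : ∀ n, Continuous (f n)) (hHB : HB f P cp cq ε' D₀) :
    ∀ (σ : List Bool) (n : ℕ), σ.length = n → ∀ a, a < n →
      ∀ x ∈ Metric.closedBall ((TS f P cp cq ε' D₀ z n).nds σ).1
        ((TS f P cp cq ε' D₀ z n).nds σ).2,
      f (Kfun f P cp cq ε' D₀ z a) x ∈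
        Metric.closedBall (if σ.getD a false then cq else cp) (ε'/3) := by
  intro σ
  induction σ using List.reverseRecOn with
  | nil => intro n hn a ha; simp at hn; omega
  | append_singleton τ b ih =>
      intro n hn a ha
      have hn' : n = τ.length + 1 := by
        rw [← hn]; simp
      subst hn'
      intro x hx
      have hok := TS_Ok (z := z) hz hD₀ hε' hcont hHB τ.length
      have hclause := hok.2.2.2.2.2 τ rfl b
      rcases Nat.lt_succ_iff_lt_or_eq.mp (by omega : a < τ.length + 1) with ha' | ha'
      · -- use the parent invariant
        have hx' : x ∈ Metric.closedBall
            ((TS f P cp cq ε' D₀ z τ.length).nds τ).1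
            ((TS f P cp cq ε' D₀ z τ.length).nds τ).2 :=
          Metric.ball_subset_closedBall (hclause.2.2.2.1 hx)
        rw [List.getD_append τ [b] false a ha']
        exact ih τ.length rfl a ha' x hx'
      · subst ha'
        have hgd : (τ ++ [b]).getD τ.length false = b := by
          rw [List.getD_append_right _ _ _ _ (le_refl _)]
          simp
        rw [hgd]
        exact hclause.2.2.2.2 x hx

/-- Main output of the tree construction: a strictly monotone subsequence with uniform
two-sided separation for every disjoint pair of index sets. -/
lemma tree_SEP [CompleteSpace X] (hz : z ∈ P) (hD₀ : D₀.Infinite) (hε' : 0 < ε')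
    (hsep : 3/4 * ε' ≤ dist cp cq)
    (hcont : ∀ n, Continuous (f n)) (hHB : HB f P cp cq ε' D₀) :
    ∀ A B' : Set ℕ, Disjoint A B' →
      ∃ x : X, ∃ δ : ℝ, 0 < δ ∧ ∀ n ∈ A, ∀ m ∈ B',
        δ ≤ dist (f (Kfun f P cp cq ε' D₀ z n) x) (f (Kfun f P cp cq ε' D₀ z m) x) := by
  intro A B' hAB
  set β : ℕ → Bool := fun n => if n ∈ B' then true else false with hβ
  set σseq : ℕ → List Bool := fun n => Nat.rec [] (fun m ih => ih ++ [β m]) n with hσseq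
  have hσsucc : ∀ n, σseq (n+1) = σseq n ++ [β n] := fun n => rfl
  have hσlen : ∀ n, (σseq n).length = n := by
    intro n
    induction n with
    | zero => rfl
    | succ n ih => rw [hσsucc, List.length_append, ih]; rfl
  have hσgetD : ∀ n a, a < n → (σseq n).getD a false = β a := by
    intro n
    induction n with
    | zero => intro a ha; omega
    | succ n ih =>
        intro a ha
        rcases Nat.lt_succ_iff_lt_or_eq.mp ha with ha' | ha'
        · rw [hσsucc, List.getD_append _ _ _ _ (by rw [hσlen]; exact ha')]
          exact ih a ha'
        · subst ha'
          rw [hσsucc, List.getD_append_right _ _ _ _ (by rw [hσlen])]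
          rw [hσlen]
          simp
  set cb : ℕ → Set X := fun n =>
    Metric.closedBall ((TS f P cp cq ε' D₀ z n).nds (σseq n)).1
      ((TS f P cp cq ε' D₀ z n).nds (σseq n)).2 with hcb
  have hnested : ∀ n, cb (n+1) ⊆ cb n := by
    intro n
    have hok := TS_Ok (z := z) hz hD₀ hε' hcont hHB n
    have hclause := hok.2.2.2.2.2 (σseq n) (hσlen n) (β n)
    intro y hy
    simp only [hcb] at hy ⊢
    rw [hσsucc] at hy
    exact Metric.ball_subset_closedBall (hclause.2.2.2.1 hy)
  have hmono : ∀ {m n : ℕ}, n ≤ m → cb m ⊆ cb n := by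
    have h := antitone_nat_of_succ_le (f := cb) (fun n => hnested n)
    intro m n hnm
    exact h hnm
  have hWF := TS_WF (z := z) hz hD₀ hε' hcont hHB
  have hRpos : ∀ n, 0 < ((TS f P cp cq ε' D₀ z n).nds (σseq n)).2 :=
    fun n => ((hWF n).2.2.2 (σseq n) (hσlen n)).1
  have hRle : ∀ n, ((TS f P cp cq ε' D₀ z n).nds (σseq n)).2 ≤ (1/2)^n :=
    fun n => ((hWF n).2.2.2 (σseq n) (hσlen n)).2.1
  set c : ℕ → X := fun n => ((TS f P cp cq ε' D₀ z n).nds (σseq n)).1 with hc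
  have hcmem : ∀ n, c n ∈ cb n := fun n => Metric.mem_closedBall_self (le_of_lt (hRpos n))
  have hcdist : ∀ n, dist (c n) (c (n+1)) ≤ 1 * (1/2)^n := by
    intro n
    have h1 : c (n+1) ∈ cb n := hnested n (hcmem (n+1))
    have h2 : dist (c (n+1)) (c n) ≤ ((TS f P cp cq ε' D₀ z n).nds (σseq n)).2 :=
      Metric.mem_closedBall.mp h1
    rw [dist_comm, one_mul]
    exact h2.trans (hRle n)
  have hcauchy : CauchySeq c := cauchySeq_of_le_geometric (1/2) 1 (by norm_num) hcdist
  obtain ⟨x, hx⟩ := cauchySeq_tendsto_of_complete hcauchy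
  have hxmem : ∀ n, x ∈ cb n := by
    intro n
    have hcl : IsClosed (cb n) := by
      simp only [hcb]
      exact Metric.isClosed_closedBall
    refine hcl.mem_of_tendsto hx ?_
    rw [eventually_atTop]
    exact ⟨n, fun m hm => hmono hm (hcmem m)⟩
  have hval : ∀ a, f (Kfun f P cp cq ε' D₀ z a) x ∈
      Metric.closedBall (if β a then cq else cp) (ε'/3) := by
    intro a
    have h1 := node_inv (z := z) hz hD₀ hε' hcont hHB (σseq (a+1)) (a+1) (hσlen (a+1)) a
      (by omega) x (by simpa only [hcb] using hxmem (a+1))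
    rwa [hσgetD (a+1) a (by omega)] at h1
  refine ⟨x, ε'/12, by linarith, ?_⟩
  intro n hn m hm
  have hβn : β n = false := by
    rw [hβ]
    simp only [if_neg (Set.disjoint_left.mp hAB hn)]
  have hβm : β m = true := by
    rw [hβ]
    simp only [if_pos hm]
  have h1 : dist (f (Kfun f P cp cq ε' D₀ z n) x) cp ≤ ε'/3 := by
    have := hval n
    rw [hβn] at this
    simpa using this
  have h2 : dist (f (Kfun f P cp cq ε' D₀ z m) x) cq ≤ ε'/3 := by
    have := hval m
    rw [hβm] at this
    simpa using this
  have htri := dist_triangle4 cp (f (Kfun f P cp cq ε' D₀ z n) x)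
    (f (Kfun f P cp cq ε' D₀ z m) x) cq
  have h1' : dist cp (f (Kfun f P cp cq ε' D₀ z n) x) ≤ ε'/3 := by
    rw [dist_comm]; exact h1
  linarith

end Tree2

section Glue

lemma rosenthal_aux {X Mv : Type*} [MetricSpace X] [CompleteSpace X]
    [SecondCountableTopology X] [Nonempty X] [MetricSpace Mv]
    (f : ℕ → X → Mv) (hf : ∀ n, Continuous (f n))
    (hcomp : IsCompact (closure (range f))) :
    (∃ φ : ℕ → ℕ, StrictMono φ ∧ ∀ x : X, CauchySeq (fun n => f (φ n) x)) ∨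
    (∃ φ : ℕ → ℕ, StrictMono φ ∧ ∀ A B : Set ℕ, Disjoint A B →
      ∃ x : X, ∃ δ : ℝ, 0 < δ ∧ ∀ n ∈ A, ∀ m ∈ B,
        δ ≤ dist (f (φ n) x) (f (φ m) x)) := by
  obtain ⟨u₀, hu₀⟩ := TopologicalSpace.exists_dense_seq X
  set tv : ℕ → Mv := fun e => f (Nat.unpair e).1 (u₀ (Nat.unpair e).2) with htv
  obtain ⟨bset, hbc, hbne', hbb⟩ := TopologicalSpace.exists_countable_basis X
  have hbne : bset.Nonempty := by
    obtain ⟨v, hv, _, _⟩ :=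
      hbb.exists_subset_of_mem_open (mem_univ (Classical.arbitrary X)) isOpen_univ
    exact ⟨v, hv⟩
  obtain ⟨B, hB⟩ := hbc.exists_eq_range hbne
  have hbasis : ∀ (U : Set X), IsOpen U → ∀ z ∈ U, ∃ i, z ∈ B i ∧ B i ⊆ U := by
    intro U hU z hz
    obtain ⟨v, hv, hzv, hvU⟩ := hbb.exists_subset_of_mem_open hz hU
    rw [hB] at hv
    obtain ⟨i, rfl⟩ := hv
    exact ⟨i, hzv, hvU⟩
  by_cases hP : ∀ r, Pset f B tv r = ∅
  · left
    refine ⟨diag f B tv, diag_strictMono f B tv, ?_⟩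
    intro x
    exact cauchy_of_not_bad hf hcomp hu₀ (diag_strictMono f B tv) x
      (fun r => claimA f B tv hP x r)
  · right
    push_neg at hP
    obtain ⟨r, hr⟩ := hP
    have hrne : (Pset f B tv r).Nonempty := hr
    have hD₀ : (range (diag f B tv)).Infinite :=
      Set.infinite_range_of_injective (diag_strictMono f B tv).injective
    obtain ⟨z₀, hz₀⟩ := hrne
    obtain ⟨i₀, hi₀, _⟩ := hbasis univ isOpen_univ z₀ (mem_univ z₀)
    obtain ⟨xw, hxw, hbadw⟩ := claimB f B tv (r := r) (i := i₀)
      ⟨z₀, hi₀, hz₀⟩ subset_rfl hD₀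
    have hadm : 3/4 * (1/((r.2.2:ℝ)+1)) ≤ dist (tv r.1) (tv r.2.1) := hbadw.1
    have hε' : (0:ℝ) < 1/((r.2.2:ℝ)+1) := by positivity
    have hHB : HB f (Pset f B tv r) (tv r.1) (tv r.2.1) (1/((r.2.2:ℝ)+1))
        (range (diag f B tv)) := by
      intro c hc ρ hρ L hL hLi
      obtain ⟨i, hci, hiU⟩ := hbasis (Metric.ball c ρ) Metric.isOpen_ball c
        (Metric.mem_ball_self hρ)
      obtain ⟨x, ⟨hxB, hxP⟩, hbad⟩ := claimB f B tv (r := r) (i := i)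
        ⟨c, hci, hc⟩ hL hLi
      exact ⟨x, ⟨hiU hxB, hxP⟩, hbad.2.1, hbad.2.2⟩
    exact ⟨Kfun f (Pset f B tv r) (tv r.1) (tv r.2.1) (1/((r.2.2:ℝ)+1))
        (range (diag f B tv)) z₀,
      Kfun_strictMono hz₀ hD₀ hε' hf hHB,
      tree_SEP hz₀ hD₀ hε' hadm hf hHB⟩

end Glue

/-- **Rosenthal's dichotomy for metric-valued functions.**
Let `X` be a Polish space, `(M, d)` a metric space, and `(fₙ)` a sequence in `C(X, M)` such that
the closure of `{fₙ : n ∈ ω}` in `M^X` is compact.  Then either `(fₙ)` contains a pointwise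
Cauchy subsequence, or `(fₙ)` contains a subsequence whose closure in `M^X` is homeomorphic
to `βω`. -/
theorem rosenthal_dichotomy_metric
    {X M : Type*} [TopologicalSpace X] [PolishSpace X] [MetricSpace M]
    (f : ℕ → X → M) (hf : ∀ n, Continuous (f n))
    (hcomp : IsCompact (closure (Set.range f))) :
    (∃ φ : ℕ → ℕ, StrictMono φ ∧ ∀ x : X, CauchySeq (fun n => f (φ n) x)) ∨
    (∃ φ : ℕ → ℕ, StrictMono φ ∧
      Nonempty (↥(closure (Set.range (f ∘ φ))) ≃ₜ StoneCech ℕ)) := by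
  rcases isEmpty_or_nonempty X with hX | hX
  · left
    exact ⟨id, strictMono_id, fun x => (IsEmpty.false x).elim⟩
  · letI := TopologicalSpace.upgradeIsCompletelyMetrizable X
    rcases rosenthal_aux f hf hcomp with h | ⟨φ, hφ, hSEP⟩
    · left
      exact h
    · right
      refine ⟨φ, hφ, ?_⟩
      have hcomp' : IsCompact (closure (Set.range (f ∘ φ))) :=
        hcomp.of_isClosed_subset isClosed_closure
          (closure_mono (range_comp_subset_range φ f))
      exact beta_criterion (f ∘ φ) hcomp' (fun A B hAB => hSEP A B hAB)
end

section
/- Let X be a compact space, (M,d) a metric space, and let G be a countable subset of C(X,M) such that the closure of G in M^X is compact. If the closure of G in M^X has cardinality at least 2^𝔠 (where 𝔠 is the cardinality of the continuum), then G contains a sequence whose closure in M^X is homeomorphic to βω. -/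
open Filter Topology Set

set_option linter.unusedSectionVars false

namespace BFTAux

universe u v w

variable {T : Type w} [TopologicalSpace T]

/-- A function is *fragmented* if every nonempty closed set has a relatively open nonempty
subset on which the oscillation of `f` is at most `ε`, for every `ε > 0`. -/
def Frag (f : T → ℝ) : Prop :=
  ∀ ε : ℝ, 0 < ε → ∀ P : Set T, IsClosed P → P.Nonempty →
    ∃ O : Set T, IsOpen O ∧ (O ∩ P).Nonempty ∧
      ∀ y ∈ O ∩ P, ∀ y' ∈ O ∩ P, |f y - f y'| ≤ ε

section Count

variable (b : ℕ → Set T) (f : T → ℝ) (ε : ℝ)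

def Good (Q : Set T) (i : ℕ) : Prop :=
  (b i ∩ Q).Nonempty ∧ ∀ y ∈ b i ∩ Q, ∀ y' ∈ b i ∩ Q, |f y - f y'| ≤ ε

noncomputable def drv : Ordinal.{0} → Set T :=
  Ordinal.lt_wf.fix fun o ih =>
    (⋂ (o' : Ordinal.{0}) (h : o' < o), ih o' h) \
      ⋃ i ∈ {i : ℕ | Good b f ε (⋂ (o' : Ordinal.{0}) (h : o' < o), ih o' h) i}, b i

def Rst (o : Ordinal.{0}) : Set T := ⋂ (o' : Ordinal.{0}) (_ : o' < o), drv b f ε o'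

lemma drv_eq (o : Ordinal.{0}) :
    drv b f ε o = Rst b f ε o \ ⋃ i ∈ {i : ℕ | Good b f ε (Rst b f ε o) i}, b i := by
  show Ordinal.lt_wf.fix _ o = _
  rw [WellFounded.fix_eq]
  rfl

lemma Rst_zero : Rst b f ε 0 = univ := by
  simp [Rst]

lemma Rst_anti {o o' : Ordinal.{0}} (h : o ≤ o') : Rst b f ε o' ⊆ Rst b f ε o := by
  intro y hy
  exact mem_iInter₂.2 fun o'' ho'' => mem_iInter₂.1 hy o'' (lt_of_lt_of_le ho'' h)

lemma drv_subset (o : Ordinal.{0}) : drv b f ε o ⊆ Rst b f ε o := by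
  rw [drv_eq]; exact diff_subset

lemma Rst_succ_subset (o : Ordinal.{0}) : Rst b f ε (Order.succ o) ⊆ drv b f ε o := by
  intro y hy
  exact mem_iInter₂.1 hy o (Order.lt_succ o)

lemma mem_Rst_succ {o : Ordinal.{0}} {y : T} (h1 : y ∈ Rst b f ε o) (h2 : y ∈ drv b f ε o) :
    y ∈ Rst b f ε (Order.succ o) := by
  refine mem_iInter₂.2 fun o'' ho'' => ?_
  rcases lt_or_eq_of_le (Order.lt_succ_iff.1 ho'') with h | h
  · exact mem_iInter₂.1 h1 o'' h
  · rwa [h]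

lemma drv_isClosed (hb : ∀ i, IsOpen (b i)) : ∀ o : Ordinal.{0}, IsClosed (drv b f ε o) := by
  intro o
  induction o using Ordinal.induction with
  | h o ih =>
    rw [drv_eq, Set.diff_eq]
    exact IsClosed.inter
      (isClosed_iInter fun o' => isClosed_iInter fun h => ih o' h)
      (isOpen_iUnion fun i => isOpen_iUnion fun _ => hb i).isClosed_compl

lemma Rst_isClosed (hb : ∀ i, IsOpen (b i)) (o : Ordinal.{0}) : IsClosed (Rst b f ε o) :=
  isClosed_iInter fun _ => isClosed_iInter fun _ => drv_isClosed b f ε hb _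

lemma good_inter_drv {o : Ordinal.{0}} {i : ℕ} (hg : Good b f ε (Rst b f ε o) i) :
    b i ∩ drv b f ε o = ∅ := by
  rw [drv_eq]
  ext y
  simp only [mem_inter_iff, mem_diff, mem_empty_iff_false, iff_false, not_and, and_imp]
  intro hyb hyR hnot
  exact hnot (mem_biUnion (show i ∈ {i | Good b f ε (Rst b f ε o) i} from hg) hyb)

lemma exists_good_of_frag
    (hb2 : ∀ O : Set T, ∀ y ∈ O, IsOpen O → ∃ i, y ∈ b i ∧ b i ⊆ O)
    (hf : Frag f) (hε : 0 < ε) {P : Set T} (hP : IsClosed P) (hne : P.Nonempty) :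
    ∃ i, Good b f ε P i := by
  obtain ⟨O, hO, hOP, hdiam⟩ := hf ε hε P hP hne
  obtain ⟨y, hyO, hyP⟩ := hOP
  obtain ⟨i, hyi, hiO⟩ := hb2 O y hyO hO
  exact ⟨i, ⟨⟨y, hyi, hyP⟩,
    fun a ha a' ha' => hdiam a ⟨hiO ha.1, ha.2⟩ a' ⟨hiO ha'.1, ha'.2⟩⟩⟩

noncomputable def dF (hε : 0 < ε) (o : Ordinal.{0}) (i : ℕ) : Option ℚ :=
  letI := Classical.dec (Good b f ε (Rst b f ε o) i)
  if h : Good b f ε (Rst b f ε o) i then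
    some (exists_rat_near (f h.1.choose) hε).choose
  else none

lemma dF_isSome_iff (hε : 0 < ε) (o : Ordinal.{0}) (i : ℕ) :
    (dF b f ε hε o i).isSome ↔ Good b f ε (Rst b f ε o) i := by
  unfold dF
  split <;> simp [*]

lemma dF_spec (hε : 0 < ε) {o : Ordinal.{0}} {i : ℕ} {q : ℚ}
    (h : dF b f ε hε o i = some q) :
    Good b f ε (Rst b f ε o) i ∧ ∃ y ∈ b i ∩ Rst b f ε o, |f y - (q : ℝ)| < ε := by
  unfold dF at h
  split at h
  · rename_i hg
    refine ⟨hg, hg.1.choose, hg.1.choose_spec, ?_⟩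
    have := (exists_rat_near (f hg.1.choose) hε).choose_spec
    rw [← Option.some_inj.1 h]
    exact this
  · exact absurd h (by simp)

lemma dF_none_of_empty (hε : 0 < ε) {o : Ordinal.{0}} (h : Rst b f ε o = ∅) (i : ℕ) :
    dF b f ε hε o i = none := by
  unfold dF
  rw [dif_neg]
  intro hg
  rw [h] at hg
  simpa using hg.1

end Count

lemma Rst_congr (b : ℕ → Set T) (f f' : T → ℝ) (ε : ℝ) (hε : 0 < ε)
    (h : dF b f ε hε = dF b f' ε hε) : ∀ o : Ordinal.{0}, drv b f ε o = drv b f' ε o := by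
  intro o
  induction o using Ordinal.induction with
  | h o ih =>
    have hR : Rst b f ε o = Rst b f' ε o := by
      unfold Rst
      exact Set.iInter_congr fun o' => Set.iInter_congr fun h' => ih o' h'
    rw [drv_eq, drv_eq, ← hR]
    have hset : {i : ℕ | Good b f ε (Rst b f ε o) i} = {i : ℕ | Good b f' ε (Rst b f' ε o) i} := by
      ext i
      simp only [mem_setOf_eq]
      rw [← dF_isSome_iff b f ε hε o i, ← dF_isSome_iff b f' ε hε o i, h]
    rw [hset, hR]


lemma pow_aleph0_le_continuum {a : Cardinal.{u}} (h : a ≤ Cardinal.continuum) :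
    a ^ Cardinal.aleph0 ≤ Cardinal.continuum := by
  calc a ^ Cardinal.aleph0 ≤ Cardinal.continuum ^ Cardinal.aleph0 :=
        Cardinal.power_le_power_right h
    _ = (2 ^ Cardinal.aleph0) ^ Cardinal.aleph0 := by rw [Cardinal.two_power_aleph0]
    _ = 2 ^ (Cardinal.aleph0 * Cardinal.aleph0) :=
        (Cardinal.power_mul).symm
    _ = 2 ^ Cardinal.aleph0 := by rw [Cardinal.aleph0_mul_aleph0]
    _ = Cardinal.continuum := Cardinal.two_power_aleph0

lemma mk_nat_fun_le_continuum {γ : Type u} (h : Cardinal.mk γ ≤ Cardinal.continuum) :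
    Cardinal.mk (ℕ → γ) ≤ Cardinal.continuum := by
  have h1 : Cardinal.mk (ℕ → γ) = Cardinal.mk (ULift.{u} ℕ → γ) :=
    (Cardinal.mk_congr (Equiv.arrowCongr Equiv.ulift (Equiv.refl γ))).symm
  have h2 : Cardinal.mk (ULift.{u} ℕ → γ) = Cardinal.mk γ ^ Cardinal.mk (ULift.{u} ℕ) :=
    (Cardinal.power_def γ (ULift.{u} ℕ)).symm
  have h3 : Cardinal.mk (ULift.{u} ℕ) = (Cardinal.aleph0 : Cardinal.{u}) := by simp
  rw [h1, h2, h3]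
  exact pow_aleph0_le_continuum h

set_option maxHeartbeats 2000000 in
theorem card_frag_le (T : Type w) [TopologicalSpace T] [SecondCountableTopology T] :
    Cardinal.mk {f : T → ℝ // Frag f} ≤ Cardinal.continuum := by
  classical
  -- a countable basis, enumerated
  obtain ⟨b, hb, hb2⟩ : ∃ b : ℕ → Set T, (∀ i, IsOpen (b i)) ∧
      ∀ O : Set T, ∀ y ∈ O, IsOpen O → ∃ i, y ∈ b i ∧ b i ⊆ O := by
    have hbas := TopologicalSpace.isBasis_countableBasis T
    have hc : (insert (∅ : Set T) (TopologicalSpace.countableBasis T)).Countable :=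
      (TopologicalSpace.countable_countableBasis T).insert _
    obtain ⟨b, hbr⟩ := hc.exists_eq_range ⟨∅, mem_insert _ _⟩
    refine ⟨b, ?_, ?_⟩
    · intro i
      have hmem : b i ∈ insert (∅ : Set T) (TopologicalSpace.countableBasis T) := by
        rw [hbr]; exact mem_range_self i
      rcases mem_insert_iff.1 hmem with h | h
      · rw [h]; exact isOpen_empty
      · exact hbas.isOpen h
    · intro O y hy hO
      obtain ⟨v, hv, hyv, hvO⟩ := hbas.exists_subset_of_mem_open hy hO
      have hmem : v ∈ insert (∅ : Set T) (TopologicalSpace.countableBasis T) :=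
        mem_insert_of_mem _ hv
      rw [hbr] at hmem
      obtain ⟨i, rfl⟩ := hmem
      exact ⟨i, hyv, hvO⟩
  have hεm : ∀ m : ℕ, (0:ℝ) < 1/(m+1) := fun m => by positivity
  -- choice of a good index at every nonempty stage
  have hgex : ∀ f : T → ℝ, Frag f → ∀ m : ℕ, ∀ o : Ordinal.{0},
      (Rst b f (1/(m+1)) o).Nonempty → ∃ i, Good b f (1/(m+1)) (Rst b f (1/(m+1)) o) i :=
    fun f hf m o hne =>
      exists_good_of_frag b f (1/(m+1)) hb2 hf (hεm m) (Rst_isClosed b f _ hb o) hne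
  choose iG hiG using hgex
  -- distinct nonempty stages get distinct good indices
  have key : ∀ (f : T → ℝ) (hf : Frag f) (m : ℕ) (o o' : Ordinal.{0})
      (h1 : (Rst b f (1/(m+1)) o).Nonempty) (h2 : (Rst b f (1/(m+1)) o').Nonempty),
      o < o' → iG f hf m o h1 ≠ iG f hf m o' h2 := by
    intro f hf m o o' h1 h2 hlt heq
    have hg1 := hiG f hf m o h1
    have hg2 := hiG f hf m o' h2
    have hsub : Rst b f (1/(m+1)) o' ⊆ drv b f (1/(m+1)) o :=
      (Rst_anti b f _ (Order.succ_le_of_lt hlt)).trans (by exact fun y hy => hy) |>.trans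
        (Rst_succ_subset b f _ o) |>.trans (fun y hy => hy)
    have hd : b (iG f hf m o h1) ∩ Rst b f (1/(m+1)) o' = ∅ := by
      have := good_inter_drv b f (1/(m+1)) hg1
      apply eq_empty_of_subset_empty
      rw [← this]
      exact inter_subset_inter_right _ hsub
    have hne2 := hg2.1
    rw [heq] at hd
    rw [hd] at hne2
    exact Set.not_nonempty_empty hne2
  have hinj : ∀ (f : T → ℝ) (hf : Frag f) (m : ℕ) (o o' : Ordinal.{0})
      (h1 : (Rst b f (1/(m+1)) o).Nonempty) (h2 : (Rst b f (1/(m+1)) o').Nonempty),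
      iG f hf m o h1 = iG f hf m o' h2 → o = o' := by
    intro f hf m o o' h1 h2 heq
    rcases lt_trichotomy o o' with h | h | h
    · exact absurd heq (key f hf m o o' h1 h2 h)
    · exact h
    · exact absurd heq.symm (key f hf m o' o h2 h1 h)
  -- termination
  have hterm : ∀ (f : T → ℝ) (hf : Frag f) (m : ℕ),
      Rst b f (1/(m+1)) ((Cardinal.aleph 1).ord) = ∅ := by
    intro f hf m
    by_contra hne
    rw [← Ne, ← nonempty_iff_ne_empty] at hne
    have hall : ∀ o : Set.Iio ((Cardinal.aleph 1).ord), (Rst b f (1/(m+1)) o.1).Nonempty :=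
      fun o => hne.mono (Rst_anti b f _ (le_of_lt o.2))
    have hembinj : Function.Injective (fun o : Set.Iio ((Cardinal.aleph 1).ord) =>
        iG f hf m o.1 (hall o)) := by
      intro o o' h
      exact Subtype.ext (hinj f hf m o.1 o'.1 (hall o) (hall o') h)
    have hcnt : Countable (Set.Iio ((Cardinal.aleph 1).ord)) :=
      ⟨⟨_, hembinj⟩⟩
    have hmk : Cardinal.mk (Set.Iio ((Cardinal.aleph 1).ord)) ≤ Cardinal.aleph0 :=
      Cardinal.mk_le_aleph0_iff.2 hcnt
    rw [Ordinal.mk_Iio_ordinal, Cardinal.card_ord] at hmk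
    have : (Cardinal.aleph 1) ≤ Cardinal.aleph0 := by
      rw [← Cardinal.lift_aleph0.{1,0}] at hmk
      exact Cardinal.lift_le.1 hmk
    exact absurd this (not_le.2 Cardinal.aleph0_lt_aleph_one)
  -- nonempty stages are below aleph one
  have hlt_lam : ∀ (f : T → ℝ) (hf : Frag f) (m : ℕ) (o : Ordinal.{0}),
      (Rst b f (1/(m+1)) o).Nonempty → o < (Cardinal.aleph 1).ord := by
    intro f hf m o hne
    by_contra hc
    push_neg at hc
    have := hne.mono (Rst_anti b f (1/(m+1)) hc)
    rw [hterm f hf m] at this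
    exact Set.not_nonempty_empty this
  -- every point has a stage with a good basic set around it
  have hstage : ∀ (f : T → ℝ) (hf : Frag f) (m : ℕ) (y : T),
      ∃ o, y ∈ Rst b f (1/(m+1)) o ∧
        ∃ i, Good b f (1/(m+1)) (Rst b f (1/(m+1)) o) i ∧ y ∈ b i := by
    intro f hf m y
    have hA : {o : Ordinal.{0} | y ∉ Rst b f (1/(m+1)) o}.Nonempty :=
      ⟨(Cardinal.aleph 1).ord, by
        simp only [mem_setOf_eq, hterm f hf m]; exact notMem_empty y⟩
    have ho₀ : y ∉ Rst b f (1/(m+1)) (Ordinal.lt_wf.min _ hA) := Ordinal.lt_wf.min_mem _ hA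
    have hmin : ∀ o' < (Ordinal.lt_wf.min _ hA), y ∈ Rst b f (1/(m+1)) o' := by
      intro o' hlt
      by_contra hy
      exact Ordinal.lt_wf.not_lt_min _ hy hlt
    rcases Ordinal.zero_or_succ_or_isSuccLimit (Ordinal.lt_wf.min _ hA) with h0 | ⟨o, hsucc⟩ | hlim
    · rw [h0, Rst_zero] at ho₀
      exact absurd (mem_univ y) ho₀
    · have hyo : y ∈ Rst b f (1/(m+1)) o := hmin o (by rw [← hsucc]; exact Order.lt_succ o)
      have hnd : y ∉ drv b f (1/(m+1)) o := by
        intro hd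
        exact ho₀ (by rw [← hsucc]; exact mem_Rst_succ b f _ hyo hd)
      rw [drv_eq] at hnd
      have hyU : y ∈ ⋃ i ∈ {i : ℕ | Good b f (1/(m+1)) (Rst b f (1/(m+1)) o) i}, b i := by
        by_contra hcon
        exact hnd ⟨hyo, hcon⟩
      obtain ⟨i, hi, hyi⟩ := mem_iUnion₂.1 hyU
      exact ⟨o, hyo, i, hi, hyi⟩
    · have hex : ∃ o' , o' < (Ordinal.lt_wf.min _ hA) ∧ y ∉ drv b f (1/(m+1)) o' := by
        by_contra hcon
        push_neg at hcon
        exact ho₀ (mem_iInter₂.2 fun o' h => hcon o' h)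
      obtain ⟨o', ho', hnd⟩ := hex
      have hns : y ∉ Rst b f (1/(m+1)) (Order.succ o') :=
        fun hy => hnd (Rst_succ_subset b f _ o' hy)
      exact absurd (hmin _ (hlim.succ_lt ho')) hns
  -- closeness from equal data
  have hclose : ∀ (f f' : T → ℝ) (hf : Frag f) (hf' : Frag f') (m : ℕ),
      dF b f (1/(m+1)) (hεm m) = dF b f' (1/(m+1)) (hεm m) →
      ∀ y, |f y - f' y| ≤ 4 * (1/(m+1)) := by
    intro f f' hf hf' m hd y
    have hdrv := Rst_congr b f f' (1/(m+1)) (hεm m) hd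
    have hRst : ∀ o, Rst b f (1/(m+1)) o = Rst b f' (1/(m+1)) o := fun o =>
      Set.iInter_congr fun o' => Set.iInter_congr fun _ => hdrv o'
    obtain ⟨o, hyR, i, hgood, hyb⟩ := hstage f hf m y
    have hsome : (dF b f (1/(m+1)) (hεm m) o i).isSome := (dF_isSome_iff b f _ _ o i).2 hgood
    obtain ⟨q, hq⟩ := Option.isSome_iff_exists.1 hsome
    have hq' : dF b f' (1/(m+1)) (hεm m) o i = some q := by rw [← hd]; exact hq
    obtain ⟨hgood1, y₀, hy₀, hy₀q⟩ := dF_spec b f (1/(m+1)) (hεm m) hq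
    obtain ⟨hgood2, y₁, hy₁, hy₁q⟩ := dF_spec b f' (1/(m+1)) (hεm m) hq'
    have h1 : |f y - f y₀| ≤ 1/(m+1) := hgood.2 y ⟨hyb, hyR⟩ y₀ hy₀
    have hyR' : y ∈ Rst b f' (1/(m+1)) o := by rw [← hRst]; exact hyR
    have h2 : |f' y - f' y₁| ≤ 1/(m+1) := hgood2.2 y ⟨hyb, hyR'⟩ y₁ hy₁
    have a1 := abs_sub_le (f y) (f y₀) ((q:ℝ))
    have a2 := abs_sub_le (f y) ((q:ℝ)) (f' y)
    have a3 := abs_sub_le ((q:ℝ)) (f' y₁) (f' y)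
    have a4 : |(q:ℝ) - f' y₁| = |f' y₁ - (q:ℝ)| := abs_sub_comm _ _
    have a5 : |f' y₁ - f' y| = |f' y - f' y₁| := abs_sub_comm _ _
    linarith [a1, a2, a3, a4, a5, h1, h2, hy₀q, hy₁q]
  -- the encoding
  set Λ : Ordinal.{0} := (Cardinal.aleph 1).ord with hΛ
  set E : {f : T → ℝ // Frag f} →
      (ℕ → ℕ → Option ((Set.Iio Λ) × (ℕ → Option ℚ))) := fun f m n =>
    if h : ∃ o : {o : Ordinal.{0} // (Rst b f.1 (1/(m+1)) o).Nonempty},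
        iG f.1 f.2 m o.1 o.2 = n then
      some (⟨h.choose.1, hlt_lam f.1 f.2 m h.choose.1 h.choose.2⟩,
        dF b f.1 (1/(m+1)) (hεm m) h.choose.1)
    else none
    with hE
  -- from equal codes at (m, n), matching data
  have hEspec : ∀ (f : {f : T → ℝ // Frag f}) (m n : ℕ) (p : (Set.Iio Λ) × (ℕ → Option ℚ)),
      E f m n = some p →
      (Rst b f.1 (1/(m+1)) p.1.1).Nonempty ∧ p.2 = dF b f.1 (1/(m+1)) (hεm m) p.1.1 ∧
        ∃ h1 : (Rst b f.1 (1/(m+1)) p.1.1).Nonempty, iG f.1 f.2 m p.1.1 h1 = n := by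
    intro f m n p hp
    rw [hE] at hp
    simp only at hp
    split at hp
    · rename_i h
      have h1 := h.choose.2
      have h2 := h.choose_spec
      rw [← Option.some_inj.1 hp]
      exact ⟨h1, rfl, h1, h2⟩
    · exact absurd hp (by simp)
  have hEsome : ∀ (f : {f : T → ℝ // Frag f}) (m : ℕ) (o : Ordinal.{0})
      (h1 : (Rst b f.1 (1/(m+1)) o).Nonempty),
      E f m (iG f.1 f.2 m o h1) =
        some (⟨o, hlt_lam f.1 f.2 m o h1⟩, dF b f.1 (1/(m+1)) (hεm m) o) := by
    intro f m o h1
    rw [hE]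
    simp only
    have hex : ∃ o' : {o' : Ordinal.{0} // (Rst b f.1 (1/(m+1)) o').Nonempty},
        iG f.1 f.2 m o'.1 o'.2 = iG f.1 f.2 m o h1 := ⟨⟨o, h1⟩, rfl⟩
    rw [dif_pos hex]
    have : hex.choose.1 = o := hinj f.1 f.2 m _ _ hex.choose.2 h1 hex.choose_spec
    congr 1
    · exact congrArg₂ _ (Subtype.ext this) (by rw [this])
  -- E is injective
  have hEinj : Function.Injective E := by
    intro f f' hEq
    have hdeq : ∀ m : ℕ, dF b f.1 (1/(m+1)) (hεm m) = dF b f'.1 (1/(m+1)) (hεm m) := by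
      intro m
      funext o i
      by_cases h1 : (Rst b f.1 (1/(m+1)) o).Nonempty
      · have e1 := hEsome f m o h1
        have e2 : E f' m (iG f.1 f.2 m o h1) =
            some (⟨o, hlt_lam f.1 f.2 m o h1⟩, dF b f.1 (1/(m+1)) (hεm m) o) := by
          rw [← congrFun (congrFun hEq m) (iG f.1 f.2 m o h1)]
          exact e1
        obtain ⟨h1', hp2, _⟩ := hEspec f' m _ _ e2
        exact congrFun hp2 i
      · by_cases h2 : (Rst b f'.1 (1/(m+1)) o).Nonempty
        · have e1 := hEsome f' m o h2
          have e2 : E f m (iG f'.1 f'.2 m o h2) =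
              some (⟨o, hlt_lam f'.1 f'.2 m o h2⟩, dF b f'.1 (1/(m+1)) (hεm m) o) := by
            rw [congrFun (congrFun hEq m) (iG f'.1 f'.2 m o h2)]
            exact e1
          obtain ⟨h1', _, _⟩ := hEspec f m _ _ e2
          exact absurd h1' h1
        · rw [not_nonempty_iff_eq_empty] at h1 h2
          rw [dF_none_of_empty b f.1 (1/(m+1)) (hεm m) h1 i,
            dF_none_of_empty b f'.1 (1/(m+1)) (hεm m) h2 i]
    have hcl : ∀ (y : T) (m : ℕ), |f.1 y - f'.1 y| ≤ 4 * (1/(m+1)) :=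
      fun y m => hclose f.1 f'.1 f.2 f'.2 m (hdeq m) y
    apply Subtype.ext
    funext y
    have hz : |f.1 y - f'.1 y| ≤ 0 := by
      by_contra hpos
      push_neg at hpos
      obtain ⟨m, hm⟩ := exists_nat_gt (4 / |f.1 y - f'.1 y|)
      have hm1 : (4:ℝ) / |f.1 y - f'.1 y| < m + 1 := by linarith
      have h4 : 4 * (1/((m:ℝ)+1)) < |f.1 y - f'.1 y| := by
        rw [div_lt_iff₀ hpos] at hm1
        have hmp : (0:ℝ) < (m:ℝ)+1 := by positivity
        rw [mul_one_div, div_lt_iff₀ hmp]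
        linarith [hm1]
      exact absurd (hcl y m) (not_le.2 h4)
    have := abs_nonneg (f.1 y - f'.1 y)
    have : |f.1 y - f'.1 y| = 0 := le_antisymm hz this
    exact sub_eq_zero.1 (abs_eq_zero.1 this)
  -- cardinality bound for the codomain
  have hIio : Cardinal.mk (Set.Iio Λ) ≤ (Cardinal.continuum : Cardinal.{1}) := by
    rw [hΛ, Ordinal.mk_Iio_ordinal, Cardinal.card_ord]
    calc Cardinal.lift.{1} (Cardinal.aleph 1) ≤ Cardinal.lift.{1} Cardinal.continuum :=
          Cardinal.lift_le.2 Cardinal.aleph_one_le_continuum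
      _ = Cardinal.continuum := Cardinal.lift_continuum
  have hOQ : Cardinal.mk (ℕ → Option ℚ) ≤ (Cardinal.continuum : Cardinal.{0}) := by
    apply mk_nat_fun_le_continuum
    rw [Cardinal.mk_option, Cardinal.mk_denumerable]
    calc Cardinal.aleph0 + 1 ≤ Cardinal.aleph0 + Cardinal.aleph0 :=
          add_le_add_right Cardinal.one_le_aleph0 _
      _ = Cardinal.aleph0 := Cardinal.aleph0_add_aleph0
      _ ≤ Cardinal.continuum := Cardinal.aleph0_le_continuum
  have hprod : Cardinal.mk ((Set.Iio Λ) × (ℕ → Option ℚ)) ≤ (Cardinal.continuum : Cardinal.{1}) := by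
    rw [Cardinal.mk_prod]
    calc Cardinal.lift.{0} (Cardinal.mk (Set.Iio Λ)) * Cardinal.lift.{1} (Cardinal.mk (ℕ → Option ℚ))
        ≤ Cardinal.lift.{0} Cardinal.continuum * Cardinal.lift.{1} Cardinal.continuum :=
          mul_le_mul' (Cardinal.lift_le.2 hIio) (Cardinal.lift_le.2 hOQ)
      _ = Cardinal.continuum * Cardinal.continuum := by rw [Cardinal.lift_continuum, Cardinal.lift_continuum]
      _ = Cardinal.continuum := Cardinal.mul_eq_self Cardinal.aleph0_le_continuum
  have hopt : Cardinal.mk (Option ((Set.Iio Λ) × (ℕ → Option ℚ))) ≤ (Cardinal.continuum : Cardinal.{1}) := by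
    rw [Cardinal.mk_option]
    calc Cardinal.mk ((Set.Iio Λ) × (ℕ → Option ℚ)) + 1 ≤ Cardinal.continuum + Cardinal.continuum :=
          add_le_add hprod (le_trans (by norm_num) Cardinal.aleph0_le_continuum)
      _ = Cardinal.continuum := Cardinal.add_eq_self Cardinal.aleph0_le_continuum
  have hcodom : Cardinal.mk (ℕ → ℕ → Option ((Set.Iio Λ) × (ℕ → Option ℚ))) ≤
      (Cardinal.continuum : Cardinal.{1}) :=
    mk_nat_fun_le_continuum (mk_nat_fun_le_continuum hopt)
  -- conclude
  have hlift : Cardinal.lift.{1} (Cardinal.mk {f : T → ℝ // Frag f}) ≤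
      Cardinal.lift.{w} (Cardinal.mk (ℕ → ℕ → Option ((Set.Iio Λ) × (ℕ → Option ℚ)))) :=
    Cardinal.lift_mk_le'.2 ⟨⟨E, hEinj⟩⟩
  have hfin : Cardinal.lift.{1} (Cardinal.mk {f : T → ℝ // Frag f}) ≤
      Cardinal.lift.{1} Cardinal.continuum := by
    calc Cardinal.lift.{1} (Cardinal.mk {f : T → ℝ // Frag f})
        ≤ Cardinal.lift.{w} (Cardinal.mk (ℕ → ℕ → Option ((Set.Iio Λ) × (ℕ → Option ℚ)))) := hlift
      _ ≤ Cardinal.lift.{w} Cardinal.continuum := Cardinal.lift_le.2 hcodom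
      _ = Cardinal.continuum := Cardinal.lift_continuum
      _ = Cardinal.lift.{1} Cardinal.continuum := Cardinal.lift_continuum.symm
  exact Cardinal.lift_le.1 hfin

lemma frag_of_no_config {T : Type w} [TopologicalSpace T] {f : T → ℝ} {c : ℝ}
    (hc : ∀ y, |f y| ≤ c)
    (h : ∀ r s : ℝ, r < s → ∀ P : Set T, IsClosed P → P.Nonempty →
      ¬(P ⊆ closure {y | y ∈ P ∧ f y < r} ∧ P ⊆ closure {y | y ∈ P ∧ s < f y})) :
    Frag f := by
  classical
  intro ε hε P hP hPne
  have hε2 : (0:ℝ) < ε/2 := by linarith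
  obtain ⟨N, hN⟩ := exists_nat_gt ((2*c+2)/(ε/2))
  set a : ℕ → ℝ := fun k => -c - 1 + k*(ε/2) with ha
  have h1N : a N = -c - 1 + N*(ε/2) := rfl
  have h00 : a 0 = -c - 1 := by simp [ha]
  have hstep : ∀ k : ℕ, a (k+1) = a k + ε/2 := by
    intro k
    simp only [ha]
    push_cast
    ring
  clear_value a
  have haN : c < a N := by
    rw [div_lt_iff₀ hε2] at hN
    linarith
  have main : ∀ k : ℕ, ∃ V : Set T, IsOpen V ∧ (V ∩ P).Nonempty ∧
      ∀ j ≤ k, (∀ y ∈ V ∩ P, a j ≤ f y) ∨ (∀ y ∈ V ∩ P, f y ≤ a j + ε/2) := by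
    intro k
    induction k with
    | zero =>
      refine ⟨univ, isOpen_univ, by simpa using hPne, ?_⟩
      intro j hj
      rw [Nat.le_zero] at hj
      subst hj
      left
      intro y _
      have := (abs_le.1 (hc y)).1
      linarith
    | succ k ih =>
      obtain ⟨V, hV, hVP, hcond⟩ := ih
      have hP'ne : (closure (V ∩ P)).Nonempty := hVP.mono subset_closure
      have hrs : a (k+1) < a (k+1) + ε/2 := by linarith
      have hcfg := h (a (k+1)) (a (k+1) + ε/2) hrs _ isClosed_closure hP'ne
      rw [not_and_or] at hcfg
      rcases hcfg with hcfg | hcfg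
      · rw [not_subset] at hcfg
        obtain ⟨p, hp1, hp2⟩ := hcfg
        have hopen : IsOpen (closure {y | y ∈ closure (V ∩ P) ∧ f y < a (k+1)})ᶜ :=
          isClosed_closure.isOpen_compl
        refine ⟨(closure {y | y ∈ closure (V ∩ P) ∧ f y < a (k+1)})ᶜ ∩ V,
          hopen.inter hV, ?_, ?_⟩
        · obtain ⟨z, hz⟩ := mem_closure_iff.1 hp1 _ hopen hp2
          exact ⟨z, ⟨hz.1, hz.2.1⟩, hz.2.2⟩
        · intro j hj
          rcases Nat.lt_or_ge j (k+1) with hjk | hjk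
          · rcases hcond j (Nat.lt_succ_iff.1 hjk) with hc1 | hc1
            · left; intro y hy; exact hc1 y ⟨hy.1.2, hy.2⟩
            · right; intro y hy; exact hc1 y ⟨hy.1.2, hy.2⟩
          · have hj1 : j = k+1 := le_antisymm hj hjk
            subst hj1
            left
            intro y hy
            by_contra hlt
            push_neg at hlt
            exact hy.1.1 (subset_closure ⟨subset_closure ⟨hy.1.2, hy.2⟩, hlt⟩)
      · rw [not_subset] at hcfg
        obtain ⟨p, hp1, hp2⟩ := hcfg
        have hopen : IsOpen (closure {y | y ∈ closure (V ∩ P) ∧ a (k+1) + ε/2 < f y})ᶜ :=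
          isClosed_closure.isOpen_compl
        refine ⟨(closure {y | y ∈ closure (V ∩ P) ∧ a (k+1) + ε/2 < f y})ᶜ ∩ V,
          hopen.inter hV, ?_, ?_⟩
        · obtain ⟨z, hz⟩ := mem_closure_iff.1 hp1 _ hopen hp2
          exact ⟨z, ⟨hz.1, hz.2.1⟩, hz.2.2⟩
        · intro j hj
          rcases Nat.lt_or_ge j (k+1) with hjk | hjk
          · rcases hcond j (Nat.lt_succ_iff.1 hjk) with hc1 | hc1
            · left; intro y hy; exact hc1 y ⟨hy.1.2, hy.2⟩
            · right; intro y hy; exact hc1 y ⟨hy.1.2, hy.2⟩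
          · have hj1 : j = k+1 := le_antisymm hj hjk
            subst hj1
            right
            intro y hy
            by_contra hlt
            push_neg at hlt
            exact hy.1.1 (subset_closure ⟨subset_closure ⟨hy.1.2, hy.2⟩, hlt⟩)
  obtain ⟨V, hV, hVP, hcond⟩ := main N
  refine ⟨V, hV, hVP, ?_⟩
  intro y hy y' hy'
  set Q : ℕ → Prop := fun j => ∀ z ∈ V ∩ P, a j ≤ f z with hQdef
  have hQ0 : Q 0 := by
    intro z _
    have := (abs_le.1 (hc z)).1
    linarith
  have hQk : Q (Nat.findGreatest Q N) := Nat.findGreatest_spec (Nat.zero_le N) hQ0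
  have hkN : Nat.findGreatest Q N < N := by
    rcases lt_or_eq_of_le (Nat.findGreatest_le (P := Q) N) with hlt | heq
    · exact hlt
    · exfalso
      obtain ⟨z, hz⟩ := hVP
      have := hQk z hz
      rw [heq] at this
      have := hc z
      have := (abs_le.1 (hc z)).2
      linarith
  have hnotQ : ¬ Q (Nat.findGreatest Q N + 1) :=
    Nat.findGreatest_is_greatest (Nat.lt_succ_self _) (Nat.succ_le_of_lt hkN)
  rcases hcond (Nat.findGreatest Q N + 1) (Nat.succ_le_of_lt hkN) with hcd | hcd
  · exact absurd hcd hnotQ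
  · have hb1 := hQk y hy
    have hb2 := hQk y' hy'
    have hb3 := hcd y hy
    have hb4 := hcd y' hy'
    have hstep1 := hstep (Nat.findGreatest Q N)
    rw [abs_le]
    constructor <;> linarith

lemma no_config_of_continuous {T : Type w} [TopologicalSpace T] {g : T → ℝ}
    (hg : Continuous g) {r s : ℝ} (hrs : r < s) {P : Set T} (hPne : P.Nonempty)
    (hd1 : P ⊆ closure {y | y ∈ P ∧ g y < r}) (hd2 : P ⊆ closure {y | y ∈ P ∧ s < g y}) :
    False := by
  obtain ⟨y0, hy0⟩ := hPne
  have h1 : {y | y ∈ P ∧ g y < r}.Nonempty := by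
    rcases eq_empty_or_nonempty {y | y ∈ P ∧ g y < r} with he | hne
    · have := hd1 hy0
      rw [he, closure_empty] at this
      exact absurd this (notMem_empty _)
    · exact hne
  obtain ⟨y1, hy1P, hy1r⟩ := h1
  have hO : IsOpen {y | g y < r} := isOpen_lt hg continuous_const
  obtain ⟨z, hz⟩ := mem_closure_iff.1 (hd2 hy1P) _ hO hy1r
  have hz1 : g z < r := hz.1
  have hz2 : s < g z := hz.2.2
  linarith

lemma mem_closure_tail {T : Type w} [TopologicalSpace T] (π : ℕ → T → ℝ)
    (hπ : ∀ n, Continuous (π n)) {F : T → ℝ} (hF : F ∈ closure (Set.range π))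
    {r s : ℝ} (hrs : r < s) {P : Set T} (hPne : P.Nonempty)
    (hd1 : P ⊆ closure {y | y ∈ P ∧ F y < r}) (hd2 : P ⊆ closure {y | y ∈ P ∧ s < F y})
    (m : ℕ) : F ∈ closure (π '' {n | m < n}) := by
  have hsplit : Set.range π = π '' {n | n ≤ m} ∪ π '' {n | m < n} := by
    rw [← image_union, ← image_univ]
    congr 1
    ext n
    simp [le_or_gt]
  rw [hsplit, closure_union] at hF
  rcases hF with hF | hF
  · exfalso
    have hfin : (π '' {n | n ≤ m}).Finite := (Set.finite_Iic m).image _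
    rw [hfin.isClosed.closure_eq] at hF
    obtain ⟨j, _, hj⟩ := hF
    rw [← hj] at hd1 hd2
    exact no_config_of_continuous (hπ j) hrs hPne hd1 hd2
  · exact hF

structure IndepLevel {T : Type w} [TopologicalSpace T] (π : ℕ → T → ℝ)
    (r s : ℝ) (P : Set T) (k : ℕ) where
  ns : Fin k → ℕ
  V : (Fin k → Bool) → Set T
  mono : ∀ j j' : Fin k, j < j' → ns j < ns j'
  opn : ∀ σ, IsOpen (V σ)
  ne : ∀ σ, (V σ ∩ P).Nonempty
  cond : ∀ σ, ∀ y ∈ V σ ∩ P, ∀ j : Fin k,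
    (σ j = false → π (ns j) y < r) ∧ (σ j = true → s < π (ns j) y)

lemma indep_step {T : Type w} [TopologicalSpace T] {π : ℕ → T → ℝ}
    (hπ : ∀ n, Continuous (π n)) {F : T → ℝ} (hF : F ∈ closure (Set.range π))
    {r s : ℝ} (hrs : r < s) {P : Set T} (hPne : P.Nonempty)
    (hd1 : P ⊆ closure {y | y ∈ P ∧ F y < r}) (hd2 : P ⊆ closure {y | y ∈ P ∧ s < F y})
    (k : ℕ) (L : IndepLevel π r s P k) :
    ∃ L' : IndepLevel π r s P (k+1), ∀ j : Fin k, L'.ns j.castSucc = L.ns j := by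
  classical
  have hpt : ∀ (σ : Fin k → Bool) (t : Bool), ∃ p, p ∈ L.V σ ∩ P ∧
      (t = false → F p < r) ∧ (t = true → s < F p) := by
    intro σ t
    obtain ⟨y, hy⟩ := L.ne σ
    cases t
    · obtain ⟨p, hp1, hp2, hp3⟩ := mem_closure_iff.1 (hd1 hy.2) _ (L.opn σ) hy.1
      exact ⟨p, ⟨hp1, hp2⟩, ⟨fun _ => hp3, fun h => Bool.noConfusion h⟩⟩
    · obtain ⟨p, hp1, hp2, hp3⟩ := mem_closure_iff.1 (hd2 hy.2) _ (L.opn σ) hy.1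
      exact ⟨p, ⟨hp1, hp2⟩, ⟨fun h => Bool.noConfusion h, fun _ => hp3⟩⟩
  choose pt hptV hptF hptT using hpt
  set m := (Finset.univ : Finset (Fin k)).sup (fun j => L.ns j) with hm
  -- find a single large index realizing all the finitely many conditions
  have hW : ∃ N, m < N ∧ ∀ (σ : Fin k → Bool) (t : Bool),
      (t = false → π N (pt σ t) < r) ∧ (t = true → s < π N (pt σ t)) := by
    have hcl := mem_closure_tail π hπ hF hrs hPne hd1 hd2 m
    have hUopen : ∀ (σ : Fin k → Bool) (t : Bool), IsOpen {h : T → ℝ |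
        (t = false → h (pt σ t) < r) ∧ (t = true → s < h (pt σ t))} := by
      intro σ t
      cases t
      · simp only [Bool.false_eq_true, false_implies, and_true, forall_const]
        exact isOpen_lt (continuous_apply _) continuous_const
      · simp only [Bool.true_eq_false, false_implies, true_and, forall_const]
        exact isOpen_lt continuous_const (continuous_apply _)
    have hWopen : IsOpen (⋂ (σ : Fin k → Bool) (t : Bool), {h : T → ℝ |
        (t = false → h (pt σ t) < r) ∧ (t = true → s < h (pt σ t))}) :=
      isOpen_iInter_of_finite fun σ => isOpen_iInter_of_finite fun t => hUopen σ t
    have hFW : F ∈ ⋂ (σ : Fin k → Bool) (t : Bool), {h : T → ℝ |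
        (t = false → h (pt σ t) < r) ∧ (t = true → s < h (pt σ t))} :=
      mem_iInter.2 fun σ => mem_iInter.2 fun t =>
        ⟨fun ht => hptF σ t ht, fun ht => hptT σ t ht⟩
    obtain ⟨g, hgW, hgim⟩ := mem_closure_iff.1 hcl _ hWopen hFW
    obtain ⟨N, hmN, hNg⟩ := hgim
    refine ⟨N, hmN, fun σ t => ?_⟩
    have := mem_iInter.1 (mem_iInter.1 hgW σ) t
    rw [hNg]
    exact this
  obtain ⟨N, hmN, hNprop⟩ := hW
  refine ⟨{
    ns := Fin.snoc L.ns N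
    V := fun σ => L.V (Fin.init σ) ∩
      (match σ (Fin.last k) with
        | false => {y | π N y < r}
        | true => {y | s < π N y})
    mono := ?_
    opn := ?_
    ne := ?_
    cond := ?_ }, ?_⟩
  · intro j j' hjj'
    rcases Fin.eq_castSucc_or_eq_last j' with ⟨j'₀, rfl⟩ | rfl
    · have hjne : j ≠ Fin.last k := by
        intro hj
        subst hj
        have := hjj'
        rw [Fin.lt_def] at this
        simp only [Fin.val_last, Fin.coe_castSucc] at this
        omega
      obtain ⟨j₀, rfl⟩ := Fin.eq_castSucc_of_ne_last hjne
      rw [Fin.snoc_castSucc, Fin.snoc_castSucc]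
      apply L.mono
      rw [Fin.lt_def] at hjj' ⊢
      simpa using hjj'
    · have hjne : j ≠ Fin.last k := ne_of_lt hjj'
      obtain ⟨j₀, rfl⟩ := Fin.eq_castSucc_of_ne_last hjne
      rw [Fin.snoc_castSucc, Fin.snoc_last]
      exact lt_of_le_of_lt (Finset.le_sup (Finset.mem_univ j₀)) hmN
  · intro σ
    apply (L.opn _).inter
    cases hσ : σ (Fin.last k)
    · simp only [hσ]
      exact isOpen_lt (hπ N) continuous_const
    · simp only [hσ]
      exact isOpen_lt continuous_const (hπ N)
  · intro σ
    refine ⟨pt (Fin.init σ) (σ (Fin.last k)), ⟨(hptV _ _).1, ?_⟩, (hptV _ _).2⟩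
    cases hσ : σ (Fin.last k)
    · simp only [hσ]
      have := (hNprop (Fin.init σ) false).1 rfl
      rw [hσ] at *
      exact this
    · simp only [hσ]
      have := (hNprop (Fin.init σ) true).2 rfl
      rw [hσ] at *
      exact this
  · intro σ y hy j
    rcases Fin.eq_castSucc_or_eq_last j with ⟨j₀, rfl⟩ | rfl
    · rw [Fin.snoc_castSucc]
      have hy' : y ∈ L.V (Fin.init σ) ∩ P := ⟨hy.1.1, hy.2⟩
      have := L.cond (Fin.init σ) y hy' j₀
      exact this
    · rw [Fin.snoc_last]
      constructor
      · intro hσ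
        have := hy.1.2
        rw [hσ] at this
        exact this
      · intro hσ
        have := hy.1.2
        rw [hσ] at this
        exact this
  · intro j
    simp

lemma exists_indep {T : Type w} [TopologicalSpace T] {π : ℕ → T → ℝ}
    (hπ : ∀ n, Continuous (π n)) {F : T → ℝ} (hF : F ∈ closure (Set.range π))
    {r s : ℝ} (hrs : r < s) {P : Set T} (hPne : P.Nonempty)
    (hd1 : P ⊆ closure {y | y ∈ P ∧ F y < r}) (hd2 : P ⊆ closure {y | y ∈ P ∧ s < F y}) :
    ∃ n : ℕ → ℕ, StrictMono n ∧ ∀ I J : Finset ℕ, Disjoint I J →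
      ∃ y, (∀ k ∈ I, π (n k) y < r) ∧ (∀ k ∈ J, s < π (n k) y) := by
  classical
  have L0 : IndepLevel π r s P 0 :=
    { ns := fun j => j.elim0
      V := fun _ => univ
      mono := fun j => j.elim0
      opn := fun _ => isOpen_univ
      ne := fun _ => by simpa using hPne
      cond := fun σ y hy j => j.elim0 }
  choose stepF stepH using fun k L => indep_step hπ hF hrs hPne hd1 hd2 k L
  set C : ∀ k, IndepLevel π r s P k := fun k => Nat.rec L0 (fun k L => stepF k L) k with hC
  have hCsucc : ∀ k, C (k+1) = stepF k (C k) := fun k => rfl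
  set n : ℕ → ℕ := fun k => (C (k+1)).ns (Fin.last k) with hn
  have hagree : ∀ k (j : Fin k), (C k).ns j = n j.1 := by
    intro k
    induction k with
    | zero => exact fun j => j.elim0
    | succ k ih =>
      intro j
      rcases Fin.eq_castSucc_or_eq_last j with ⟨j₀, rfl⟩ | rfl
      · have h1 : (C (k+1)).ns j₀.castSucc = (C k).ns j₀ := by
          rw [hCsucc]
          exact stepH k (C k) j₀
        rw [h1, ih j₀]
        simp
      · rfl
  have hmono : StrictMono n := by
    apply strictMono_nat_of_lt_succ
    intro k
    have h1 : (C (k+2)).ns ⟨k, by omega⟩ = n k := hagree (k+2) ⟨k, by omega⟩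
    have h2 : (C (k+2)).ns ⟨k+1, by omega⟩ = n (k+1) := hagree (k+2) ⟨k+1, by omega⟩
    rw [← h1, ← h2]
    exact (C (k+2)).mono _ _ (Fin.mk_lt_mk.2 (by omega))
  refine ⟨n, hmono, ?_⟩
  intro I J hIJ
  set K := ((I ∪ J).sup id) + 1 with hK
  have hKI : ∀ k ∈ I, k < K := fun k hk =>
    Nat.lt_succ_of_le (Finset.le_sup (f := id) (Finset.mem_union_left _ hk))
  have hKJ : ∀ k ∈ J, k < K := fun k hk =>
    Nat.lt_succ_of_le (Finset.le_sup (f := id) (Finset.mem_union_right _ hk))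
  set σ : Fin K → Bool := fun j => decide (j.1 ∈ J) with hσ
  obtain ⟨y, hy⟩ := (C K).ne σ
  refine ⟨y, ?_, ?_⟩
  · intro k hk
    have hkK : k < K := hKI k hk
    have hcnd := ((C K).cond σ y hy ⟨k, hkK⟩).1
    have hσf : σ ⟨k, hkK⟩ = false := by
      simp only [hσ, decide_eq_false_iff_not]
      exact Finset.disjoint_left.1 hIJ hk
    have := hcnd hσf
    rwa [hagree K ⟨k, hkK⟩] at this
  · intro k hk
    have hkK : k < K := hKJ k hk
    have hcnd := ((C K).cond σ y hy ⟨k, hkK⟩).2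
    have hσt : σ ⟨k, hkK⟩ = true := by
      simp only [hσ, decide_eq_true_iff]
      exact hk
    have := hcnd hσt
    rwa [hagree K ⟨k, hkK⟩] at this

noncomputable def phi (t : ℝ) : ℝ := t / (1 + |t|)

lemma phi_strictMono : StrictMono phi := by
  intro a b hab
  unfold phi
  rw [div_lt_div_iff₀ (by positivity) (by positivity)]
  rcases abs_cases a with ⟨h1, h2⟩ | ⟨h1, h2⟩ <;> rcases abs_cases b with ⟨h3, h4⟩ | ⟨h3, h4⟩ <;>
    rw [h1, h3] <;> nlinarith

lemma phi_abs_lt_one (t : ℝ) : |phi t| < 1 := by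
  unfold phi
  rw [abs_div, abs_of_pos (by positivity : (0:ℝ) < 1 + |t|), div_lt_one (by positivity)]
  linarith [abs_nonneg t]

lemma phi_inv {u : ℝ} (hu : |u| < 1) : phi (u / (1 - |u|)) = u := by
  have h1 : (0:ℝ) < 1 - |u| := by linarith
  unfold phi
  have h2 : |u / (1 - |u|)| = |u| / (1 - |u|) := by rw [abs_div, abs_of_pos h1]
  rw [h2]
  have h3 : 1 + |u| / (1 - |u|) = 1 / (1 - |u|) := by field_simp; ring
  rw [h3]
  field_simp

lemma lemmaR {X : Type u} [TopologicalSpace X] [CompactSpace X] [Nonempty X]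
    (v : ℕ → X → ℝ) (hv : ∀ n, Continuous (v n)) (hbd : ∀ x, ∃ C, ∀ n, |v n x| ≤ C) :
    (Cardinal.mk ↥(closure (Set.range v)) ≤ Cardinal.continuum) ∨
    ∃ r s : ℝ, r < s ∧ ∃ n : ℕ → ℕ, StrictMono n ∧ ∀ I J : Set ℕ, Disjoint I J →
      ∃ x, (∀ k ∈ I, v (n k) x ≤ r) ∧ (∀ k ∈ J, s ≤ v (n k) x) := by
  classical
  set e : X → (ℕ → ℝ) := fun x n => v n x with he
  have hecont : Continuous e := continuous_pi fun n => hv n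
  set Y : Set (ℕ → ℝ) := Set.range e with hY
  set π : ℕ → (↥Y → ℝ) := fun n y => y.1 n with hπ
  have hπval : ∀ (nn : ℕ) (y : ↥Y), π nn y = y.1 nn := fun _ _ => rfl
  have heval : ∀ (x : X) (nn : ℕ), e x nn = v nn x := fun _ _ => rfl
  have hπcont : ∀ n, Continuous (π n) := fun n => (continuous_apply n).comp continuous_subtype_val
  have hbdY : ∀ y : ↥Y, ∃ C, ∀ n, |π n y| ≤ C := by
    intro y
    obtain ⟨x, hx⟩ := y.2
    obtain ⟨C, hC⟩ := hbd x
    refine ⟨C, fun n => ?_⟩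
    rw [hπval, ← hx, heval]
    exact hC n
  choose Cy hCy using hbdY
  have hsub : Set.range π ⊆ Set.pi univ (fun y : ↥Y => Icc (-(Cy y)) (Cy y)) := by
    rintro _ ⟨n, rfl⟩ y _
    exact abs_le.1 (hCy y n)
  have hKYcomp : IsCompact (closure (Set.range π)) := by
    apply IsCompact.of_isClosed_subset (isCompact_univ_pi fun y => isCompact_Icc) isClosed_closure
    exact closure_minimal hsub (isClosed_set_pi fun y _ => isClosed_Icc)
  set Q : (↥Y → ℝ) → (X → ℝ) := fun h x => h ⟨e x, mem_range_self x⟩ with hQ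
  have hQcont : Continuous Q := continuous_pi fun x => continuous_apply _
  have hQπ : ∀ n, Q (π n) = v n := fun n => rfl
  have hQK : ∀ h ∈ closure (Set.range π), Q h ∈ closure (Set.range v) := by
    intro h hh
    have h1 : Q h ∈ Q '' closure (Set.range π) := mem_image_of_mem Q hh
    have h2 : Q '' closure (Set.range π) ⊆ closure (Q '' Set.range π) :=
      image_closure_subset_closure_image hQcont
    have h3 : Q '' Set.range π = Set.range v := by
      rw [← range_comp]
      have : Q ∘ π = v := funext hQπ
      rw [this]
    rw [h3] at h2
    exact h2 h1
  have hQsurj : closure (Set.range v) ⊆ Q '' closure (Set.range π) := by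
    have himg : IsCompact (Q '' closure (Set.range π)) := hKYcomp.image hQcont
    apply closure_minimal ?_ himg.isClosed
    rintro _ ⟨n, rfl⟩
    exact ⟨π n, subset_closure (mem_range_self n), hQπ n⟩
  by_cases hall : ∀ F ∈ closure (Set.range π), Frag (fun y => phi (F y))
  · left
    have hKY : Cardinal.mk ↥(closure (Set.range π)) ≤ Cardinal.continuum := by
      have hi : Function.Injective (fun F : ↥(closure (Set.range π)) =>
          (⟨fun y => phi (F.1 y), hall F.1 F.2⟩ : {f : ↥Y → ℝ // Frag f})) := by
        intro F F' hFF
        apply Subtype.ext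
        funext y
        have := congrFun (congrArg Subtype.val hFF) y
        exact phi_strictMono.injective this
      exact le_trans (Cardinal.mk_le_of_injective hi) (card_frag_le ↥Y)
    have hsurj2 : Function.Surjective (fun h : ULift.{u} ↥(closure (Set.range π)) =>
        (⟨Q h.down.1, hQK h.down.1 h.down.2⟩ : ↥(closure (Set.range v)))) := by
      intro z
      obtain ⟨h, hh, hqz⟩ := hQsurj z.2
      exact ⟨ULift.up ⟨h, hh⟩, Subtype.ext hqz⟩
    calc Cardinal.mk ↥(closure (Set.range v))
        ≤ Cardinal.mk (ULift.{u} ↥(closure (Set.range π))) :=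
          Cardinal.mk_le_of_surjective hsurj2
      _ = Cardinal.lift.{u} (Cardinal.mk ↥(closure (Set.range π))) := Cardinal.mk_uLift _
      _ ≤ Cardinal.lift.{u} Cardinal.continuum := Cardinal.lift_le.2 hKY
      _ = Cardinal.continuum := Cardinal.lift_continuum
  · right
    push_neg at hall
    obtain ⟨F, hFK, hFnf⟩ := hall
    have hbd1 : ∀ y, |phi (F y)| ≤ 1 := fun y => le_of_lt (phi_abs_lt_one (F y))
    have hconf : ∃ r s : ℝ, r < s ∧ ∃ P : Set ↥Y, IsClosed P ∧ P.Nonempty ∧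
        (P ⊆ closure {y | y ∈ P ∧ phi (F y) < r}) ∧
        (P ⊆ closure {y | y ∈ P ∧ s < phi (F y)}) := by
      by_contra hcon
      push_neg at hcon
      apply hFnf
      apply frag_of_no_config hbd1
      intro r s hrs P hP hPne hcfg
      exact (hcon r s hrs P hP hPne hcfg.1) hcfg.2
    obtain ⟨r, s, hrs, P, hP, hPne, hd1, hd2⟩ := hconf
    have hrgt : -1 < r := by
      obtain ⟨y0, hy0⟩ := hPne
      have hcl := hd1 hy0
      rcases eq_empty_or_nonempty {y | y ∈ P ∧ phi (F y) < r} with hemp | ⟨z, hz⟩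
      · rw [hemp, closure_empty] at hcl
        exact absurd hcl (notMem_empty _)
      · have := (abs_lt.1 (phi_abs_lt_one (F z))).1
        linarith [hz.2]
    have hslt : s < 1 := by
      obtain ⟨y0, hy0⟩ := hPne
      have hcl := hd2 hy0
      rcases eq_empty_or_nonempty {y | y ∈ P ∧ s < phi (F y)} with hemp | ⟨z, hz⟩
      · rw [hemp, closure_empty] at hcl
        exact absurd hcl (notMem_empty _)
      · have := (abs_lt.1 (phi_abs_lt_one (F z))).2
        linarith [hz.2]
    have hrabs : |r| < 1 := abs_lt.2 ⟨hrgt, lt_trans hrs hslt⟩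
    have hsabs : |s| < 1 := abs_lt.2 ⟨lt_trans hrgt hrs, hslt⟩
    have hφr : phi (r / (1 - |r|)) = r := phi_inv hrabs
    have hφs : phi (s / (1 - |s|)) = s := phi_inv hsabs
    have hr's' : r / (1 - |r|) < s / (1 - |s|) := by
      by_contra hc
      push_neg at hc
      have := phi_strictMono.monotone hc
      rw [hφr, hφs] at this
      linarith
    have hset1 : {y | y ∈ P ∧ phi (F y) < r} = {y | y ∈ P ∧ F y < r / (1 - |r|)} := by
      ext y
      simp only [mem_setOf_eq, and_congr_right_iff]
      intro _
      constructor
      · intro h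
        apply phi_strictMono.lt_iff_lt.1
        rw [hφr]
        exact h
      · intro h
        have := phi_strictMono h
        rwa [hφr] at this
    have hset2 : {y | y ∈ P ∧ s < phi (F y)} = {y | y ∈ P ∧ s / (1 - |s|) < F y} := by
      ext y
      simp only [mem_setOf_eq, and_congr_right_iff]
      intro _
      constructor
      · intro h
        apply phi_strictMono.lt_iff_lt.1
        rw [hφs]
        exact h
      · intro h
        have := phi_strictMono h
        rwa [hφs] at this
    rw [hset1] at hd1
    rw [hset2] at hd2
    obtain ⟨n, hmono, hind⟩ := exists_indep hπcont hFK hr's' hPne hd1 hd2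
    refine ⟨r / (1 - |r|), s / (1 - |s|), hr's', n, hmono, ?_⟩
    intro I J hIJ
    set A : ℕ → Set X := fun k =>
      (if k ∈ I then {x | v (n k) x ≤ r / (1 - |r|)} else univ) ∩
      (if k ∈ J then {x | s / (1 - |s|) ≤ v (n k) x} else univ) with hA
    have hAclosed : ∀ k, IsClosed (A k) := by
      intro k
      apply IsClosed.inter
      · split
        · exact isClosed_le (hv (n k)) continuous_const
        · exact isClosed_univ
      · split
        · exact isClosed_le continuous_const (hv (n k))
        · exact isClosed_univ
    have hnex : (univ ∩ ⋂ k, A k).Nonempty := by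
      by_contra hcon
      rw [not_nonempty_iff_eq_empty] at hcon
      obtain ⟨u, hu⟩ := isCompact_univ.elim_finite_subfamily_closed A hAclosed hcon
      set I' : Finset ℕ := u.filter (· ∈ I) with hI'
      set J' : Finset ℕ := u.filter (· ∈ J) with hJ'
      have hIJ' : Disjoint I' J' := by
        rw [Finset.disjoint_left]
        intro a ha haJ
        rw [hI', Finset.mem_filter] at ha
        rw [hJ', Finset.mem_filter] at haJ
        exact (Set.disjoint_left.1 hIJ ha.2) haJ.2
      obtain ⟨y, hy1, hy2⟩ := hind I' J' hIJ'
      obtain ⟨x, hx⟩ := y.2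
      have hxmem : x ∈ univ ∩ ⋂ k ∈ u, A k := by
        refine ⟨mem_univ x, mem_iInter₂.2 fun k hk => ?_⟩
        rw [hA]
        constructor
        · split
          · rename_i hkI
            have hlt := hy1 k (by rw [hI']; exact Finset.mem_filter.2 ⟨hk, hkI⟩)
            have hval : π (n k) y = v (n k) x := by rw [hπval, ← hx, heval]
            rw [hval] at hlt
            exact le_of_lt hlt
          · exact mem_univ x
        · split
          · rename_i hkJ
            have hlt := hy2 k (by rw [hJ']; exact Finset.mem_filter.2 ⟨hk, hkJ⟩)
            have hval : π (n k) y = v (n k) x := by rw [hπval, ← hx, heval]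
            rw [hval] at hlt
            exact le_of_lt hlt
          · exact mem_univ x
      rw [hu] at hxmem
      exact absurd hxmem (notMem_empty x)
    obtain ⟨x, hx⟩ := hnex
    refine ⟨x, ?_, ?_⟩
    · intro k hk
      have hxk := mem_iInter.1 hx.2 k
      rw [hA] at hxk
      have h1 := hxk.1
      rw [if_pos hk] at h1
      exact h1
    · intro k hk
      have hxk := mem_iInter.1 hx.2 k
      rw [hA] at hxk
      have h2 := hxk.2
      rw [if_pos hk] at h2
      exact h2

lemma card_le_of_pi {α : Type w} {β : ℕ → Type u} (f : α → ∀ j, β j)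
    (hf : Function.Injective f) (hb : ∀ j, Cardinal.mk (β j) ≤ Cardinal.continuum) :
    Cardinal.mk α ≤ Cardinal.continuum := by
  have hPi : Cardinal.mk (∀ j, β j) ≤ Cardinal.continuum := by
    rw [Cardinal.mk_pi]
    calc Cardinal.prod (fun j => Cardinal.mk (β j))
        ≤ Cardinal.prod (fun _ : ℕ => Cardinal.continuum) :=
          Cardinal.prod_le_prod _ _ hb
      _ = Cardinal.lift.{0} Cardinal.continuum ^ Cardinal.lift.{u} (Cardinal.mk ℕ) :=
          Cardinal.prod_const ℕ Cardinal.continuum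
      _ = Cardinal.continuum ^ (Cardinal.aleph0 : Cardinal.{u}) := by
          rw [Cardinal.lift_continuum, Cardinal.mk_nat, Cardinal.lift_aleph0]
      _ ≤ Cardinal.continuum := pow_aleph0_le_continuum le_rfl
  have h1 : Cardinal.lift.{u} (Cardinal.mk α) ≤ Cardinal.lift.{w} (Cardinal.mk (∀ j, β j)) :=
    Cardinal.lift_mk_le'.2 ⟨⟨f, hf⟩⟩
  have h3 : Cardinal.lift.{u} (Cardinal.mk α) ≤ Cardinal.lift.{u} Cardinal.continuum := by
    calc Cardinal.lift.{u} (Cardinal.mk α)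
        ≤ Cardinal.lift.{w} (Cardinal.mk (∀ j, β j)) := h1
      _ ≤ Cardinal.lift.{w} Cardinal.continuum := Cardinal.lift_le.2 hPi
      _ = Cardinal.continuum := Cardinal.lift_continuum
      _ = Cardinal.lift.{u} Cardinal.continuum := Cardinal.lift_continuum.symm
  exact Cardinal.lift_le.1 h3

end BFTAux

open BFTAux in
/-- Let `X` be a compact space, `(M, d)` a metric space and `G` a countable subset of `C(X, M)`
such that the closure of `G` in `M^X` is compact.  If the closure of `G` in `M^X` has
cardinality at least `2^𝔠`, then `G` contains a sequence whose closure in `M^X` is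
homeomorphic to `βω`. -/
theorem large_closure_contains_betaOmega_sequence
    {X M : Type*} [TopologicalSpace X] [CompactSpace X] [MetricSpace M]
    (G : Set (X → M)) (hGcount : G.Countable) (hGcont : ∀ g ∈ G, Continuous g)
    (hGcomp : IsCompact (closure G))
    (hcard : 2 ^ Cardinal.continuum ≤ Cardinal.mk ↥(closure G)) :
    ∃ g : ℕ → X → M, (∀ n, g n ∈ G) ∧
      Nonempty (↥(closure (Set.range g)) ≃ₜ StoneCech ℕ) := by
  classical
  have hone_lt : (1 : Cardinal) < 2 ^ Cardinal.continuum :=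
    lt_of_le_of_lt (le_trans Cardinal.one_le_aleph0 Cardinal.aleph0_le_continuum)
      (Cardinal.cantor Cardinal.continuum)
  -- X is nonempty
  rcases isEmpty_or_nonempty X with hX | hX
  · exfalso
    have hsub : Subsingleton (X → M) := ⟨fun a b => funext fun x => (IsEmpty.false x).elim⟩
    have h1 : Cardinal.mk ↥(closure G) ≤ 1 :=
      Cardinal.le_one_iff_subsingleton.2 ⟨fun a b => Subtype.ext (hsub.allEq a.1 b.1)⟩
    exact absurd (le_trans hcard h1) (not_le.2 hone_lt)
  -- G is nonempty
  rcases eq_empty_or_nonempty G with hGe | hGne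
  · exfalso
    rw [hGe, closure_empty] at hcard
    rw [Cardinal.mk_emptyCollection] at hcard
    exact absurd hcard (not_le.2 (lt_of_lt_of_le (by norm_num : (0:Cardinal) < 1) hone_lt.le))
  obtain ⟨gs, hgs⟩ := hGcount.exists_eq_range hGne
  have hgsG : ∀ n, gs n ∈ G := fun n => by rw [hgs]; exact mem_range_self n
  have hgscont : ∀ n, Continuous (gs n) := fun n => hGcont _ (hgsG n)
  -- a countable set whose closure contains all values
  have hsepU : TopologicalSpace.IsSeparable (⋃ n, Set.range (gs n)) :=
    TopologicalSpace.IsSeparable.iUnion fun n => (isCompact_range (hgscont n)).isSeparable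
  obtain ⟨cD, hcDc, hcDsub⟩ := hsepU
  have hcDne : cD.Nonempty := by
    rcases eq_empty_or_nonempty cD with h | h
    · exfalso
      have hU : gs 0 (Classical.arbitrary X) ∈ ⋃ n, Set.range (gs n) :=
        mem_iUnion.2 ⟨0, mem_range_self _⟩
      have := hcDsub hU
      rw [h, closure_empty] at this
      exact notMem_empty _ this
    · exact h
  obtain ⟨ms, hms⟩ := hcDc.exists_eq_range hcDne
  -- values of members of the closure lie in the closure of the range of `ms`
  have hval : ∀ f ∈ closure G, ∀ x : X, f x ∈ closure (Set.range ms) := by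
    intro f hf x
    have h1 : f x ∈ closure ((fun u : X → M => u x) '' G) :=
      image_closure_subset_closure_image (continuous_apply x) (mem_image_of_mem _ hf)
    have h2 : (fun u : X → M => u x) '' G ⊆ closure (Set.range ms) := by
      rintro _ ⟨u, hu, rfl⟩
      rw [hgs] at hu
      obtain ⟨n, rfl⟩ := hu
      rw [← hms]
      exact hcDsub (mem_iUnion.2 ⟨n, mem_range_self x⟩)
    have h3 := closure_mono h2 h1
    rwa [closure_closure] at h3
  -- the distance families
  set v : ℕ → ℕ → X → ℝ := fun j nn x => dist (gs nn x) (ms j) with hvdef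
  have hvcont : ∀ j nn, Continuous (v j nn) := fun j nn => (hgscont nn).dist continuous_const
  have hvbd : ∀ (j : ℕ) (x : X), ∃ C, ∀ nn, |v j nn x| ≤ C := by
    intro j x
    have hcomp : IsCompact ((fun u : X → M => u x) '' closure G) :=
      hGcomp.image (continuous_apply x)
    obtain ⟨C, hC⟩ := hcomp.isBounded.subset_closedBall (ms j)
    refine ⟨C, fun nn => ?_⟩
    have hmem : gs nn x ∈ (fun u : X → M => u x) '' closure G :=
      mem_image_of_mem _ (subset_closure (hgsG nn))
    have := hC hmem
    rw [Metric.mem_closedBall] at this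
    rw [abs_of_nonneg dist_nonneg]
    exact this
  by_cases hex : ∃ j, ∃ r s : ℝ, r < s ∧ ∃ n : ℕ → ℕ, StrictMono n ∧
      ∀ I J : Set ℕ, Disjoint I J →
        ∃ x, (∀ k ∈ I, v j (n k) x ≤ r) ∧ (∀ k ∈ J, s ≤ v j (n k) x)
  · -- βℕ construction
    obtain ⟨j, r, s, hrs, nseq, hmonon, hind⟩ := hex
    refine ⟨fun k => gs (nseq k), fun k => hgsG (nseq k), ?_⟩
    set g : ℕ → X → M := fun k => gs (nseq k) with hgdef
    set Z : Set (X → M) := closure (Set.range g) with hZ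
    have hZsubG : Z ⊆ closure G := by
      apply closure_minimal ?_ isClosed_closure
      rintro _ ⟨k, rfl⟩
      exact subset_closure (hgsG (nseq k))
    have hZcomp : IsCompact Z := IsCompact.of_isClosed_subset hGcomp isClosed_closure hZsubG
    haveI : CompactSpace ↥Z := isCompact_iff_compactSpace.1 hZcomp
    set f0 : ℕ → ↥Z := fun k => ⟨g k, subset_closure (mem_range_self k)⟩ with hf0
    have hf0c : Continuous f0 := continuous_of_discreteTopology
    have hΦc : Continuous (stoneCechExtend hf0c) := continuous_stoneCechExtend hf0c
    have hΦunit : ∀ k, stoneCechExtend hf0c (stoneCechUnit k) = f0 k :=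
      fun k => congrFun (stoneCechExtend_extends hf0c) k
    have hsurj : Function.Surjective (stoneCechExtend hf0c) := by
      have hclosed : IsClosed (Set.range (stoneCechExtend hf0c)) := (isCompact_range hΦc).isClosed
      intro z
      have h1 : z ∈ closure (Set.range f0) := by
        rw [closure_subtype]
        have himg : Subtype.val '' (Set.range f0) = Set.range g := by
          rw [← range_comp]
          rfl
        rw [himg]
        exact z.2
      have h2 : Set.range f0 ⊆ Set.range (stoneCechExtend hf0c) := by
        rintro _ ⟨k, rfl⟩
        exact ⟨stoneCechUnit k, hΦunit k⟩
      have h3 := closure_mono h2 h1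
      rwa [hclosed.closure_eq] at h3
    have hinj : Function.Injective (stoneCechExtend hf0c) := by
      intro a b hab
      by_contra hne
      obtain ⟨U, V, hU, hV, haU, hbV, hUV⟩ := t2_separation hne
      have hAB : Disjoint (stoneCechUnit ⁻¹' U : Set ℕ) (stoneCechUnit ⁻¹' V) := by
        rw [Set.disjoint_left]
        intro k hkA hkB
        exact (Set.disjoint_left.1 hUV hkA) hkB
      obtain ⟨x, hx1, hx2⟩ := hind _ _ hAB
      set ψ : ↥Z → ℝ := fun z => dist (z.1 x) (ms j) with hψ
      have hψc : Continuous ψ :=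
        ((continuous_apply x).comp continuous_subtype_val).dist continuous_const
      have hmem : ∀ (W : Set (StoneCech ℕ)), IsOpen W → ∀ c, c ∈ W →
          c ∈ closure (stoneCechUnit '' (stoneCechUnit ⁻¹' W)) := by
        intro W hW c hc
        have hsubW := denseRange_stoneCechUnit.open_subset_closure_inter hW
        have h1 := hsubW hc
        apply closure_mono ?_ h1
        rintro w ⟨hwW, k, rfl⟩
        exact mem_image_of_mem _ hwW
      have hbound : ∀ (c : StoneCech ℕ) (A : Set ℕ), c ∈ closure (stoneCechUnit '' A) →
          ψ (stoneCechExtend hf0c c) ∈ closure (ψ '' (stoneCechExtend hf0c '' (stoneCechUnit '' A))) := by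
        intro c A hc
        have h1 : stoneCechExtend hf0c c ∈ closure (stoneCechExtend hf0c '' (stoneCechUnit '' A)) :=
          image_closure_subset_closure_image hΦc (mem_image_of_mem _ hc)
        exact image_closure_subset_closure_image hψc (mem_image_of_mem ψ h1)
      have hψa : ψ (stoneCechExtend hf0c a) ≤ r := by
        have h2 := hbound a _ (hmem U hU a haU)
        have h3 : ψ '' (stoneCechExtend hf0c '' (stoneCechUnit '' (stoneCechUnit ⁻¹' U))) ⊆ Iic r := by
          rintro _ ⟨_, ⟨_, ⟨k, hk, rfl⟩, rfl⟩, rfl⟩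
          rw [hΦunit k]
          exact hx1 k hk
        exact closure_minimal h3 isClosed_Iic h2
      have hψb : s ≤ ψ (stoneCechExtend hf0c b) := by
        have h2 := hbound b _ (hmem V hV b hbV)
        have h3 : ψ '' (stoneCechExtend hf0c '' (stoneCechUnit '' (stoneCechUnit ⁻¹' V))) ⊆ Ici s := by
          rintro _ ⟨_, ⟨_, ⟨k, hk, rfl⟩, rfl⟩, rfl⟩
          rw [hΦunit k]
          exact hx2 k hk
        exact closure_minimal h3 isClosed_Ici h2
      rw [hab] at hψa
      linarith
    exact ⟨(Continuous.homeoOfEquivCompactToT2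
      (f := Equiv.ofBijective (stoneCechExtend hf0c) ⟨hinj, hsurj⟩) hΦc).symm⟩
  · -- cardinality contradiction
    exfalso
    have hsmall : ∀ j, Cardinal.mk ↥(closure (Set.range (v j))) ≤ Cardinal.continuum := by
      intro j
      rcases lemmaR (v j) (hvcont j) (fun x => hvbd j x) with h | h
      · exact h
      · obtain ⟨r, s, hrs, n, hmono, hind⟩ := h
        exact absurd ⟨j, r, s, hrs, n, hmono, hind⟩ hex
    have hmap : ∀ f ∈ closure G, ∀ j : ℕ,
        (fun x => dist (f x) (ms j)) ∈ closure (Set.range (v j)) := by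
      intro f hf j
      have hcont : Continuous (fun u : X → M => fun x => dist (u x) (ms j)) :=
        continuous_pi fun x => (continuous_apply x).dist continuous_const
      have h1 := image_closure_subset_closure_image hcont (mem_image_of_mem _ hf)
      have h2 : (fun u : X → M => fun x => dist (u x) (ms j)) '' G = Set.range (v j) := by
        rw [hgs, ← range_comp]
        rfl
      rwa [h2] at h1
    have hEmbInj : Function.Injective (fun f : ↥(closure G) =>
        (fun j => ⟨fun x => dist (f.1 x) (ms j), hmap f.1 f.2 j⟩ :
          ∀ j : ℕ, ↥(closure (Set.range (v j))))) := by
      intro f f' hff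
      apply Subtype.ext
      funext x
      have hdists : ∀ j : ℕ, dist (f.1 x) (ms j) = dist (f'.1 x) (ms j) := by
        intro j
        exact congrFun (congrArg Subtype.val (congrFun hff j)) x
      have hfx' := hval f'.1 f'.2 x
      have hdist0 : ∀ ε : ℝ, 0 < ε → dist (f.1 x) (f'.1 x) < ε := by
        intro ε hε
        obtain ⟨z, hz, hzd⟩ := Metric.mem_closure_iff.1 hfx' (ε/2) (by linarith)
        obtain ⟨j, rfl⟩ := hz
        calc dist (f.1 x) (f'.1 x) ≤ dist (f.1 x) (ms j) + dist (ms j) (f'.1 x) :=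
              dist_triangle _ _ _
          _ = dist (f'.1 x) (ms j) + dist (ms j) (f'.1 x) := by rw [hdists j]
          _ = 2 * dist (f'.1 x) (ms j) := by rw [dist_comm (ms j)]; ring
          _ < ε := by linarith
      by_contra hne
      have hpos : 0 < dist (f.1 x) (f'.1 x) := dist_pos.2 hne
      exact absurd (hdist0 _ hpos) (lt_irrefl _)
    have hle : Cardinal.mk ↥(closure G) ≤ Cardinal.continuum :=
      card_le_of_pi _ hEmbInj hsmall
    have := le_trans hcard hle
    exact absurd this (not_le.2 (Cardinal.cantor Cardinal.continuum))
end
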